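/- arXiv:2308.15760 — 7 statements merged into one kernel-verified Lean document; each statement's English description precedes it below -/
import Mathlib

section
/- Let h : ℝⁿ → ℝ ∪ {±∞} be positively homogeneous of degree γ > 0, i.e., h(λw) = λ^γ h(w) for all λ > 0 and all w in the domain of h. Then for any w in the domain of h and any limiting subgradient z ∈ ∂h(w), one has ⟨z, w⟩ = γ h(w). -/
open Filter Topology
open scoped RealInnerProductSpace

noncomputable section

abbrev En (n : ℕ) := EuclideanSpace ℝ (Fin n)

/-- Regular (Fréchet) subgradients of an extended-real-valued function. -/
def RegSubgrad {n : ℕ} (f : En n → EReal) (x : En n) : Set (En n) :=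
  {v | ∀ ε : ℝ, 0 < ε → ∃ δ : ℝ, 0 < δ ∧ ∀ u : En n, ‖u - x‖ < δ → u ≠ x →
      f x + (((inner ℝ v (u - x) : ℝ) - ε * ‖u - x‖ : ℝ) : EReal) ≤ f u}

/-- Limiting (Mordukhovich) subgradients. -/
def LimSubgrad {n : ℕ} (f : En n → EReal) (x : En n) : Set (En n) :=
  {v | ∃ xk vk : ℕ → En n,
      Tendsto xk atTop (nhds x) ∧ Tendsto vk atTop (nhds v) ∧
      Tendsto (fun k => f (xk k)) atTop (nhds (f x)) ∧
      ∀ k, vk k ∈ RegSubgrad f (xk k)}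

/-- Euler identity for regular subgradients of positively homogeneous functions. -/
lemma reg_euler {n : ℕ} (h : En n → EReal) (γ : ℝ) (hγ : 0 < γ)
    (hhomog : ∀ l : ℝ, 0 < l → ∀ w : En n, h w ≠ ⊤ → h (l • w) = ((l ^ γ : ℝ) : EReal) * h w)
    (x : En n) (hx_top : h x ≠ ⊤) (hx_bot : h x ≠ ⊥)
    (v : En n) (hv : v ∈ RegSubgrad h x) :
    (inner ℝ v x : ℝ) = γ * (h x).toReal := by
  obtain ⟨a, hxa⟩ : ∃ a : ℝ, h x = (a : EReal) :=
    ⟨(h x).toReal, (EReal.coe_toReal hx_top hx_bot).symm⟩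
  have hta : (h x).toReal = a := by rw [hxa, EReal.toReal_coe]
  rw [hta]
  by_cases hx0 : x = 0
  · subst hx0
    have h2 := hhomog 2 (by norm_num) 0 hx_top
    rw [smul_zero, hxa] at h2
    have h2' : a = 2 ^ γ * a := by exact_mod_cast h2
    have h1 : (1:ℝ) < 2 ^ γ := by
      rw [Real.one_lt_rpow_iff_of_pos (by norm_num)]
      exact Or.inl ⟨one_lt_two, hγ⟩
    have ha0 : a = 0 := by nlinarith
    simp [ha0]
  · have hxnorm : (0:ℝ) < ‖x‖ := norm_pos_iff.mpr hx0
    have key : ∀ s : ℝ, |s| = 1 → ∀ ε : ℝ, 0 < ε →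
        s * (inner ℝ v x : ℝ) ≤ s * (γ * a) + ε := by
      intro s hs ε hε
      have hs0 : s ≠ 0 := by
        intro h0; rw [h0] at hs; simp at hs
      set ε' := ε / (2 * ‖x‖) with hε'
      have hε'pos : 0 < ε' := by positivity
      obtain ⟨δ, hδ, hineq⟩ := hv ε' hε'pos
      -- derivative of t ↦ (1 + s t)^γ at 0 is s γ
      have hder : HasDerivAt (fun t : ℝ => (1 + s * t) ^ γ) (s * γ) 0 := by
        have h1 : HasDerivAt (fun t : ℝ => 1 + s * t) s 0 := by
          simpa using ((hasDerivAt_id (0:ℝ)).const_mul s).const_add 1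
        have := h1.rpow_const (p := γ) (by norm_num)
        simpa [Real.one_rpow] using this
      have hslope := hasDerivAt_iff_tendsto_slope.mp hder
      have hslope' : Tendsto (slope (fun t : ℝ => (1 + s * t) ^ γ) 0) (𝓝[>] 0)
          (𝓝 (s * γ)) :=
        hslope.mono_left (nhdsWithin_mono 0 fun t ht => ne_of_gt ht)
      have hr : (0:ℝ) < ε / (2 * (|a| + 1)) := by positivity
      have hev1 : ∀ᶠ t in 𝓝[>] (0:ℝ),
          |slope (fun t : ℝ => (1 + s * t) ^ γ) 0 t - s * γ| < ε / (2 * (|a| + 1)) := by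
        have := hslope'.eventually (Metric.ball_mem_nhds (s * γ) hr)
        simpa [Real.dist_eq] using this
      have hm : (0:ℝ) < min 1 (δ / ‖x‖) := lt_min one_pos (by positivity)
      have hev2 : ∀ᶠ t in 𝓝[>] (0:ℝ), t < min 1 (δ / ‖x‖) :=
        Filter.Eventually.filter_mono nhdsWithin_le_nhds (eventually_lt_nhds hm)
      have hev3 : ∀ᶠ t in 𝓝[>] (0:ℝ), 0 < t := eventually_mem_nhdsWithin
      obtain ⟨t, h1t, h2t, h3t⟩ := (hev1.and (hev2.and hev3)).exists
      have ht1 : t < 1 := lt_of_lt_of_le h2t (min_le_left _ _)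
      have htδ : t * ‖x‖ < δ := by
        have := lt_of_lt_of_le h2t (min_le_right _ _)
        calc t * ‖x‖ < (δ / ‖x‖) * ‖x‖ := by
              exact mul_lt_mul_of_pos_right this hxnorm
          _ = δ := by field_simp
      -- positivity of 1 + s t
      have hst : |s * t| = t := by rw [abs_mul, hs, one_mul, abs_of_pos h3t]
      have hpos : 0 < 1 + s * t := by
        have : -(1:ℝ) < s * t := by
          have := neg_abs_le (s * t); rw [hst] at this; linarith
        linarith
      set u := (1 + s * t) • x with hu
      have hux : u - x = (s * t) • x := by
        rw [hu]; rw [show (1 + s * t) • x - x = ((1 + s * t) - 1) • x by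
          rw [sub_smul, one_smul]]; ring_nf
      have hnorm : ‖u - x‖ = t * ‖x‖ := by
        rw [hux, norm_smul, Real.norm_eq_abs, hst]
      have hune : u ≠ x := by
        intro he
        have : (s * t) • x = 0 := by rw [← hux, he, sub_self]
        rcases smul_eq_zero.mp this with h' | h'
        · exact (mul_ne_zero hs0 (ne_of_gt h3t)) h'
        · exact hx0 h'
      have hhu : h u = (((1 + s * t) ^ γ * a : ℝ) : EReal) := by
        rw [hu, hhomog (1 + s * t) hpos x hx_top, hxa, EReal.coe_mul]
      have hIE := hineq u (by rw [hnorm]; exact htδ) hune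
      rw [hxa, hhu, hnorm, hux, real_inner_smul_right] at hIE
      have hre : a + (s * t * (inner ℝ v x : ℝ) - ε' * (t * ‖x‖)) ≤ (1 + s * t) ^ γ * a := by
        have : ((a + (s * t * (inner ℝ v x : ℝ) - ε' * (t * ‖x‖)) : ℝ) : EReal)
            ≤ (((1 + s * t) ^ γ * a : ℝ) : EReal) := by
          rw [EReal.coe_add]; exact hIE
        exact_mod_cast this
      -- slope value
      have hsl : slope (fun t : ℝ => (1 + s * t) ^ γ) 0 t = ((1 + s * t) ^ γ - 1) / t := by
        simp [slope_def_field]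
      have hslb : |((1 + s * t) ^ γ - 1) / t - s * γ| < ε / (2 * (|a| + 1)) := by
        rw [← hsl]; exact h1t
      -- divide the inequality by t
      have hxne : ‖x‖ ≠ 0 := ne_of_gt hxnorm
      have htne : t ≠ 0 := ne_of_gt h3t
      have hBt : t * (((1 + s * t) ^ γ - 1) / t * a) = ((1 + s * t) ^ γ - 1) * a := by
        field_simp
      have hεt : ε' * (t * ‖x‖) = t * (ε / 2) := by
        rw [hε']; field_simp
      have hdiv : s * (inner ℝ v x : ℝ) ≤ ((1 + s * t) ^ γ - 1) / t * a + ε / 2 := by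
        have h5 : t * (s * (inner ℝ v x : ℝ)) ≤ t * (((1 + s * t) ^ γ - 1) / t * a + ε / 2) := by
          rw [mul_add, hBt, ← hεt]; linarith [hre]
        exact le_of_mul_le_mul_left h5 h3t
      have hbound : ((1 + s * t) ^ γ - 1) / t * a ≤ s * (γ * a) + ε / 2 := by
        have h1 : ((1 + s * t) ^ γ - 1) / t * a - s * γ * a
            = (((1 + s * t) ^ γ - 1) / t - s * γ) * a := by ring
        have h2 : (((1 + s * t) ^ γ - 1) / t - s * γ) * a ≤ |(((1 + s * t) ^ γ - 1) / t - s * γ) * a| :=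
          le_abs_self _
        rw [abs_mul] at h2
        have h3 : |((1 + s * t) ^ γ - 1) / t - s * γ| * |a| ≤ (ε / (2 * (|a| + 1))) * |a| :=
          mul_le_mul_of_nonneg_right (le_of_lt hslb) (abs_nonneg a)
        have h4 : (ε / (2 * (|a| + 1))) * |a| ≤ ε / 2 := by
          rw [div_mul_eq_mul_div, div_le_div_iff₀ (by positivity) (by norm_num)]
          nlinarith [abs_nonneg a]
        nlinarith
      linarith [hdiv, hbound]
    have k1 : (inner ℝ v x : ℝ) ≤ γ * a := by
      apply le_of_forall_pos_le_add
      intro ε hε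
      have := key 1 (by norm_num) ε hε
      linarith
    have k2 : γ * a ≤ (inner ℝ v x : ℝ) := by
      have : -(inner ℝ v x : ℝ) ≤ -(γ * a) := by
        apply le_of_forall_pos_le_add
        intro ε hε
        have := key (-1) (by norm_num) ε hε
        linarith
      linarith
    linarith

theorem statement_0 {n : ℕ} (h : En n → EReal) (γ : ℝ) (hγ : 0 < γ)
    (hhomog : ∀ l : ℝ, 0 < l → ∀ w : En n, h w ≠ ⊤ → h (l • w) = ((l ^ γ : ℝ) : EReal) * h w)
    (w : En n) (hw_top : h w ≠ ⊤) (hw_bot : h w ≠ ⊥)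
    (z : En n) (hz : z ∈ LimSubgrad h w) :
    (inner ℝ z w : ℝ) = γ * (h w).toReal := by
  obtain ⟨xk, vk, hxk, hvk, hfk, hreg⟩ := hz
  have hlt : ∀ᶠ k in atTop, h (xk k) < ⊤ :=
    hfk.eventually_lt_const (lt_top_iff_ne_top.mpr hw_top)
  have hgt : ∀ᶠ k in atTop, ⊥ < h (xk k) :=
    hfk.eventually_const_lt (bot_lt_iff_ne_bot.mpr hw_bot)
  have heq : ∀ᶠ k in atTop, (inner ℝ (vk k) (xk k) : ℝ) = γ * (h (xk k)).toReal := by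
    filter_upwards [hlt, hgt] with k h1 h2
    exact reg_euler h γ hγ hhomog (xk k) (lt_top_iff_ne_top.mp h1)
      (bot_lt_iff_ne_bot.mp h2) (vk k) (hreg k)
  have t1 : Tendsto (fun k => (inner ℝ (vk k) (xk k) : ℝ)) atTop (𝓝 (inner ℝ z w : ℝ)) :=
    hvk.inner hxk
  have t2 : Tendsto (fun k => γ * (h (xk k)).toReal) atTop (𝓝 (γ * (h w).toReal)) :=
    ((EReal.tendsto_toReal hw_top hw_bot).comp hfk).const_mul γ
  exact tendsto_nhds_unique (t1.congr' heq) t2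
end
end

section
/- Let f : ℝⁿ → ℝ ∪ {+∞} be finite and locally lower semicontinuous at x̄, and let θ, θ̃ ∈ [0,1) with θ̃ < θ. Define g(x) := (max{f(x) − f(x̄),0})^{1−θ} and g̃(x) := (max{f(x) − f(x̄),0})^{1−θ̃}. If ∂^> g(x̄) ≠ ∅, then 0 ∈ ∂^> g̃(x̄). -/
open Filter Topology
open scoped ENNReal NNReal Pointwise

noncomputable section

/-- Outer limiting subgradients: limits of limiting subgradients taken at nearby
points where the function value is strictly larger and converges to `f x`. -/
def OuterSubgrad {n : ℕ} (f : En n → EReal) (x : En n) : Set (En n) :=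
  {v | ∃ xk vk : ℕ → En n,
      Tendsto xk atTop (nhds x) ∧ Tendsto vk atTop (nhds v) ∧
      Tendsto (fun k => f (xk k)) atTop (nhds (f x)) ∧
      (∀ k, f x < f (xk k)) ∧ ∀ k, vk k ∈ LimSubgrad f (xk k)}

/-- Distance from the origin to a set (`∞` for the empty set). -/
def DistZero {n : ℕ} (S : Set (En n)) : ℝ≥0∞ := EMetric.infEdist 0 S

/-- `f` is locally lower semicontinuous at `x`. -/
def LocallyLsc {n : ℕ} (f : En n → EReal) (x : En n) : Prop :=
  ∃ ε : ℝ, 0 < ε ∧ ∀ α : ℝ, (α : EReal) ≤ f x + (ε : ℝ) →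
    IsClosed {y : En n | ‖y - x‖ ≤ ε ∧ f y ≤ (α : ℝ)}

/-- Regular subgradients are limiting subgradients. -/
lemma regSubgrad_subset_limSubgrad {n : ℕ} (f : En n → EReal) (x : En n) {v : En n}
    (hv : v ∈ RegSubgrad f x) : v ∈ LimSubgrad f x :=
  ⟨fun _ => x, fun _ => v, tendsto_const_nhds, tendsto_const_nhds, tendsto_const_nhds,
    fun _ => hv⟩

private lemma psi_mono {p : ℝ} (hp : 0 ≤ p) :
    Monotone (fun t : ℝ => (max t 0) ^ p) :=
  fun _ _ hst => Real.rpow_le_rpow (le_max_right _ _) (max_le_max hst le_rfl) hp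

/-- Chain rule for regular subgradients under composition with `t ↦ t^p`, `p > 1`. -/
private lemma chain_rule {n : ℕ} (g gt : En n → EReal) (p : ℝ) (hp : 1 < p)
    (hrel : ∀ u, (g u = ⊤ ∧ gt u = ⊤) ∨
      ∃ b : ℝ, 0 ≤ b ∧ g u = (b : EReal) ∧ gt u = ((b ^ p : ℝ) : EReal))
    (x : En n) (a : ℝ) (ha : 0 < a) (hga : g x = (a : EReal))
    {v : En n} (hv : v ∈ RegSubgrad g x) :
    ((p * a ^ (p - 1)) • v) ∈ RegSubgrad gt x := by
  set L : ℝ := p * a ^ (p - 1) with hLdef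
  have hL : 0 < L := mul_pos (by linarith) (Real.rpow_pos_of_pos ha _)
  set ψ : ℝ → ℝ := fun t => (max t 0) ^ p with hψdef
  have hψx : gt x = ((a ^ p : ℝ) : EReal) := by
    rcases hrel x with ⟨h1, _⟩ | ⟨b, hb0, hb, hbt⟩
    · rw [hga] at h1; exact absurd h1 (EReal.coe_ne_top a)
    · rw [hga] at hb
      have : b = a := by exact_mod_cast hb.symm
      rw [hbt, this]
  have hψa : ψ a = a ^ p := by simp [hψdef, max_eq_left ha.le]
  have hder : HasDerivAt ψ L a := by
    have h := Real.hasDerivAt_rpow_const (p := p) (x := a) (Or.inl (ne_of_gt ha))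
    refine h.congr_of_eventuallyEq ?_
    filter_upwards [lt_mem_nhds ha] with t ht
    simp [hψdef, max_eq_left ht.le]
  intro ε hε
  set ε₁ : ℝ := ε / (2 * (‖v‖ + 1)) with hε₁def
  have hnv : (0:ℝ) < ‖v‖ + 1 := by positivity
  have hε₁ : 0 < ε₁ := by positivity
  set ε₂ : ℝ := min 1 (ε / (2 * (L + 1))) with hε₂def
  have hε₂ : 0 < ε₂ := lt_min one_pos (by positivity)
  have hε₂1 : ε₂ ≤ 1 := min_le_left _ _
  have hε₂L : L * ε₂ ≤ ε / 2 := by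
    have h1 : ε₂ ≤ ε / (2 * (L + 1)) := min_le_right _ _
    have h2 : ε₂ * (2 * (L + 1)) ≤ ε := (le_div_iff₀ (by positivity)).mp h1
    nlinarith [hε₂.le]
  -- the little-o estimate for ψ at a
  have hlittle : ∀ᶠ t in 𝓝 a, ‖ψ t - ψ a - (t - a) • L‖ ≤ ε₁ * ‖t - a‖ :=
    (hasDerivAt_iff_isLittleO.mp hder).def hε₁
  obtain ⟨η, hη, hηprop⟩ := Metric.eventually_nhds_iff.mp hlittle
  obtain ⟨δ₁, hδ₁, hδprop⟩ := hv ε₂ hε₂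
  refine ⟨min δ₁ (η / (‖v‖ + ε₂ + 1)), lt_min hδ₁ (by positivity), fun u hu hune => ?_⟩
  have hu1 : ‖u - x‖ < δ₁ := lt_of_lt_of_le hu (min_le_left _ _)
  have hu2 : ‖u - x‖ < η / (‖v‖ + ε₂ + 1) := lt_of_lt_of_le hu (min_le_right _ _)
  rcases hrel u with ⟨_, h2⟩ | ⟨b, hb0, hb, hbt⟩
  · rw [h2]; exact le_top
  · have hkey := hδprop u hu1 hune
    rw [hga, hb] at hkey
    set s : ℝ := (inner ℝ v (u - x) : ℝ) - ε₂ * ‖u - x‖ with hsdef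
    have hs : a + s ≤ b := by
      rw [← EReal.coe_add] at hkey
      exact_mod_cast hkey
    have hinner := abs_le.mp (abs_real_inner_le_norm v (u - x))
    have hnn : (0:ℝ) ≤ ‖u - x‖ := norm_nonneg _
    have hsabs : |s| ≤ (‖v‖ + ε₂) * ‖u - x‖ := by
      rw [abs_le]; constructor <;> [skip; skip] <;> nlinarith
    have hsmall : |s| < η := by
      have h1 : (‖v‖ + ε₂) * ‖u - x‖ < (‖v‖ + ε₂ + 1) * (η / (‖v‖ + ε₂ + 1)) := by
        apply lt_of_le_of_lt (b := (‖v‖ + ε₂ + 1) * ‖u - x‖)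
        · nlinarith
        · exact (mul_lt_mul_iff_right₀ (by positivity)).mpr hu2
      rw [mul_div_cancel₀ _ (by positivity : (‖v‖ + ε₂ + 1) ≠ 0)] at h1
      linarith
    have hψs := hηprop (y := a + s) (by rw [Real.dist_eq]; simpa using hsmall)
    simp only [add_sub_cancel_left, smul_eq_mul, Real.norm_eq_abs] at hψs
    have hψs' := abs_le.mp hψs
    have hmono : ψ (a + s) ≤ ψ b := psi_mono (by linarith) hs
    have hψb : ψ b = b ^ p := by simp [hψdef, max_eq_left hb0]
    rw [hψx, hbt, ← EReal.coe_add, EReal.coe_le_coe_iff]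
    have hinnw : (inner ℝ ((L : ℝ) • v) (u - x) : ℝ) = L * (inner ℝ v (u - x) : ℝ) :=
      real_inner_smul_left v (u - x) L
    rw [hinnw]
    -- remaining real inequality
    have hs1 : |s| ≤ (‖v‖ + 1) * ‖u - x‖ := by nlinarith [hsabs, hε₂1, hnn]
    have hb1 : ε₁ * |s| ≤ ε₁ * ((‖v‖ + 1) * ‖u - x‖) :=
      mul_le_mul_of_nonneg_left hs1 hε₁.le
    have hb2 : ε₁ * ((‖v‖ + 1) * ‖u - x‖) = ε / 2 * ‖u - x‖ := by
      rw [hε₁def]; field_simp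
    have hb3 : L * ε₂ * ‖u - x‖ ≤ ε / 2 * ‖u - x‖ :=
      mul_le_mul_of_nonneg_right hε₂L hnn
    have hsL : s * L = L * (inner ℝ v (u - x) : ℝ) - L * ε₂ * ‖u - x‖ := by
      rw [hsdef]; ring
    linarith [hψs'.1, hψs'.2, hmono, hψa, hψb]

/-- if `∂^> g(xb) ≠ ∅` for exponent `θ`, then `0 ∈ ∂^> g̃(xb)`
for every smaller exponent `θ̃ < θ`. -/
theorem statement_3 {n : ℕ} (f : En n → EReal) (hbot : ∀ x, f x ≠ ⊥)
    (xb : En n) (c : ℝ) (hfc : f xb = (c : ℝ)) (hloc : LocallyLsc f xb)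
    (θ θt : ℝ) (hθt0 : 0 ≤ θt) (hθt : θt < θ) (hθ1 : θ < 1)
    (g gt : En n → EReal)
    (hg : g = fun x => if f x = ⊤ then (⊤ : EReal)
      else (((max (f x - (c : ℝ)).toReal 0 : ℝ) ^ (1 - θ) : ℝ) : EReal))
    (hgt : gt = fun x => if f x = ⊤ then (⊤ : EReal)
      else (((max (f x - (c : ℝ)).toReal 0 : ℝ) ^ (1 - θt) : ℝ) : EReal))
    (hne : (OuterSubgrad g xb).Nonempty) :
    (0 : En n) ∈ OuterSubgrad gt xb := by
  have h1θ : (0:ℝ) < 1 - θ := by linarith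
  have h1θt : (0:ℝ) < 1 - θt := by linarith
  set p : ℝ := (1 - θt) / (1 - θ) with hpdef
  have hp : 1 < p := by rw [hpdef, lt_div_iff₀ h1θ]; linarith
  have hmulp : (1 - θ) * p = 1 - θt := by rw [hpdef]; field_simp [h1θ.ne']
  -- relation between g and gt
  have hrel : ∀ u, (g u = ⊤ ∧ gt u = ⊤) ∨
      ∃ b : ℝ, 0 ≤ b ∧ g u = (b : EReal) ∧ gt u = ((b ^ p : ℝ) : EReal) := by
    intro u
    by_cases hu : f u = ⊤
    · left; constructor <;> simp [hg, hgt, hu]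
    · right
      set m : ℝ := max (f u - (c : ℝ)).toReal 0 with hmdef
      have hm0 : 0 ≤ m := le_max_right _ _
      refine ⟨m ^ (1 - θ), Real.rpow_nonneg hm0 _, by simp [hg, hu, hmdef], ?_⟩
      have hpow : (m ^ (1 - θ)) ^ p = m ^ (1 - θt) := by
        rw [← Real.rpow_mul hm0, hmulp]
      rw [hpow]; simp [hgt, hu, hmdef]
  have hftop : f xb ≠ ⊤ := by rw [hfc]; exact EReal.coe_ne_top c
  have hsub : f xb - (c : ℝ) = ((0 : ℝ) : EReal) := by
    rw [hfc, ← EReal.coe_sub]; norm_num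
  have hgxb : g xb = ((0 : ℝ) : EReal) := by
    simp [hg, hftop, hsub, Real.zero_rpow (by linarith : (1:ℝ) - θ ≠ 0)]
  have hgtxb : gt xb = ((0 : ℝ) : EReal) := by
    simp [hgt, hftop, hsub, Real.zero_rpow (by linarith : (1:ℝ) - θt ≠ 0)]
  obtain ⟨v, xk, vk, hxk, hvk, hgk, hltk, hlim⟩ := hne
  rw [hgxb] at hgk hltk
  -- extraction claim
  have claim : ∀ ε : ℝ, 0 < ε → ∃ (y w : En n) (b : ℝ),
      ‖y - xb‖ < ε ∧ 0 < b ∧ b < ε ∧ g y = (b : EReal) ∧ ‖w‖ ≤ ‖v‖ + 1 ∧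
      w ∈ RegSubgrad g y := by
    intro ε hε
    have h1 : ∀ᶠ k in atTop, ‖xk k - xb‖ < ε / 2 := by
      have := Metric.tendsto_nhds.mp hxk (ε / 2) (by linarith)
      simpa [dist_eq_norm] using this
    have h2 : ∀ᶠ k in atTop, g (xk k) < ((ε / 2 : ℝ) : EReal) :=
      hgk.eventually_lt_const (by exact_mod_cast half_pos hε)
    have h3 : ∀ᶠ k in atTop, dist (vk k) v < 1 / 2 :=
      Metric.tendsto_nhds.mp hvk _ (by norm_num)
    obtain ⟨k, hk1, hk2, hk3⟩ := (h1.and (h2.and h3)).exists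
    have hnetop : g (xk k) ≠ ⊤ := ne_top_of_lt hk2
    have hnebot : g (xk k) ≠ ⊥ := fun h => not_lt_bot (h ▸ hltk k)
    set b₀ : ℝ := (g (xk k)).toReal with hb₀def
    have hb₀ : (b₀ : EReal) = g (xk k) := EReal.coe_toReal hnetop hnebot
    have hb₀pos : 0 < b₀ := by
      have := hltk k; rw [← hb₀] at this; exact_mod_cast this
    have hb₀lt : b₀ < ε / 2 := by
      have := hk2; rw [← hb₀] at this; exact_mod_cast this
    obtain ⟨yj, wj, hyj, hwj, hgyj, hregj⟩ := hlim k
    rw [← hb₀] at hgyj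
    have e1 : ∀ᶠ j in atTop, ‖yj j - xk k‖ < ε / 2 := by
      have := Metric.tendsto_nhds.mp hyj (ε / 2) (by linarith)
      simpa [dist_eq_norm] using this
    have e2 : ∀ᶠ j in atTop, g (yj j) < ((ε : ℝ) : EReal) :=
      hgyj.eventually_lt_const (by exact_mod_cast (by linarith : b₀ < ε))
    have e3 : ∀ᶠ j in atTop, ((0 : ℝ) : EReal) < g (yj j) :=
      hgyj.eventually_const_lt (by exact_mod_cast hb₀pos)
    have e4 : ∀ᶠ j in atTop, dist (wj j) (vk k) < 1 / 2 :=
      Metric.tendsto_nhds.mp hwj _ (by norm_num)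
    obtain ⟨j, hj1, hj2, hj3, hj4⟩ := (e1.and (e2.and (e3.and e4))).exists
    have hnetop' : g (yj j) ≠ ⊤ := ne_top_of_lt hj2
    have hnebot' : g (yj j) ≠ ⊥ := fun h => not_lt_bot (h ▸ hj3)
    set b : ℝ := (g (yj j)).toReal with hbdef
    have hb : (b : EReal) = g (yj j) := EReal.coe_toReal hnetop' hnebot'
    have hbpos : 0 < b := by rw [← hb] at hj3; exact_mod_cast hj3
    have hblt : b < ε := by rw [← hb] at hj2; exact_mod_cast hj2
    refine ⟨yj j, wj j, b, ?_, hbpos, hblt, hb.symm, ?_, hregj j⟩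
    · calc ‖yj j - xb‖ ≤ ‖yj j - xk k‖ + ‖xk k - xb‖ := by
            simpa [dist_eq_norm] using dist_triangle (yj j) (xk k) xb
        _ < ε := by linarith
    · have t1 : ‖wj j‖ ≤ ‖v‖ + ‖wj j - v‖ := by
        simpa using norm_add_le v (wj j - v)
      have t2 : ‖wj j - v‖ ≤ ‖wj j - vk k‖ + ‖vk k - v‖ := by
        simpa [dist_eq_norm] using dist_triangle (wj j) (vk k) v
      rw [dist_eq_norm] at hj4 hk3
      linarith
  choose Y W B hY hBpos hBlt hgY hWnorm hreg using
    fun k : ℕ => claim (1 / ((k : ℝ) + 1)) (by positivity)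
  have hB0 : Tendsto B atTop (𝓝 0) :=
    squeeze_zero (fun k => (hBpos k).le) (fun k => (hBlt k).le)
      tendsto_one_div_add_atTop_nhds_zero_nat
  have hgtY : ∀ k, gt (Y k) = ((B k ^ p : ℝ) : EReal) := by
    intro k
    rcases hrel (Y k) with ⟨h1, _⟩ | ⟨b, hb0, hb, hbt⟩
    · rw [hgY k] at h1; exact absurd h1 (EReal.coe_ne_top _)
    · rw [hgY k] at hb
      have : b = B k := by exact_mod_cast hb.symm
      rw [hbt, this]
  refine ⟨Y, fun k => (p * B k ^ (p - 1)) • W k, ?_, ?_, ?_, ?_, ?_⟩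
  · rw [tendsto_iff_dist_tendsto_zero]
    exact squeeze_zero (fun k => dist_nonneg)
      (fun k => by rw [dist_eq_norm]; exact (hY k).le)
      tendsto_one_div_add_atTop_nhds_zero_nat
  · apply squeeze_zero_norm (a := fun k => p * B k ^ (p - 1) * (‖v‖ + 1))
    · intro k
      rw [norm_smul, Real.norm_eq_abs]
      have hc : 0 < p * B k ^ (p - 1) :=
        mul_pos (by linarith) (Real.rpow_pos_of_pos (hBpos k) _)
      rw [abs_of_pos hc]
      exact mul_le_mul_of_nonneg_left (hWnorm k) hc.le
    · have c1 : ContinuousAt (fun b : ℝ => b ^ (p - 1)) 0 :=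
        Real.continuousAt_rpow_const 0 (p - 1) (Or.inr (by linarith))
      have c2 : ContinuousAt (fun b : ℝ => p * b ^ (p - 1) * (‖v‖ + 1)) 0 :=
        (continuousAt_const.mul c1).mul continuousAt_const
      have := c2.tendsto.comp hB0
      rw [Real.zero_rpow (by linarith : p - 1 ≠ 0), mul_zero, zero_mul] at this; exact this
  · rw [hgtxb]
    simp only [hgtY]
    rw [EReal.tendsto_coe]
    have c1 : ContinuousAt (fun b : ℝ => b ^ p) 0 :=
      Real.continuousAt_rpow_const 0 p (Or.inr (by linarith))
    have := c1.tendsto.comp hB0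
    rw [Real.zero_rpow (by linarith : p ≠ 0)] at this; exact this
  · intro k
    rw [hgtxb, hgtY k]
    exact_mod_cast Real.rpow_pos_of_pos (hBpos k) p
  · intro k
    exact regSubgrad_subset_limSubgrad gt (Y k)
      (chain_rule g gt p hp hrel (Y k) (B k) (hBpos k) (hgY k) (hreg k))
end
end

section
/- Let f : ℝⁿ → ℝ ∪ {+∞} be finite and locally lower semicontinuous at x̄, let θ ∈ [0,1), and set g(x) := (max{f(x) − f(x̄), 0})^{1−θ}. Then the Kurdyka–Łojasiewicz modulus KŁ(f, x̄, θ) := liminf over x → x̄ with f(x) → f(x̄) and f(x) > f(x̄) of (1−θ) d(0, ∂f(x)) / (f(x) − f(x̄))^θ equals d(0, ∂^> g(x̄)). -/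
open Filter Topology
open scoped ENNReal NNReal Pointwise

noncomputable section

lemma bernoulli_tangent {p s s₀ : ℝ} (hp : 1 ≤ p) (hs : 0 ≤ s) (hs₀ : 0 < s₀) :
    s₀ ^ p + p * s₀ ^ (p - 1) * (s - s₀) ≤ s ^ p := by
  have hx : -1 ≤ s / s₀ - 1 := by
    have : 0 ≤ s / s₀ := div_nonneg hs hs₀.le
    linarith
  have hb := one_add_mul_self_le_rpow_one_add hx hp
  have h1 : (1 + (s / s₀ - 1)) = s / s₀ := by ring
  rw [h1, Real.div_rpow hs hs₀.le] at hb
  have hs₀p : 0 < s₀ ^ p := Real.rpow_pos_of_pos hs₀ _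
  have h2 : s₀ ^ (p - 1) = s₀ ^ p / s₀ := by
    rw [Real.rpow_sub hs₀, Real.rpow_one]
  rw [h2]
  have := mul_le_mul_of_nonneg_left hb hs₀p.le
  have h3 : s₀ ^ p * (s ^ p / s₀ ^ p) = s ^ p := by field_simp
  rw [h3] at this
  calc s₀ ^ p + p * (s₀ ^ p / s₀) * (s - s₀)
      = s₀ ^ p * (1 + p * (s / s₀ - 1)) := by field_simp
    _ ≤ s ^ p := this

lemma phi_hasDerivAt {c θ t₀ : ℝ} (ht₀ : 0 < t₀) :
    HasDerivAt (fun t : ℝ => max (t - c) 0 ^ (1 - θ)) ((1 - θ) * t₀ ^ (-θ)) (c + t₀) := by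
  have h1 : HasDerivAt (fun t : ℝ => t - c) 1 (c + t₀) := (hasDerivAt_id _).sub_const c
  have h2 : HasDerivAt (fun s : ℝ => s ^ (1 - θ)) ((1 - θ) * t₀ ^ (1 - θ - 1)) t₀ :=
    Real.hasDerivAt_rpow_const (Or.inl ht₀.ne')
  have heq : ((c + t₀) - c) = t₀ := by ring
  have h2' : HasDerivAt (fun s : ℝ => s ^ (1 - θ)) ((1 - θ) * t₀ ^ (1 - θ - 1)) ((c + t₀) - c) := by
    rw [heq]; exact h2
  have h3 := h2'.comp (c + t₀) h1
  have h4 : HasDerivAt (fun t : ℝ => (t - c) ^ (1 - θ)) ((1 - θ) * t₀ ^ (-θ)) (c + t₀) := by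
    have : (1 - θ) * t₀ ^ (1 - θ - 1) * 1 = (1 - θ) * t₀ ^ (-θ) := by ring_nf
    rwa [this] at h3
  apply h4.congr_of_eventuallyEq
  have hopen : {t : ℝ | c < t} ∈ nhds (c + t₀) :=
    (isOpen_lt continuous_const continuous_id).mem_nhds (by simp [ht₀])
  filter_upwards [hopen] with t ht
  rw [max_eq_left (sub_nonneg.mpr (le_of_lt ht))]

lemma littleO_bound {φ : ℝ → ℝ} {r a : ℝ} (hd : HasDerivAt φ r a) {η : ℝ} (hη : 0 < η) :
    ∃ δ > 0, ∀ h : ℝ, |h| < δ → φ a + r * h - η * |h| ≤ φ (a + h) := by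
  rw [hasDerivAt_iff_isLittleO, Asymptotics.isLittleO_iff] at hd
  have h2 := hd (c := η) hη
  rw [Metric.eventually_nhds_iff] at h2
  obtain ⟨δ, hδ, hball⟩ := h2
  refine ⟨δ, hδ, fun h hh => ?_⟩
  have := hball (y := a + h) (by simpa [Real.dist_eq] using hh)
  simp only [add_sub_cancel_left] at this
  rw [Real.norm_eq_abs, Real.norm_eq_abs, smul_eq_mul] at this
  have h3 := abs_le.mp this
  linarith [h3.1]

lemma g_eq_of_finite {n : ℕ} {f g : En n → EReal} {c θ : ℝ}
    (hg : g = fun x => if f x = ⊤ then (⊤ : EReal)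
      else (((max (f x - (c : ℝ)).toReal 0 : ℝ) ^ (1 - θ) : ℝ) : EReal))
    {x : En n} {b : ℝ} (hfx : f x = (b : ℝ)) :
    g x = ((max (b - c) 0 ^ (1 - θ) : ℝ) : EReal) := by
  rw [hg]
  simp only [hfx, EReal.coe_ne_top, if_false]
  norm_cast

lemma g_top_of_top {n : ℕ} {f g : En n → EReal} {c θ : ℝ}
    (hg : g = fun x => if f x = ⊤ then (⊤ : EReal)
      else (((max (f x - (c : ℝ)).toReal 0 : ℝ) ^ (1 - θ) : ℝ) : EReal))
    {x : En n} (hfx : f x = ⊤) : g x = ⊤ := by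
  rw [hg]; simp [hfx]

lemma regA1 {n : ℕ} {f g : En n → EReal} {c θ : ℝ} (hθ1 : θ < 1)
    (hbot : ∀ x, f x ≠ ⊥)
    (hg : g = fun x => if f x = ⊤ then (⊤ : EReal)
      else (((max (f x - (c : ℝ)).toReal 0 : ℝ) ^ (1 - θ) : ℝ) : EReal))
    {x : En n} {t₀ : ℝ} (ht₀ : 0 < t₀) (hfx : f x = ((c + t₀ : ℝ) : EReal))
    {v : En n} (hv : v ∈ RegSubgrad f x) :
    ((1 - θ) * t₀ ^ (-θ)) • v ∈ RegSubgrad g x := by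
  set r : ℝ := (1 - θ) * t₀ ^ (-θ) with hrdef
  have hr : 0 < r := mul_pos (by linarith) (Real.rpow_pos_of_pos ht₀ _)
  set φ : ℝ → ℝ := fun t => max (t - c) 0 ^ (1 - θ) with hφdef
  intro ε' hε'
  have hnv : (0:ℝ) < ‖v‖ + 1 := by positivity
  set η : ℝ := ε' / (2 * (‖v‖ + 1)) with hηdef
  have hη : 0 < η := by positivity
  obtain ⟨δ₁, hδ₁, hlo⟩ := littleO_bound (phi_hasDerivAt (c := c) (θ := θ) ht₀) hη
  set ε : ℝ := min 1 (ε' / (2 * r)) with hεdef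
  have hε : 0 < ε := lt_min one_pos (by positivity)
  obtain ⟨δ₂, hδ₂, hsub⟩ := hv ε hε
  refine ⟨min δ₂ (δ₁ / (‖v‖ + 1)), lt_min hδ₂ (by positivity), fun u hu hne => ?_⟩
  have hu2 : ‖u - x‖ < δ₂ := lt_of_lt_of_le hu (min_le_left _ _)
  have hu1 : ‖u - x‖ < δ₁ / (‖v‖ + 1) := lt_of_lt_of_le hu (min_le_right _ _)
  by_cases htop : f u = ⊤
  · rw [g_top_of_top hg htop]; exact le_top
  · set b : ℝ := (f u).toReal with hbdef
    have hfu : f u = (b : ℝ) := (EReal.coe_toReal htop (hbot u)).symm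
    have hineq := hsub u hu2 hne
    rw [hfx, hfu] at hineq
    set h : ℝ := (inner ℝ v (u - x) : ℝ) - ε * ‖u - x‖ with hhdef
    have hreal : c + t₀ + h ≤ b := by
      rw [← EReal.coe_add] at hineq
      exact_mod_cast hineq
    have hinner : |(inner ℝ v (u - x) : ℝ)| ≤ ‖v‖ * ‖u - x‖ := abs_real_inner_le_norm v (u - x)
    have hn0 : (0:ℝ) ≤ ‖u - x‖ := norm_nonneg _
    have hε1 : ε ≤ 1 := min_le_left _ _
    have habs : |h| ≤ (‖v‖ + 1) * ‖u - x‖ := by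
      rw [abs_le]
      constructor
      · have := neg_abs_le (inner ℝ v (u - x) : ℝ)
        nlinarith [abs_nonneg (inner ℝ v (u - x) : ℝ)]
      · have := le_abs_self (inner ℝ v (u - x) : ℝ)
        nlinarith
    have hhδ : |h| < δ₁ := by
      calc |h| ≤ (‖v‖ + 1) * ‖u - x‖ := habs
        _ < (‖v‖ + 1) * (δ₁ / (‖v‖ + 1)) := by
            exact mul_lt_mul_of_pos_left hu1 hnv
        _ = δ₁ := by field_simp
    have hkey := hlo h hhδ
    have hmono : φ (c + t₀ + h) ≤ φ b := by
      apply Real.rpow_le_rpow (le_max_right _ _) _ (by linarith)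
      exact max_le_max (by linarith) le_rfl
    have hgx : g x = ((φ (c + t₀) : ℝ) : EReal) := by
      rw [g_eq_of_finite hg hfx]
    have hgu : g u = ((φ b : ℝ) : EReal) := g_eq_of_finite hg hfu
    rw [hgx, hgu, ← EReal.coe_add, EReal.coe_le_coe_iff]
    have hsmul : (inner ℝ (r • v) (u - x) : ℝ) = r * (inner ℝ v (u - x) : ℝ) :=
      real_inner_smul_left v (u - x) r
    rw [hsmul]
    have hstep : φ (c + t₀) + r * h - η * |h| ≤ φ b := by
      have : c + t₀ + h = (c + t₀) + h := by ring
      calc φ (c + t₀) + r * h - η * |h| ≤ φ ((c + t₀) + h) := hkey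
        _ ≤ φ b := by rw [← this] at *; exact hmono
    -- now arithmetic
    have hrε : r * ε ≤ ε' / 2 := by
      have : ε ≤ ε' / (2 * r) := min_le_right _ _
      calc r * ε ≤ r * (ε' / (2 * r)) := mul_le_mul_of_nonneg_left this hr.le
        _ = ε' / 2 := by field_simp
    have hηabs : η * |h| ≤ (ε' / 2) * ‖u - x‖ := by
      calc η * |h| ≤ η * ((‖v‖ + 1) * ‖u - x‖) := mul_le_mul_of_nonneg_left habs hη.le
        _ = (ε' / 2) * ‖u - x‖ := by rw [hηdef]; field_simp
    have hexp : r * h = r * (inner ℝ v (u - x) : ℝ) - r * ε * ‖u - x‖ := by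
      rw [hhdef]; ring
    nlinarith [mul_le_mul_of_nonneg_right hrε hn0]

lemma regA2 {n : ℕ} {f g : En n → EReal} {c θ : ℝ} (hθ0 : 0 ≤ θ) (hθ1 : θ < 1)
    (hbot : ∀ x, f x ≠ ⊥)
    (hg : g = fun x => if f x = ⊤ then (⊤ : EReal)
      else (((max (f x - (c : ℝ)).toReal 0 : ℝ) ^ (1 - θ) : ℝ) : EReal))
    {x : En n} {t₀ : ℝ} (ht₀ : 0 < t₀) (hfx : f x = ((c + t₀ : ℝ) : EReal))
    {w : En n} (hw : w ∈ RegSubgrad g x) :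
    ((1 - θ) * t₀ ^ (-θ))⁻¹ • w ∈ RegSubgrad f x := by
  have hθ' : (0:ℝ) < 1 - θ := by linarith
  set r : ℝ := (1 - θ) * t₀ ^ (-θ) with hrdef
  have hr : 0 < r := mul_pos hθ' (Real.rpow_pos_of_pos ht₀ _)
  set p : ℝ := (1 - θ)⁻¹ with hpdef
  have hp1 : 1 ≤ p := one_le_inv_iff₀.mpr ⟨hθ', by linarith⟩
  set s₀ : ℝ := t₀ ^ (1 - θ) with hs₀def
  have hs₀ : 0 < s₀ := Real.rpow_pos_of_pos ht₀ _
  have e1 : s₀ ^ (p - 1) = t₀ ^ θ := by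
    rw [hs₀def, ← Real.rpow_mul ht₀.le]
    congr 1
    rw [hpdef]
    field_simp
    ring
  have e2 : r⁻¹ = p * s₀ ^ (p - 1) := by
    rw [e1, hrdef, mul_inv, Real.rpow_neg ht₀.le, inv_inv, hpdef]
  have hs₀p : s₀ ^ p = t₀ := by
    rw [hs₀def, ← Real.rpow_mul ht₀.le, mul_inv_cancel₀ hθ'.ne', Real.rpow_one]
  intro ε' hε'
  set ε : ℝ := r * ε' with hεdef
  have hε : 0 < ε := mul_pos hr hε'
  obtain ⟨δ₂, hδ₂, hsub⟩ := hw ε hε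
  set δ₀ : ℝ := s₀ / (‖w‖ + ε + 1) with hδ₀def
  have hwε : (0:ℝ) < ‖w‖ + ε + 1 := by positivity
  have hδ₀ : 0 < δ₀ := by positivity
  refine ⟨min δ₂ δ₀, lt_min hδ₂ hδ₀, fun u hu hne => ?_⟩
  have hu2 : ‖u - x‖ < δ₂ := lt_of_lt_of_le hu (min_le_left _ _)
  have hu0 : ‖u - x‖ < δ₀ := lt_of_lt_of_le hu (min_le_right _ _)
  by_cases htop : f u = ⊤
  · rw [htop]; exact le_top
  · set b : ℝ := (f u).toReal with hbdef
    have hfu : f u = (b : ℝ) := (EReal.coe_toReal htop (hbot u)).symm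
    have hineq := hsub u hu2 hne
    have hgx : g x = ((s₀ : ℝ) : EReal) := by
      rw [g_eq_of_finite hg hfx]
      congr 1
      rw [hs₀def]
      congr 1
      rw [max_eq_left (by linarith)]
      ring
    set s : ℝ := max (b - c) 0 ^ (1 - θ) with hsdef
    have hgu : g u = ((s : ℝ) : EReal) := g_eq_of_finite hg hfu
    set h' : ℝ := (inner ℝ w (u - x) : ℝ) - ε * ‖u - x‖ with hh'def
    have hreal : s₀ + h' ≤ s := by
      rw [hgx, hgu, ← EReal.coe_add, EReal.coe_le_coe_iff] at hineq
      exact hineq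
    have hinner : |(inner ℝ w (u - x) : ℝ)| ≤ ‖w‖ * ‖u - x‖ := abs_real_inner_le_norm w (u - x)
    have hn0 : (0:ℝ) ≤ ‖u - x‖ := norm_nonneg _
    have habs : |h'| ≤ (‖w‖ + ε) * ‖u - x‖ := by
      rw [abs_le]
      constructor
      · have := neg_abs_le (inner ℝ w (u - x) : ℝ)
        nlinarith [abs_nonneg (inner ℝ w (u - x) : ℝ), hε.le]
      · have := le_abs_self (inner ℝ w (u - x) : ℝ)
        nlinarith [hε.le]
    have hsmall : |h'| < s₀ := by
      calc |h'| ≤ (‖w‖ + ε) * ‖u - x‖ := habs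
        _ ≤ (‖w‖ + ε) * δ₀ := by
            apply mul_le_mul_of_nonneg_left hu0.le
            positivity
        _ < (‖w‖ + ε + 1) * δ₀ := by nlinarith
        _ = s₀ := by rw [hδ₀def]; field_simp
    have hspos : 0 < s := by
      have : 0 < s₀ + h' := by
        have := neg_abs_le h'
        linarith
      linarith
    have hmaxpos : 0 < max (b - c) 0 := by
      by_contra hcon
      push_neg at hcon
      have : max (b - c) 0 = 0 := le_antisymm hcon (le_max_right _ _)
      rw [hsdef, this, Real.zero_rpow hθ'.ne'] at hspos
      exact lt_irrefl _ hspos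
    have hbc : 0 < b - c := by
      rcases max_cases (b - c) (0:ℝ) with ⟨heq, _⟩ | ⟨heq, hlt⟩
      · rwa [heq] at hmaxpos
      · rw [heq] at hmaxpos; exact absurd hmaxpos (lt_irrefl _)
    have hmax : max (b - c) 0 = b - c := max_eq_left hbc.le
    have hsp : s ^ p = b - c := by
      rw [hsdef, hmax, ← Real.rpow_mul hbc.le, mul_inv_cancel₀ hθ'.ne', Real.rpow_one]
    have hbern := bernoulli_tangent hp1 (Real.rpow_nonneg (le_max_right _ _) _ : (0:ℝ) ≤ s) hs₀
    have hbern2 : t₀ + r⁻¹ * (s - s₀) ≤ b - c := by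
      rw [hsp, hs₀p, ← e2] at hbern
      linarith [hbern]
    have hmono2 : r⁻¹ * h' ≤ r⁻¹ * (s - s₀) :=
      mul_le_mul_of_nonneg_left (by linarith) (inv_nonneg.mpr hr.le)
    rw [hfx, hfu, ← EReal.coe_add, EReal.coe_le_coe_iff]
    rw [real_inner_smul_left]
    have hexp : r⁻¹ * h' = r⁻¹ * (inner ℝ w (u - x) : ℝ) - ε' * ‖u - x‖ := by
      rw [hh'def, mul_sub, hεdef]
      congr 1
      field_simp
    linarith

lemma limB1 {n : ℕ} {f g : En n → EReal} {c θ : ℝ} (hθ1 : θ < 1)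
    (hbot : ∀ x, f x ≠ ⊥)
    (hg : g = fun x => if f x = ⊤ then (⊤ : EReal)
      else (((max (f x - (c : ℝ)).toReal 0 : ℝ) ^ (1 - θ) : ℝ) : EReal))
    {x : En n} {t₀ : ℝ} (ht₀ : 0 < t₀) (hfx : f x = ((c + t₀ : ℝ) : EReal))
    {v : En n} (hv : v ∈ LimSubgrad f x) :
    ((1 - θ) * t₀ ^ (-θ)) • v ∈ LimSubgrad g x := by
  have hθ' : (0:ℝ) < 1 - θ := by linarith
  obtain ⟨xk, vk, hxk, hvk, hfk, hreg⟩ := hv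
  -- eventually f (xk k) ∈ Ioo c ⊤
  have hmem : ∀ᶠ k in atTop, f (xk k) ∈ Set.Ioo ((c : ℝ) : EReal) (⊤ : EReal) := by
    apply hfk
    apply isOpen_Ioo.mem_nhds
    rw [hfx]
    constructor
    · exact_mod_cast (by linarith : c < c + t₀)
    · exact EReal.coe_lt_top _
  obtain ⟨N, hN⟩ := eventually_atTop.mp hmem
  set b : ℕ → ℝ := fun k => (f (xk (k + N))).toReal with hbdef
  have hfin : ∀ k, f (xk (k + N)) = ((b k : ℝ) : EReal) := by
    intro k
    have := hN (k + N) (Nat.le_add_left N k)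
    exact (EReal.coe_toReal (ne_of_lt this.2) (hbot _)).symm
  have hbgt : ∀ k, c < b k := by
    intro k
    have h1 := (hN (k + N) (Nat.le_add_left N k)).1
    rw [hfin k] at h1
    exact_mod_cast h1
  -- b k → c + t₀
  have hbten : Tendsto b atTop (nhds (c + t₀)) := by
    have h1 : Tendsto (fun k => f (xk (k + N))) atTop (nhds (f x)) :=
      hfk.comp (tendsto_add_atTop_nat N)
    have h2 := (EReal.tendsto_toReal (a := f x)
      (by rw [hfx]; exact EReal.coe_ne_top _) (hbot x)).comp h1
    rw [hfx] at h2
    rw [EReal.toReal_coe] at h2; exact h2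
  set τ : ℕ → ℝ := fun k => (1 - θ) * (b k - c) ^ (-θ) with hτdef
  have hτten : Tendsto τ atTop (nhds ((1 - θ) * t₀ ^ (-θ))) := by
    apply Tendsto.const_mul
    have hsub : Tendsto (fun k => b k - c) atTop (nhds t₀) := by
      have := hbten.sub_const c
      simpa using this
    exact hsub.rpow_const (Or.inl ht₀.ne')
  refine ⟨fun k => xk (k + N), fun k => τ k • vk (k + N), hxk.comp (tendsto_add_atTop_nat N),
    hτten.smul (hvk.comp (tendsto_add_atTop_nat N)), ?_, ?_⟩
  · -- g values converge
    have hgeq : ∀ k, g (xk (k + N)) = (((b k - c) ^ (1 - θ) : ℝ) : EReal) := by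
      intro k
      rw [g_eq_of_finite hg (hfin k), max_eq_left (by linarith [hbgt k])]
    have hgx : g x = ((t₀ ^ (1 - θ) : ℝ) : EReal) := by
      rw [g_eq_of_finite hg hfx]
      congr 1
      rw [show c + t₀ - c = t₀ by ring, max_eq_left ht₀.le]
    rw [hgx]
    apply Tendsto.congr (fun k => (hgeq k).symm)
    rw [EReal.tendsto_coe]
    have hsub : Tendsto (fun k => b k - c) atTop (nhds t₀) := by
      have := hbten.sub_const c
      simpa using this
    exact hsub.rpow_const (Or.inl ht₀.ne')
  · intro k
    exact regA1 hθ1 hbot hg (t₀ := b k - c) (by linarith [hbgt k])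
      (x := xk (k + N)) (by rw [hfin k]; norm_num) (hreg (k + N))

lemma limB2 {n : ℕ} {f g : En n → EReal} {c θ : ℝ} (hθ0 : 0 ≤ θ) (hθ1 : θ < 1)
    (hbot : ∀ x, f x ≠ ⊥)
    (hg : g = fun x => if f x = ⊤ then (⊤ : EReal)
      else (((max (f x - (c : ℝ)).toReal 0 : ℝ) ^ (1 - θ) : ℝ) : EReal))
    {x : En n} {t₀ : ℝ} (ht₀ : 0 < t₀) (hfx : f x = ((c + t₀ : ℝ) : EReal))
    {w : En n} (hw : w ∈ LimSubgrad g x) :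
    ((1 - θ) * t₀ ^ (-θ))⁻¹ • w ∈ LimSubgrad f x := by
  have hθ' : (0:ℝ) < 1 - θ := by linarith
  set p : ℝ := (1 - θ)⁻¹ with hpdef
  have hp0 : 0 < p := by positivity
  have hs₀ : (0:ℝ) < t₀ ^ (1 - θ) := Real.rpow_pos_of_pos ht₀ _
  have hgx : g x = ((t₀ ^ (1 - θ) : ℝ) : EReal) := by
    rw [g_eq_of_finite hg hfx]
    congr 1
    rw [show c + t₀ - c = t₀ by ring, max_eq_left ht₀.le]
  obtain ⟨xk, wk, hxk, hwk, hgk, hreg⟩ := hw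
  have hmem : ∀ᶠ k in atTop, g (xk k) ∈ Set.Ioo ((0 : ℝ) : EReal) (⊤ : EReal) := by
    apply hgk
    apply isOpen_Ioo.mem_nhds
    rw [hgx]
    exact ⟨by exact_mod_cast hs₀, EReal.coe_lt_top _⟩
  obtain ⟨N, hN⟩ := eventually_atTop.mp hmem
  -- at these points f is finite and > c
  have hfin : ∀ k, ∃ t > 0, f (xk (k + N)) = ((c + t : ℝ) : EReal) := by
    intro k
    have hk := hN (k + N) (Nat.le_add_left N k)
    have hftop : f (xk (k + N)) ≠ ⊤ := by
      intro htop
      have : g (xk (k + N)) = ⊤ := by rw [hg]; simp [htop]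
      rw [this] at hk
      exact (lt_irrefl _ hk.2)
    set bk := (f (xk (k + N))).toReal with hbk
    have hfb : f (xk (k + N)) = ((bk : ℝ) : EReal) := (EReal.coe_toReal hftop (hbot _)).symm
    have hgb := g_eq_of_finite hg hfb
    have hpos : (0:ℝ) < max (bk - c) 0 ^ (1 - θ) := by
      have := hk.1
      rw [hgb] at this
      exact_mod_cast this
    have hmaxpos : 0 < max (bk - c) 0 := by
      by_contra hcon
      push_neg at hcon
      have h0 : max (bk - c) 0 = 0 := le_antisymm hcon (le_max_right _ _)
      rw [h0, Real.zero_rpow hθ'.ne'] at hpos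
      exact lt_irrefl _ hpos
    have hbc : 0 < bk - c := by
      rcases max_cases (bk - c) (0:ℝ) with ⟨heq, _⟩ | ⟨heq, _⟩
      · rwa [heq] at hmaxpos
      · rw [heq] at hmaxpos; exact absurd hmaxpos (lt_irrefl _)
    exact ⟨bk - c, hbc, by rw [hfb]; norm_num⟩
  choose t ht hft using hfin
  -- t k → t₀
  have hgt : ∀ k, g (xk (k + N)) = (((t k) ^ (1 - θ) : ℝ) : EReal) := by
    intro k
    rw [g_eq_of_finite hg (hft k)]
    congr 1
    rw [show c + t k - c = t k by ring, max_eq_left (ht k).le]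
  have hsten : Tendsto (fun k => (t k) ^ (1 - θ)) atTop (nhds (t₀ ^ (1 - θ))) := by
    have h1 : Tendsto (fun k => g (xk (k + N))) atTop (nhds (g x)) :=
      hgk.comp (tendsto_add_atTop_nat N)
    rw [hgx] at h1
    have h2 : Tendsto (fun k => (((t k) ^ (1 - θ) : ℝ) : EReal)) atTop
        (nhds (((t₀ ^ (1 - θ) : ℝ) : EReal))) := Tendsto.congr (fun k => hgt k) h1
    exact EReal.tendsto_coe.mp h2
  have htten : Tendsto t atTop (nhds t₀) := by
    have h3 := hsten.rpow_const (p := p) (Or.inl hs₀.ne')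
    have h4 : (t₀ ^ (1 - θ)) ^ p = t₀ := by
      rw [← Real.rpow_mul ht₀.le, mul_inv_cancel₀ hθ'.ne', Real.rpow_one]
    rw [h4] at h3
    apply h3.congr
    intro k
    rw [← Real.rpow_mul (ht k).le, mul_inv_cancel₀ hθ'.ne', Real.rpow_one]
  set τ : ℕ → ℝ := fun k => ((1 - θ) * (t k) ^ (-θ))⁻¹ with hτdef
  have hτten : Tendsto τ atTop (nhds (((1 - θ) * t₀ ^ (-θ))⁻¹)) := by
    apply Tendsto.inv₀
    · exact (htten.rpow_const (Or.inl ht₀.ne')).const_mul _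
    · exact (mul_pos hθ' (Real.rpow_pos_of_pos ht₀ _)).ne'
  refine ⟨fun k => xk (k + N), fun k => τ k • wk (k + N), hxk.comp (tendsto_add_atTop_nat N),
    hτten.smul (hwk.comp (tendsto_add_atTop_nat N)), ?_, ?_⟩
  · rw [hfx]
    have : Tendsto (fun k => ((c + t k : ℝ) : EReal)) atTop (nhds ((c + t₀ : ℝ) : EReal)) := by
      rw [EReal.tendsto_coe]
      exact htten.const_add c
    exact Tendsto.congr (fun k => (hft k).symm) this
  · intro k
    exact regA2 hθ0 hθ1 hbot hg (ht k) (hft k) (hreg (k + N))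

lemma edist_smul_zero {n : ℕ} (r : ℝ) (hr : 0 ≤ r) (y : En n) :
    edist 0 (r • y) = ENNReal.ofReal r * edist 0 y := by
  have h1 : edist (0 : En n) (r • y) = edist (r • (0 : En n)) (r • y) := by rw [smul_zero]
  rw [h1, edist_smul₀, ENNReal.smul_def, smul_eq_mul]
  congr 1
  simp only [Real.nnnorm_of_nonneg hr, ENNReal.ofReal]
  congr 1
  exact (Real.toNNReal_of_nonneg hr).symm

lemma infEdist_smul_le {n : ℕ} (r : ℝ) (hr : 0 < r) (S : Set (En n)) :
    ENNReal.ofReal r * EMetric.infEdist 0 S ≤ EMetric.infEdist 0 ((fun y => r • y) '' S) := by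
  rw [EMetric.infEdist, Metric.le_infEDist]
  rintro z ⟨y, hy, rfl⟩
  calc ENNReal.ofReal r * EMetric.infEdist 0 S
      ≤ ENNReal.ofReal r * edist 0 y := by
        exact mul_le_mul_right (EMetric.infEdist_le_edist_of_mem hy) _
    _ = edist 0 (r • y) := (edist_smul_zero r hr.le y).symm

lemma infEdist_smul {n : ℕ} (r : ℝ) (hr : 0 < r) (S : Set (En n)) :
    EMetric.infEdist 0 ((fun y => r • y) '' S) = ENNReal.ofReal r * EMetric.infEdist 0 S := by
  refine le_antisymm ?_ (infEdist_smul_le r hr S)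
  have h2 := infEdist_smul_le r⁻¹ (inv_pos.mpr hr) ((fun y => r • y) '' S)
  have himg : (fun y => r⁻¹ • y) '' ((fun y => r • y) '' S) = S := by
    ext z
    simp only [Set.mem_image]
    constructor
    · rintro ⟨_, ⟨y, hy, rfl⟩, rfl⟩
      rwa [smul_smul, inv_mul_cancel₀ hr.ne', one_smul]
    · intro hz
      exact ⟨r • z, ⟨z, hz, rfl⟩, by rw [smul_smul, inv_mul_cancel₀ hr.ne', one_smul]⟩
  rw [himg] at h2
  have hmul : ENNReal.ofReal r * ENNReal.ofReal r⁻¹ = 1 := by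
    rw [← ENNReal.ofReal_mul hr.le, mul_inv_cancel₀ hr.ne', ENNReal.ofReal_one]
  calc EMetric.infEdist 0 ((fun y => r • y) '' S)
      = ENNReal.ofReal r * (ENNReal.ofReal r⁻¹ * EMetric.infEdist 0 ((fun y => r • y) '' S)) := by
        rw [← mul_assoc, hmul, one_mul]
    _ ≤ ENNReal.ofReal r * EMetric.infEdist 0 S := mul_le_mul_right h2 _
lemma g_facts {n : ℕ} {f g : En n → EReal} {c θ : ℝ} (hθ1 : θ < 1)
    (hbot : ∀ x, f x ≠ ⊥)
    (hg : g = fun x => if f x = ⊤ then (⊤ : EReal)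
      else (((max (f x - (c : ℝ)).toReal 0 : ℝ) ^ (1 - θ) : ℝ) : EReal))
    {y : En n} (h0 : ((0:ℝ):EReal) < g y) (h1 : g y < ((1:ℝ):EReal)) :
    ∃ t : ℝ, 0 < t ∧ f y = ((c + t : ℝ) : EReal) ∧
      g y = ((t ^ (1 - θ) : ℝ) : EReal) := by
  have hθ' : (0:ℝ) < 1 - θ := by linarith
  have hftop : f y ≠ ⊤ := by
    intro htop
    have : g y = ⊤ := by rw [hg]; simp [htop]
    rw [this] at h1
    exact absurd h1 (not_lt.mpr le_top)
  set b := (f y).toReal with hb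
  have hfb : f y = ((b : ℝ) : EReal) := (EReal.coe_toReal hftop (hbot _)).symm
  have hgb := g_eq_of_finite hg hfb
  have hpos : (0:ℝ) < max (b - c) 0 ^ (1 - θ) := by
    rw [hgb] at h0
    exact_mod_cast h0
  have hmaxpos : 0 < max (b - c) 0 := by
    by_contra hcon
    push_neg at hcon
    have h0' : max (b - c) 0 = 0 := le_antisymm hcon (le_max_right _ _)
    rw [h0', Real.zero_rpow hθ'.ne'] at hpos
    exact lt_irrefl _ hpos
  have hbc : 0 < b - c := by
    rcases max_cases (b - c) (0:ℝ) with ⟨heq, _⟩ | ⟨heq, _⟩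
    · rwa [heq] at hmaxpos
    · rw [heq] at hmaxpos; exact absurd hmaxpos (lt_irrefl _)
  refine ⟨b - c, hbc, by rw [hfb]; norm_num, ?_⟩
  rw [hgb, max_eq_left hbc.le]

lemma g_at_xb {n : ℕ} {f g : En n → EReal} {c θ : ℝ} (hθ1 : θ < 1)
    (hg : g = fun x => if f x = ⊤ then (⊤ : EReal)
      else (((max (f x - (c : ℝ)).toReal 0 : ℝ) ^ (1 - θ) : ℝ) : EReal))
    {xb : En n} (hfc : f xb = ((c : ℝ) : EReal)) : g xb = ((0:ℝ) : EReal) := by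
  rw [g_eq_of_finite hg hfc]
  norm_num
  exact Real.zero_rpow (by linarith)

lemma M1 {n : ℕ} {f g : En n → EReal} {c θ : ℝ} (hθ0 : 0 ≤ θ) (hθ1 : θ < 1)
    (hbot : ∀ x, f x ≠ ⊥)
    (hg : g = fun x => if f x = ⊤ then (⊤ : EReal)
      else (((max (f x - (c : ℝ)).toReal 0 : ℝ) ^ (1 - θ) : ℝ) : EReal))
    {xb : En n} (hfc : f xb = ((c : ℝ) : EReal)) :
    Filter.liminf (fun x => DistZero (LimSubgrad g x))
      ((nhds xb ⊓ Filter.comap f (nhds (f xb))) ⊓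
        Filter.principal {x : En n | (c : EReal) < f x})
      ≤ DistZero (OuterSubgrad g xb) := by
  have hθ' : (0:ℝ) < 1 - θ := by linarith
  set p : ℝ := (1 - θ)⁻¹ with hpdef
  have hp0 : 0 < p := by positivity
  set F := (nhds xb ⊓ Filter.comap f (nhds (f xb))) ⊓
    Filter.principal {x : En n | (c : EReal) < f x} with hF
  rw [DistZero, EMetric.infEdist, Metric.le_infEDist]
  intro v hv
  obtain ⟨xk, vk, hxk, hvk, hgk, hglt, hlim⟩ := hv
  have hgxb : g xb = ((0:ℝ) : EReal) := g_at_xb hθ1 hg hfc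
  have hev : ∀ᶠ k in atTop, g (xk k) ∈ Set.Iio ((1:ℝ) : EReal) := by
    apply hgk
    apply isOpen_Iio.mem_nhds
    rw [hgxb]
    exact Set.mem_Iio.mpr (by exact_mod_cast zero_lt_one)
  have hevent : ∀ᶠ k in atTop,
      f (xk k) = ((c + ((g (xk k)).toReal) ^ p : ℝ) : EReal) ∧ ((c:ℝ) : EReal) < f (xk k) := by
    filter_upwards [hev] with k hk
    have h0 : ((0:ℝ):EReal) < g (xk k) := by rw [← hgxb]; exact hglt k
    obtain ⟨t, ht, hft, hgt⟩ := g_facts hθ1 hbot hg h0 hk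
    have htr : (g (xk k)).toReal = t ^ (1 - θ) := by rw [hgt, EReal.toReal_coe]
    constructor
    · rw [htr, ← Real.rpow_mul ht.le, mul_inv_cancel₀ hθ'.ne', Real.rpow_one, hft]
    · rw [hft]
      exact_mod_cast (by linarith : c < c + t)
  have hften : Tendsto (fun k => f (xk k)) atTop (nhds (f xb)) := by
    rw [hfc]
    have hbase : Tendsto (fun k => ((c + ((g (xk k)).toReal) ^ p : ℝ) : EReal)) atTop
        (nhds ((c : ℝ) : EReal)) := by
      rw [EReal.tendsto_coe]
      have h1 : Tendsto (fun k => (g (xk k)).toReal) atTop (nhds 0) := by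
        have := (EReal.tendsto_toReal (a := g xb)
          (by rw [hgxb]; exact EReal.coe_ne_top _) (by rw [hgxb]; exact EReal.coe_ne_bot _)).comp hgk
        rw [hgxb] at this
        rw [EReal.toReal_coe] at this; exact this
      have h2 := h1.rpow_const (p := p) (Or.inr hp0.le)
      rw [Real.zero_rpow hp0.ne'] at h2
      simpa using h2.const_add c
    exact Tendsto.congr' (hevent.mono (fun k hk => hk.1.symm)) hbase
  have hxtendF : Tendsto xk atTop F := by
    rw [hF, tendsto_inf]
    constructor
    · rw [tendsto_inf]
      exact ⟨hxk, tendsto_comap_iff.mpr hften⟩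
    · rw [tendsto_principal]
      exact hevent.mono (fun k hk => hk.2)
  calc Filter.liminf (fun x => DistZero (LimSubgrad g x)) F
      ≤ Filter.liminf (fun x => DistZero (LimSubgrad g x)) (map xk atTop) :=
        liminf_le_liminf_of_le hxtendF Filter.isBounded_ge_of_bot Filter.isCobounded_ge_of_top
    _ = Filter.liminf (fun k => DistZero (LimSubgrad g (xk k))) atTop :=
        (Filter.liminf_comp _ _ _).symm
    _ ≤ Filter.liminf (fun k => edist 0 (vk k)) atTop := by
        exact liminf_le_liminf
          (Filter.Eventually.of_forall (fun k => EMetric.infEdist_le_edist_of_mem (hlim k)))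
          Filter.isBounded_ge_of_bot Filter.isCobounded_ge_of_top
    _ = edist 0 v := (tendsto_const_nhds.edist hvk).liminf_eq

lemma M2 {n : ℕ} {f g : En n → EReal} {c θ : ℝ} (hθ0 : 0 ≤ θ) (hθ1 : θ < 1)
    (hbot : ∀ x, f x ≠ ⊥)
    (hg : g = fun x => if f x = ⊤ then (⊤ : EReal)
      else (((max (f x - (c : ℝ)).toReal 0 : ℝ) ^ (1 - θ) : ℝ) : EReal))
    {xb : En n} (hfc : f xb = ((c : ℝ) : EReal)) :
    DistZero (OuterSubgrad g xb) ≤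
      Filter.liminf (fun x => DistZero (LimSubgrad g x))
        ((nhds xb ⊓ Filter.comap f (nhds (f xb))) ⊓
          Filter.principal {x : En n | (c : EReal) < f x}) := by
  have hθ' : (0:ℝ) < 1 - θ := by linarith
  set F := (nhds xb ⊓ Filter.comap f (nhds (f xb))) ⊓
    Filter.principal {x : En n | (c : EReal) < f x} with hF
  set L := Filter.liminf (fun x => DistZero (LimSubgrad g x)) F with hL
  rcases eq_top_or_lt_top L with htop | hLlt
  · rw [htop]; exact le_top
  have hgxb : g xb = ((0:ℝ) : EReal) := g_at_xb hθ1 hg hfc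
  -- for each m, find a good point
  have hexists : ∀ m : ℕ, ∃ x : En n, ‖x - xb‖ < 1 / (m + 1) ∧
      f x ∈ Set.Ioo ((c : ℝ) : EReal) (((c + 1 / (m + 1) : ℝ)) : EReal) ∧
      DistZero (LimSubgrad g x) < L + ENNReal.ofReal (1 / (m + 1)) := by
    intro m
    have hm : (0:ℝ) < 1 / (m + 1) := by positivity
    have hfreq : ∃ᶠ x in F, DistZero (LimSubgrad g x) < L + ENNReal.ofReal (1 / (m + 1)) := by
      apply frequently_lt_of_liminf_lt Filter.isCobounded_ge_of_top
      exact ENNReal.lt_add_right hLlt.ne (ENNReal.ofReal_pos.mpr hm).ne'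
    have h1 : {x : En n | ‖x - xb‖ < 1 / (m + 1)} ∈ F := by
      rw [hF]
      apply Filter.mem_inf_of_left
      apply Filter.mem_inf_of_left
      apply Filter.mem_of_superset (Metric.ball_mem_nhds _ hm)
      intro y hy
      rwa [Metric.mem_ball, dist_eq_norm] at hy
    have h2 : {x : En n | f x < (((c + 1 / (m + 1) : ℝ)) : EReal)} ∈ F := by
      rw [hF]
      apply Filter.mem_inf_of_left
      apply Filter.mem_inf_of_right
      have : Set.Iio (((c + 1 / (m + 1) : ℝ)) : EReal) ∈ nhds (f xb) := by
        apply isOpen_Iio.mem_nhds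
        rw [hfc]
        have hcc : c < c + 1 / (m + 1) := by linarith
        exact Set.mem_Iio.mpr (by exact_mod_cast hcc)
      exact Filter.preimage_mem_comap this
    have h3 : {x : En n | (c : EReal) < f x} ∈ F := by
      rw [hF]
      exact Filter.mem_inf_of_right (Filter.mem_principal_self _)
    have hU : {x : En n | ‖x - xb‖ < 1 / (m + 1) ∧
        f x ∈ Set.Ioo ((c : ℝ) : EReal) (((c + 1 / (m + 1) : ℝ)) : EReal)} ∈ F := by
      filter_upwards [h1, h2, h3] with y hy1 hy2 hy3
      exact ⟨hy1, hy3, hy2⟩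
    obtain ⟨x, hxU, hxP⟩ := Filter.frequently_iff.mp hfreq hU
    exact ⟨x, hxU.1, hxU.2, hxP⟩
  choose xs hx1 hx2 hx3 using hexists
  -- finiteness data at the chosen points
  have hdata : ∀ m : ℕ, ∃ t : ℝ, 0 < t ∧ t < 1 / (m + 1) ∧
      f (xs m) = ((c + t : ℝ) : EReal) ∧ g (xs m) = ((t ^ (1 - θ) : ℝ) : EReal) := by
    intro m
    obtain ⟨hlo, hhi⟩ := hx2 m
    have hftop : f (xs m) ≠ ⊤ := ne_top_of_lt hhi
    set b := (f (xs m)).toReal with hb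
    have hfb : f (xs m) = ((b : ℝ) : EReal) := (EReal.coe_toReal hftop (hbot _)).symm
    rw [hfb] at hlo hhi
    have hlo' : c < b := by exact_mod_cast hlo
    have hhi' : b < c + 1 / (m + 1) := by exact_mod_cast hhi
    refine ⟨b - c, by linarith, by linarith, by rw [hfb]; norm_num, ?_⟩
    rw [g_eq_of_finite hg hfb, max_eq_left (by linarith)]
  choose t ht0 ht1 hft hgt using hdata
  -- pick approximate nearest subgradients
  have hv : ∀ m : ℕ, ∃ v ∈ LimSubgrad g (xs m),
      edist 0 v < L + ENNReal.ofReal (1 / (m + 1)) := by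
    intro m
    exact EMetric.infEdist_lt_iff.mp (hx3 m)
  choose vs hvmem hvlt using hv
  have hL1top : L + 1 ≠ ⊤ := by
    simp [hLlt.ne]
  have hbound : ∀ m, vs m ∈ Metric.closedBall (0 : En n) ((L + 1).toReal) := by
    intro m
    have hle : edist 0 (vs m) ≤ L + 1 := by
      refine le_trans (hvlt m).le (add_le_add_right ?_ _)
      exact ENNReal.ofReal_le_one.mpr (by
        rw [div_le_one (by positivity)]
        linarith [(by positivity : (0:ℝ) ≤ (m:ℝ))])
    rw [Metric.mem_closedBall, dist_comm, dist_edist]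
    exact ENNReal.toReal_le_toReal (ne_top_of_le_ne_top hL1top hle) hL1top |>.mpr hle
  obtain ⟨v, hvball, φ, hφmono, hφten⟩ :=
    (isCompact_closedBall (0 : En n) ((L + 1).toReal)).tendsto_subseq hbound
  have hφat : Tendsto φ atTop atTop := hφmono.tendsto_atTop
  have hxs : Tendsto xs atTop (nhds xb) := by
    rw [tendsto_iff_dist_tendsto_zero]
    apply squeeze_zero (fun m => dist_nonneg)
      (fun m => le_of_lt (by rw [dist_eq_norm]; exact hx1 m))
      tendsto_one_div_add_atTop_nhds_zero_nat
  have htten : Tendsto t atTop (nhds 0) :=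
    squeeze_zero (fun m => (ht0 m).le) (fun m => (ht1 m).le)
      tendsto_one_div_add_atTop_nhds_zero_nat
  have hgten : Tendsto (fun m => g (xs m)) atTop (nhds (g xb)) := by
    rw [hgxb]
    apply Tendsto.congr (fun m => (hgt m).symm)
    rw [EReal.tendsto_coe]
    have := htten.rpow_const (p := 1 - θ) (Or.inr hθ'.le)
    rwa [Real.zero_rpow hθ'.ne'] at this
  have hvOuter : v ∈ OuterSubgrad g xb := by
    refine ⟨fun k => xs (φ k), fun k => vs (φ k), hxs.comp hφat, hφten, hgten.comp hφat,
      ?_, fun k => hvmem (φ k)⟩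
    intro k
    rw [hgxb, hgt (φ k)]
    exact_mod_cast Real.rpow_pos_of_pos (ht0 (φ k)) _
  have hedistle : edist 0 v ≤ L := by
    have ht1' : Tendsto (fun k => edist 0 (vs (φ k))) atTop (nhds (edist 0 v)) :=
      tendsto_const_nhds.edist hφten
    have ht2' : Tendsto (fun k => L + ENNReal.ofReal (1 / (φ k + 1))) atTop (nhds L) := by
      have h0 : Tendsto (fun k => ENNReal.ofReal (1 / ((φ k : ℝ) + 1))) atTop (nhds 0) := by
        have hr : Tendsto (fun k => 1 / ((φ k : ℝ) + 1)) atTop (nhds 0) :=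
          tendsto_one_div_add_atTop_nhds_zero_nat.comp hφat
        have := ENNReal.tendsto_ofReal hr
        simpa using this
      have := tendsto_const_nhds (x := L) (f := atTop (α := ℕ)) |>.add h0
      simpa using this
    exact le_of_tendsto_of_tendsto' ht1' ht2' (fun k => (hvlt (φ k)).le)
  calc DistZero (OuterSubgrad g xb) ≤ edist 0 v := EMetric.infEdist_le_edist_of_mem hvOuter
    _ ≤ L := hedistle

lemma pointwise_eq {n : ℕ} {f g : En n → EReal} {c θ : ℝ} (hθ0 : 0 ≤ θ) (hθ1 : θ < 1)
    (hbot : ∀ x, f x ≠ ⊥)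
    (hg : g = fun x => if f x = ⊤ then (⊤ : EReal)
      else (((max (f x - (c : ℝ)).toReal 0 : ℝ) ^ (1 - θ) : ℝ) : EReal))
    {x : En n} {t₀ : ℝ} (ht₀ : 0 < t₀) (hfx : f x = ((c + t₀ : ℝ) : EReal)) :
    ENNReal.ofReal (1 - θ) * DistZero (LimSubgrad f x) /
      ENNReal.ofReal ((f x - (c : ℝ)).toReal ^ θ) = DistZero (LimSubgrad g x) := by
  have hθ' : (0:ℝ) < 1 - θ := by linarith
  set r : ℝ := (1 - θ) * t₀ ^ (-θ) with hrdef
  have hr : 0 < r := mul_pos hθ' (Real.rpow_pos_of_pos ht₀ _)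
  have hset : LimSubgrad g x = (fun v => r • v) '' LimSubgrad f x := by
    apply Set.Subset.antisymm
    · intro w hw
      refine ⟨r⁻¹ • w, limB2 hθ0 hθ1 hbot hg ht₀ hfx hw, ?_⟩
      show r • (r⁻¹ • w) = w
      rw [smul_smul, mul_inv_cancel₀ hr.ne', one_smul]
    · rintro _ ⟨v, hv, rfl⟩
      exact limB1 hθ1 hbot hg ht₀ hfx hv
  have htoReal : (f x - (c : ℝ)).toReal = t₀ := by
    rw [hfx, ← EReal.coe_sub, EReal.toReal_coe]
    ring
  simp only [DistZero]
  rw [htoReal, hset, infEdist_smul r hr, hrdef,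
    ENNReal.ofReal_mul hθ'.le, Real.rpow_neg ht₀.le,
    ENNReal.ofReal_inv_of_pos (Real.rpow_pos_of_pos ht₀ θ), div_eq_mul_inv]
  ring

/-- the KŁ modulus (a liminf of normalized subgradient distances)
equals the distance from `0` to the outer limiting subdifferential of
`g = (max{f - f(xb),0})^{1-θ}` at `xb`. -/
theorem statement_4 {n : ℕ} (f : En n → EReal) (hbot : ∀ x, f x ≠ ⊥)
    (xb : En n) (c : ℝ) (hfc : f xb = (c : ℝ)) (hloc : LocallyLsc f xb)
    (θ : ℝ) (hθ0 : 0 ≤ θ) (hθ1 : θ < 1)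
    (g : En n → EReal)
    (hg : g = fun x => if f x = ⊤ then (⊤ : EReal)
      else (((max (f x - (c : ℝ)).toReal 0 : ℝ) ^ (1 - θ) : ℝ) : EReal)) :
    Filter.liminf
        (fun x : En n =>
          ENNReal.ofReal (1 - θ) * DistZero (LimSubgrad f x) /
            ENNReal.ofReal ((f x - (c : ℝ)).toReal ^ θ))
        ((nhds xb ⊓ Filter.comap f (nhds (f xb))) ⊓
          Filter.principal {x : En n | (c : EReal) < f x}) =
      DistZero (OuterSubgrad g xb) := by
  have hθ' : (0:ℝ) < 1 - θ := by linarith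
  have hev : ∀ᶠ x in ((nhds xb ⊓ Filter.comap f (nhds (f xb))) ⊓
      Filter.principal {x : En n | (c : EReal) < f x}),
      ENNReal.ofReal (1 - θ) * DistZero (LimSubgrad f x) /
        ENNReal.ofReal ((f x - (c : ℝ)).toReal ^ θ) = DistZero (LimSubgrad g x) := by
    have h2 : {x : En n | f x < (⊤ : EReal)} ∈ ((nhds xb ⊓ Filter.comap f (nhds (f xb))) ⊓
        Filter.principal {x : En n | (c : EReal) < f x}) := by
      apply Filter.mem_inf_of_left
      apply Filter.mem_inf_of_right
      have : Set.Iio (⊤ : EReal) ∈ nhds (f xb) := by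
        apply isOpen_Iio.mem_nhds
        rw [hfc]
        exact EReal.coe_lt_top c
      exact Filter.preimage_mem_comap this
    have h3 : {x : En n | (c : EReal) < f x} ∈ ((nhds xb ⊓ Filter.comap f (nhds (f xb))) ⊓
        Filter.principal {x : En n | (c : EReal) < f x}) :=
      Filter.mem_inf_of_right (Filter.mem_principal_self _)
    filter_upwards [h2, h3] with y hy2 hy3
    have hftop : f y ≠ ⊤ := ne_of_lt hy2
    have hfb : f y = (((f y).toReal : ℝ) : EReal) := (EReal.coe_toReal hftop (hbot _)).symm
    have hcb : c < (f y).toReal := by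
      rw [hfb] at hy3
      exact_mod_cast hy3
    have hfy : f y = ((c + ((f y).toReal - c) : ℝ) : EReal) := by
      rw [hfb]
      norm_num
    exact pointwise_eq hθ0 hθ1 hbot hg (by linarith : (0:ℝ) < (f y).toReal - c) hfy
  rw [Filter.liminf_congr hev]
  exact le_antisymm (M1 hθ0 hθ1 hbot hg hfc) (M2 hθ0 hθ1 hbot hg hfc)
end
end

section
/- Let f : ℝⁿ → ℝ ∪ {+∞} be finite and locally lower semicontinuous at x̄, and set h := df(x̄). If h is proper and positively homogeneous of degree 1, then ∂^> h(0) equals the closure of the union of ∂h(w) over all w with 0 < h(w) < +∞; in particular, ∂^> h(0) is nonempty if and only if the set W = {w : 0 < h(w) < +∞} is nonempty. -/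
open Filter Topology
open scoped ENNReal NNReal Pointwise

noncomputable section

/-- The (first) subderivative `df(x)(w)`. -/
def Subderiv {n : ℕ} (f : En n → EReal) (x : En n) (w : En n) : EReal :=
  Filter.liminf (fun p : ℝ × En n => ((p.1⁻¹ : ℝ) : EReal) * (f (x + p.1 • p.2) - f x))
    ((nhdsWithin 0 (Set.Ioi 0)) ×ˢ (nhds w))

/-! ### Auxiliary lemmas -/

lemma ereal_mul_add_coe (l : ℝ) (hl : 0 < l) (a : EReal) (s : ℝ) :
    (l : EReal) * (a + (s : ℝ)) = (l : EReal) * a + ((l * s : ℝ) : EReal) := by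
  induction a using EReal.rec with
  | bot => simp [EReal.coe_mul_bot_of_pos hl]
  | coe r => norm_cast; ring
  | top => rw [EReal.top_add_coe, EReal.coe_mul_top_of_pos hl, EReal.top_add_coe]

lemma ereal_coe_le_add_coe {a : EReal} {x y : ℝ} (h : (x : EReal) ≤ a + (y : ℝ)) :
    ((x - y : ℝ) : EReal) ≤ a := by
  induction a using EReal.rec with
  | bot => simp at h
  | coe r => norm_cast at h ⊢; linarith
  | top => exact le_top

lemma regsub_smul_subset {n : ℕ} (h : En n → EReal)
    (hhomog : ∀ l : ℝ, 0 < l → ∀ w : En n, h (l • w) = ((l : ℝ) : EReal) * h w)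
    {l : ℝ} (hl : 0 < l) (x : En n) :
    RegSubgrad h x ⊆ RegSubgrad h (l • x) := by
  intro v hv ε hε
  obtain ⟨δ, hδ, hδ'⟩ := hv ε hε
  refine ⟨l * δ, by positivity, fun u hu hne => ?_⟩
  set u' := l⁻¹ • u with hu'
  have hux : u = l • u' := (smul_inv_smul₀ hl.ne' u).symm
  have hdiff : u - l • x = l • (u' - x) := by
    rw [smul_sub, ← hux]
  have hnorm : ‖u - l • x‖ = l * ‖u' - x‖ := by
    rw [hdiff, norm_smul, Real.norm_eq_abs, abs_of_pos hl]
  have h1 : ‖u' - x‖ < δ := by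
    have := hu; rw [hnorm] at this
    exact lt_of_mul_lt_mul_left (by linarith) hl.le
  have h2 : u' ≠ x := by
    intro hc
    apply hne
    rw [hux, hc]
  have key := hδ' u' h1 h2
  have key2 := mul_le_mul_of_nonneg_left key (by exact_mod_cast hl.le :
      (0 : EReal) ≤ (l : ℝ))
  rw [ereal_mul_add_coe l hl] at key2
  rw [← hhomog l hl x, ← hhomog l hl u', ← hux] at key2
  convert key2 using 3
  rw [hdiff, real_inner_smul_right, norm_smul, Real.norm_eq_abs, abs_of_pos hl]
  ring

lemma regsub_smul_eq {n : ℕ} (h : En n → EReal)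
    (hhomog : ∀ l : ℝ, 0 < l → ∀ w : En n, h (l • w) = ((l : ℝ) : EReal) * h w)
    {l : ℝ} (hl : 0 < l) (x : En n) :
    RegSubgrad h (l • x) = RegSubgrad h x := by
  apply Set.Subset.antisymm
  · have := regsub_smul_subset h hhomog (inv_pos.2 hl) (l • x)
    rwa [inv_smul_smul₀ hl.ne'] at this
  · exact regsub_smul_subset h hhomog hl x

lemma limsub_smul_eq {n : ℕ} (h : En n → EReal)
    (hhomog : ∀ l : ℝ, 0 < l → ∀ w : En n, h (l • w) = ((l : ℝ) : EReal) * h w)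
    {l : ℝ} (hl : 0 < l) (x : En n) :
    LimSubgrad h (l • x) = LimSubgrad h x := by
  have main : ∀ {m : ℝ}, 0 < m → ∀ y : En n,
      LimSubgrad h y ⊆ LimSubgrad h (m • y) := by
    intro m hm y v hv
    obtain ⟨xk, vk, h1, h2, h3, h4⟩ := hv
    refine ⟨fun k => m • xk k, vk, ?_, h2, ?_, ?_⟩
    · exact (h1.const_smul m)
    · have hc : ContinuousAt (fun a : EReal => ((m : ℝ) : EReal) * a) (h y) := by
        have := EReal.continuousAt_mul (p := (((m : ℝ) : EReal), h y))
          (Or.inl (by simp; exact_mod_cast hm.ne')) (Or.inl (by simp; exact_mod_cast hm.ne'))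
          (Or.inl (by simp)) (Or.inl (by simp))
        exact this.comp (Continuous.continuousAt (by continuity))
      have := hc.tendsto.comp h3
      simp only [Function.comp_def] at this
      have heq : ∀ k, h (m • xk k) = ((m : ℝ) : EReal) * h (xk k) :=
        fun k => hhomog m hm (xk k)
      rw [hhomog m hm y]
      exact Tendsto.congr (fun k => (heq k).symm) this
    · exact fun k => regsub_smul_subset h hhomog hm (xk k) (h4 k)
  apply Set.Subset.antisymm
  · have := main (inv_pos.2 hl) (l • x)
    rwa [inv_smul_smul₀ hl.ne'] at this
  · exact main hl x

lemma regsub_subset_limsub {n : ℕ} (h : En n → EReal) (x : En n) :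
    RegSubgrad h x ⊆ LimSubgrad h x := by
  intro v hv
  exact ⟨fun _ => x, fun _ => v, tendsto_const_nhds, tendsto_const_nhds,
    tendsto_const_nhds, fun _ => hv⟩

lemma subderiv_lsc {n : ℕ} (f : En n → EReal) (x : En n) :
    LowerSemicontinuous (fun w => Subderiv f x w) := by
  intro w0 b hb
  simp only [Subderiv] at hb
  rw [Filter.liminf_eq] at hb
  obtain ⟨a, ha, hba⟩ := lt_sSup_iff.1 hb
  simp only [Set.mem_setOf_eq] at ha
  rw [Filter.eventually_prod_iff] at ha
  obtain ⟨pa, hpa, pb, hpb, hImp⟩ := ha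
  obtain ⟨O, hOsub, hOopen, hOw0⟩ := mem_nhds_iff.1 hpb
  filter_upwards [hOopen.mem_nhds hOw0] with w hw
  have hev : ∀ᶠ p : ℝ × En n in (nhdsWithin 0 (Set.Ioi 0)) ×ˢ (nhds w),
      a ≤ ((p.1⁻¹ : ℝ) : EReal) * (f (x + p.1 • p.2) - f x) := by
    have hb' : ∀ᶠ w' in nhds w, pb w' :=
      Filter.eventually_of_mem (hOopen.mem_nhds hw) (fun y hy => hOsub hy)
    filter_upwards [hpa.prod_mk hb'] with p hp
    exact hImp hp.1 hp.2
  calc b < a := hba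
    _ ≤ Subderiv f x w := by
        unfold Subderiv
        rw [Filter.liminf_eq]
        exact le_sSup hev

lemma h_ne_bot {n : ℕ} (h : En n → EReal) (hlsc : LowerSemicontinuous h)
    (hproper : h 0 = 0)
    (hhomog : ∀ l : ℝ, 0 < l → ∀ w : En n, h (l • w) = ((l : ℝ) : EReal) * h w)
    (w : En n) : h w ≠ ⊥ := by
  intro hc
  have h0 : ((-1 : ℝ) : EReal) < h 0 := by
    rw [hproper]; exact_mod_cast (by norm_num : (-1:ℝ) < 0)
  have := hlsc 0 _ h0
  rw [Metric.eventually_nhds_iff] at this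
  obtain ⟨δ, hδ, hδ'⟩ := this
  set t := δ / (2 * (‖w‖ + 1)) with ht
  have htpos : 0 < t := by positivity
  have hdist : dist (t • w) 0 < δ := by
    rw [dist_zero_right, norm_smul, Real.norm_eq_abs, abs_of_pos htpos]
    calc t * ‖w‖ ≤ t * (‖w‖ + 1) := by nlinarith [norm_nonneg w]
      _ = δ / 2 := by
        rw [ht, div_mul_eq_mul_div, mul_comm 2 (‖w‖ + 1), ← div_div,
          mul_div_cancel_right₀ _ (by positivity)]
      _ < δ := by linarith
  have := hδ' hdist
  beta_reduce at this
  rw [hhomog t htpos w, hc, EReal.coe_mul_bot_of_pos htpos] at this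
  exact absurd this (by simp)

lemma lsc_exists_min {n : ℕ} (φ : En n → EReal) (hφ : LowerSemicontinuous φ)
    {K : Set (En n)} (hK : IsCompact K) (hne : K.Nonempty) :
    ∃ u0 ∈ K, ∀ u ∈ K, φ u0 ≤ φ u := by
  by_contra hc
  push_neg at hc
  have hsel : ∀ x : En n, ∃ u : En n, x ∈ K → u ∈ K ∧ φ u < φ x := by
    intro x
    by_cases hx : x ∈ K
    · obtain ⟨u, hu, hlt⟩ := hc x hx
      exact ⟨u, fun _ => ⟨hu, hlt⟩⟩
    · exact ⟨x, fun h => absurd h hx⟩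
  choose g hg using hsel
  have hcov : ∀ x ∈ K, φ ⁻¹' (Set.Ioi (φ (g x))) ∈ 𝓝 x := by
    intro x hx
    exact (hφ.isOpen_preimage (φ (g x))).mem_nhds ((hg x hx).2)
  obtain ⟨t, htK, htcov⟩ := hK.elim_nhds_subcover _ hcov
  have htne : t.Nonempty := by
    rcases hne with ⟨z, hz⟩
    have := htcov hz
    simp only [Set.mem_iUnion] at this
    obtain ⟨i, hi, _⟩ := this
    exact ⟨i, hi⟩
  obtain ⟨x0, hx0t, hx0min⟩ := t.exists_min_image (fun x => φ (g x)) htne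
  have hgx0K : g x0 ∈ K := (hg x0 (htK x0 hx0t)).1
  have := htcov hgx0K
  simp only [Set.mem_iUnion] at this
  obtain ⟨j, hjt, hj⟩ := this
  exact absurd (hx0min j hjt) (not_le.2 hj)

lemma exists_regsub {n : ℕ} (h : En n → EReal) (hlsc : LowerSemicontinuous h)
    (hnb : ∀ x, h x ≠ ⊥) (w : En n) (hw0 : (0 : EReal) < h w) (hwt : h w < ⊤) :
    ∃ u0 : En n, ((0 : EReal) < h u0 ∧ h u0 < ⊤) ∧ (RegSubgrad h u0).Nonempty := by
  set c0 := (h w).toReal with hc0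
  have hc : h w = (c0 : EReal) := (EReal.coe_toReal hwt.ne (hnb w)).symm
  have c0pos : 0 < c0 := by
    rw [hc] at hw0; exact_mod_cast hw0
  have hlt : ((c0/2 : ℝ) : EReal) < h w := by
    rw [hc]; exact_mod_cast (by linarith : c0/2 < c0)
  obtain ⟨δ, hδ, hδ'⟩ := Metric.eventually_nhds_iff.1 (hlsc w _ hlt)
  set r := δ / 2 with hr
  have rpos : 0 < r := by positivity
  set K := Metric.closedBall w r with hK
  have hKc : IsCompact K := isCompact_closedBall w r
  have hball : ∀ u ∈ K, ((c0/2 : ℝ) : EReal) < h u := by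
    intro u hu
    exact hδ' (lt_of_le_of_lt (Metric.mem_closedBall.1 hu) (by rw [hr]; linarith))
  set C := c0 / r ^ 2 with hC
  have Cpos : 0 < C := by positivity
  set q : En n → ℝ := fun u => C * ‖u - w‖ ^ 2 with hq
  have hqc : Continuous fun u : En n => ((q u : ℝ) : EReal) := by
    apply continuous_coe_real_ereal.comp
    exact continuous_const.mul (((continuous_id.sub continuous_const).norm).pow 2)
  set φ : En n → EReal := fun u => h u + ((q u : ℝ) : EReal) with hφ
  have hφlsc : LowerSemicontinuous φ := by
    apply hlsc.add' hqc.lowerSemicontinuous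
    intro x
    exact EReal.continuousAt_add (Or.inr (EReal.coe_ne_bot _)) (Or.inl (hnb x))
  obtain ⟨u0, hu0K, hu0min⟩ := lsc_exists_min φ hφlsc hKc
    ⟨w, Metric.mem_closedBall_self rpos.le⟩
  have hφw : φ w = (c0 : EReal) := by
    simp only [hφ, hq, sub_self, norm_zero]
    rw [hc]
    norm_num
  have hmin : φ u0 ≤ (c0 : EReal) := by
    rw [← hφw]; exact hu0min w (Metric.mem_closedBall_self rpos.le)
  have hu0lb : ((c0/2 : ℝ) : EReal) < h u0 := hball u0 hu0K
  have hu0top : h u0 ≠ ⊤ := by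
    intro hcon
    have h2 : h u0 + ((q u0 : ℝ) : EReal) ≤ (c0 : EReal) := hmin
    rw [hcon, EReal.top_add_coe] at h2
    exact absurd h2 (by simp)
  set β := (h u0).toReal with hβ0
  have hβ : h u0 = (β : EReal) := (EReal.coe_toReal hu0top (hnb u0)).symm
  have hβlb : c0/2 < β := by rw [hβ] at hu0lb; exact_mod_cast hu0lb
  have hreal : β + q u0 ≤ c0 := by
    have : ((β + q u0 : ℝ) : EReal) ≤ (c0 : EReal) := by
      rw [EReal.coe_add, ← hβ]; exact hmin
    exact_mod_cast this
  set d := ‖u0 - w‖ with hd0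
  have hdr : d ≤ r := by
    have := Metric.mem_closedBall.1 hu0K
    rwa [dist_eq_norm] at this
  have hdlt : d < r := by
    have hq0 : q u0 = C * d ^ 2 := rfl
    have h1 : C * d ^ 2 < c0 / 2 := by
      rw [← hq0]; linarith
    have hr2 : (0:ℝ) < r ^ 2 := by positivity
    rw [hC, div_mul_eq_mul_div, div_lt_iff₀ hr2] at h1
    have h2 : d ^ 2 < r ^ 2 := by nlinarith
    exact lt_of_pow_lt_pow_left₀ 2 rpos.le h2
  refine ⟨u0, ⟨by rw [hβ]; exact_mod_cast (by linarith : (0:ℝ) < β),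
      by rw [hβ]; exact EReal.coe_lt_top β⟩, ⟨(2*C) • (w - u0), ?_⟩⟩
  intro ε εpos
  refine ⟨min (ε / C) (r - d), lt_min (by positivity) (by linarith), fun u hu hne => ?_⟩
  have hu1 : ‖u - u0‖ < ε / C := lt_of_lt_of_le hu (min_le_left _ _)
  have hu2 : ‖u - u0‖ < r - d := lt_of_lt_of_le hu (min_le_right _ _)
  have huK : u ∈ K := by
    rw [hK, Metric.mem_closedBall, dist_eq_norm]
    calc ‖u - w‖ = ‖(u - u0) + (u0 - w)‖ := by rw [sub_add_sub_cancel]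
      _ ≤ ‖u - u0‖ + ‖u0 - w‖ := norm_add_le _ _
      _ ≤ r := by rw [← hd0]; linarith
  have hkey : ((β + q u0 : ℝ) : EReal) ≤ h u + ((q u : ℝ) : EReal) := by
    rw [EReal.coe_add, ← hβ]
    exact hu0min u huK
  have hkey2 : ((β + q u0 - q u : ℝ) : EReal) ≤ h u := ereal_coe_le_add_coe hkey
  have hrineq : β + ((inner ℝ ((2*C) • (w - u0)) (u - u0) : ℝ) - ε * ‖u - u0‖)
      ≤ β + q u0 - q u := by
    have hexp : ‖u - w‖ ^ 2 = ‖u0 - w‖ ^ 2 + 2 * (inner ℝ (u0 - w) (u - u0) : ℝ)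
        + ‖u - u0‖ ^ 2 := by
      rw [show u - w = (u0 - w) + (u - u0) by abel]
      exact norm_add_sq_real _ _
    have hinner : (inner ℝ ((2*C) • (w - u0)) (u - u0) : ℝ)
        = -(2*C) * (inner ℝ (u0 - w) (u - u0) : ℝ) := by
      rw [real_inner_smul_left, show w - u0 = -(u0 - w) by abel, inner_neg_left]
      ring
    have hCd : C * ‖u - u0‖ ^ 2 ≤ ε * ‖u - u0‖ := by
      rw [lt_div_iff₀ Cpos] at hu1
      nlinarith [norm_nonneg (u - u0)]
    simp only [hq, hexp, hinner]
    linarith [hCd]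
  calc h u0 + (((inner ℝ ((2*C) • (w - u0)) (u - u0) : ℝ) - ε * ‖u - u0‖ : ℝ) : EReal)
      = ((β + ((inner ℝ ((2*C) • (w - u0)) (u - u0) : ℝ) - ε * ‖u - u0‖) : ℝ) : EReal) := by
        rw [EReal.coe_add, ← hβ]
    _ ≤ ((β + q u0 - q u : ℝ) : EReal) := by exact_mod_cast hrineq
    _ ≤ h u := hkey2

/-- for a proper, positively homogeneous subderivative `h = df(xb)`,
`∂^> h(0)` is the closure of `⋃_{0 < h(w) < ∞} ∂h(w)`, and it is nonempty iff
`W = {w : 0 < h(w) < ∞}` is nonempty. -/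
theorem statement_6 {n : ℕ} (f : En n → EReal) (hbot : ∀ x, f x ≠ ⊥)
    (xb : En n) (c : ℝ) (hfc : f xb = (c : ℝ)) (hloc : LocallyLsc f xb)
    (h : En n → EReal) (hh : h = fun w => Subderiv f xb w)
    (hproper : h 0 = 0)
    (hhomog : ∀ l : ℝ, 0 < l → ∀ w : En n, h (l • w) = ((l : ℝ) : EReal) * h w) :
    OuterSubgrad h 0 =
        closure (⋃ w ∈ {w : En n | (0 : EReal) < h w ∧ h w < ⊤}, LimSubgrad h w) ∧
      ((OuterSubgrad h 0).Nonempty ↔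
        {w : En n | (0 : EReal) < h w ∧ h w < ⊤}.Nonempty) := by
  have hlsc : LowerSemicontinuous h := by rw [hh]; exact subderiv_lsc f xb
  have hnb : ∀ x, h x ≠ ⊥ := h_ne_bot h hlsc hproper hhomog
  set W := {w : En n | (0 : EReal) < h w ∧ h w < ⊤} with hW
  set S := ⋃ w ∈ W, LimSubgrad h w with hS
  have heq : OuterSubgrad h 0 = closure S := by
    apply Set.Subset.antisymm
    · rintro v ⟨xk, vk, h1, h2, h3, h4, h5⟩
      rw [hproper] at h3 h4
      have hev : ∀ᶠ k in atTop, h (xk k) < ⊤ :=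
        h3.eventually_lt_const (by simp : (0 : EReal) < ⊤)
      apply mem_closure_of_tendsto h2
      filter_upwards [hev] with k hk
      exact Set.mem_biUnion ⟨h4 k, hk⟩ (h5 k)
    · intro v hv
      obtain ⟨vs, hvs, hvt⟩ := mem_closure_iff_seq_limit.1 hv
      have hsel : ∀ j, ∃ w : En n, ((0 : EReal) < h w ∧ h w < ⊤) ∧
          vs j ∈ LimSubgrad h w := by
        intro j
        obtain ⟨w, hw, hmem⟩ := Set.mem_iUnion₂.1 (hvs j)
        exact ⟨w, hw, hmem⟩
      choose ws hws1 hws2 using hsel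
      set rj : ℕ → ℝ := fun j => (h (ws j)).toReal with hrj0
      have hrj : ∀ j, h (ws j) = ((rj j : ℝ) : EReal) :=
        fun j => (EReal.coe_toReal (hws1 j).2.ne (hnb _)).symm
      have hrpos : ∀ j, 0 < rj j := by
        intro j
        have := (hws1 j).1
        rw [hrj j] at this
        exact_mod_cast this
      have hden : ∀ j, 0 < rj j + ‖ws j‖ :=
        fun j => add_pos_of_pos_of_nonneg (hrpos j) (norm_nonneg _)
      set tj : ℕ → ℝ := fun j => (1/((j:ℝ)+1)) * (1 / (rj j + ‖ws j‖)) with htj0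
      have htpos : ∀ j, 0 < tj j := by
        intro j
        have := hden j
        positivity
      set xs : ℕ → En n := fun j => tj j • ws j with hxs0
      have hxval : ∀ j, h (xs j) = ((tj j * rj j : ℝ) : EReal) := by
        intro j
        rw [show xs j = tj j • ws j from rfl, hhomog (tj j) (htpos j), hrj j,
          ← EReal.coe_mul]
      have hb1 : ∀ j, tj j * rj j ≤ 1/((j:ℝ)+1) := by
        intro j
        have h1 : tj j * rj j = (1/((j:ℝ)+1)) * (rj j / (rj j + ‖ws j‖)) := by
          simp only [htj0]; ring
        have h2 : rj j / (rj j + ‖ws j‖) ≤ 1 :=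
          div_le_one_of_le₀ (by linarith [norm_nonneg (ws j)]) (hden j).le
        rw [h1]
        exact mul_le_of_le_one_right (by positivity) h2
      have hb2 : ∀ j, ‖xs j‖ ≤ 1/((j:ℝ)+1) := by
        intro j
        have h1 : ‖xs j‖ = (1/((j:ℝ)+1)) * (‖ws j‖ / (rj j + ‖ws j‖)) := by
          rw [show xs j = tj j • ws j from rfl, norm_smul, Real.norm_eq_abs,
            abs_of_pos (htpos j)]
          simp only [htj0]; ring
        have h2 : ‖ws j‖ / (rj j + ‖ws j‖) ≤ 1 :=
          div_le_one_of_le₀ (by linarith [hrpos j]) (hden j).le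
        rw [h1]
        exact mul_le_of_le_one_right (by positivity) h2
      have hseq : Tendsto (fun j => tj j * rj j) atTop (𝓝 0) :=
        squeeze_zero (fun j => (mul_pos (htpos j) (hrpos j)).le) hb1
          tendsto_one_div_add_atTop_nhds_zero_nat
      refine ⟨xs, vs, ?_, hvt, ?_, ?_, ?_⟩
      · exact squeeze_zero_norm hb2 tendsto_one_div_add_atTop_nhds_zero_nat
      · rw [hproper]
        have := (continuous_coe_real_ereal.tendsto 0).comp hseq
        simp only [Function.comp_def, EReal.coe_zero] at this
        exact Tendsto.congr (fun j => (hxval j).symm) this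
      · intro k
        rw [hproper, hxval k]
        exact_mod_cast mul_pos (htpos k) (hrpos k)
      · intro k
        rw [show xs k = tj k • ws k from rfl, limsub_smul_eq h hhomog (htpos k) (ws k)]
        exact hws2 k
  refine ⟨heq, ?_, ?_⟩
  · rintro ⟨v, xk, vk, h1, h2, h3, h4, h5⟩
    rw [hproper] at h3 h4
    have hev : ∀ᶠ k in atTop, h (xk k) < ⊤ :=
      h3.eventually_lt_const (by simp : (0 : EReal) < ⊤)
    obtain ⟨k, hk⟩ := hev.exists
    exact ⟨xk k, h4 k, hk⟩
  · rintro ⟨w, hw1, hw2⟩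
    obtain ⟨u0, hu0, v, hv⟩ := exists_regsub h hlsc hnb w hw1 hw2
    rw [heq]
    exact ⟨v, subset_closure (Set.mem_biUnion hu0 (regsub_subset_limsub h u0 hv))⟩
end
end

section
/- Let f : ℝⁿ → ℝ ∪ {+∞} be finite and locally lower semicontinuous at x̄, let θ ∈ [0,1), and define h(w) := liminf_{τ↓0, w'→w} (f(x̄ + τ w') − f(x̄)) / ((1−θ) τ^{1/(1−θ)}). Then h is lower semicontinuous and positively homogeneous of degree 1/(1−θ), i.e., h(λw) = λ^{1/(1−θ)} h(w) for all λ > 0 and w ∈ dom h; moreover, either h(0) = 0 or h(0) = −∞, and h is proper if and only if h(0) = 0. -/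
open Filter Topology
open scoped ENNReal NNReal Pointwise

noncomputable section

/-- The `1/(1-θ)`-th subderivative of `f` at `x`. -/
def ThetaSubderiv {n : ℕ} (f : En n → EReal) (x : En n) (θ : ℝ) (w : En n) : EReal :=
  Filter.liminf (fun p : ℝ × En n =>
      (((((1 - θ) * p.1 ^ (1 / (1 - θ)))⁻¹ : ℝ)) : EReal) * (f (x + p.1 • p.2) - f x))
    ((nhdsWithin 0 (Set.Ioi 0)) ×ˢ (nhds w))
/-- Multiplication by a positive real constant as an order isomorphism of `EReal`. -/
def ERealMulPosIso (c : ℝ) (hc : 0 < c) : EReal ≃o EReal where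
  toFun x := (c : EReal) * x
  invFun x := ((c⁻¹ : ℝ) : EReal) * x
  left_inv x := by
    show ((c⁻¹ : ℝ) : EReal) * ((c : EReal) * x) = x
    rw [← mul_assoc, ← EReal.coe_mul, inv_mul_cancel₀ hc.ne', EReal.coe_one, one_mul]
  right_inv x := by
    show (c : EReal) * (((c⁻¹ : ℝ) : EReal) * x) = x
    rw [← mul_assoc, ← EReal.coe_mul, mul_inv_cancel₀ hc.ne', EReal.coe_one, one_mul]
  map_rel_iff' := by
    intro a b
    show (c : EReal) * a ≤ (c : EReal) * b ↔ a ≤ b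
    constructor
    · intro hab
      have h0 : (0 : EReal) ≤ ((c⁻¹ : ℝ) : EReal) := by
        exact_mod_cast (inv_pos.mpr hc).le
      have h2 := mul_le_mul_of_nonneg_left hab h0
      rwa [← mul_assoc, ← mul_assoc, ← EReal.coe_mul, inv_mul_cancel₀ hc.ne',
        EReal.coe_one, one_mul, one_mul] at h2
    · intro hab
      exact mul_le_mul_of_nonneg_left hab (by exact_mod_cast hc.le)

lemma theta_homog {n : ℕ} (f : En n → EReal) (xb : En n) (θ : ℝ) (hθ1 : θ < 1)
    (l : ℝ) (hl : 0 < l) (w : En n) :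
    ThetaSubderiv f xb θ (l • w) = ((l ^ (1 / (1 - θ)) : ℝ) : EReal) * ThetaSubderiv f xb θ w := by
  have h1θ : (0:ℝ) < 1 - θ := by linarith
  set G : ℝ × En n → EReal := fun p =>
      (((((1 - θ) * p.1 ^ (1 / (1 - θ)))⁻¹ : ℝ)) : EReal) * (f (xb + p.1 • p.2) - f xb) with hG
  have hT : ∀ v : En n, ThetaSubderiv f xb θ v
      = Filter.liminf G ((𝓝[>] (0:ℝ)) ×ˢ 𝓝 v) := fun v => rfl
  have hm : ∀ a : ℝ, 0 < a →
      Tendsto (fun σ : ℝ => a * σ) (𝓝[>] (0:ℝ)) (𝓝[>] (0:ℝ)) := by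
    intro a ha
    rw [tendsto_nhdsWithin_iff]
    constructor
    · exact ((continuous_const.mul continuous_id).tendsto' 0 0 (by simp)).mono_left
        nhdsWithin_le_nhds
    · filter_upwards [self_mem_nhdsWithin] with σ hσ
      exact mul_pos ha hσ
  have hmap1 : map (fun σ : ℝ => l⁻¹ * σ) (𝓝[>] (0:ℝ)) = 𝓝[>] (0:ℝ) := by
    refine le_antisymm (hm _ (inv_pos.mpr hl)) ?_
    have h2 : map (fun σ : ℝ => l⁻¹ * σ) (map (fun σ : ℝ => l * σ) (𝓝[>] (0:ℝ)))
        ≤ map (fun σ : ℝ => l⁻¹ * σ) (𝓝[>] (0:ℝ)) := Filter.map_mono (hm l hl)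
    rwa [Filter.map_map,
      (funext fun σ => by show l⁻¹ * (l * σ) = σ; field_simp :
        ((fun σ : ℝ => l⁻¹ * σ) ∘ fun σ : ℝ => l * σ) = id), Filter.map_id] at h2
  have hmap2 : map (fun u : En n => l • u) (𝓝 w) = 𝓝 (l • w) := by
    exact (Homeomorph.smulOfNeZero l hl.ne').map_nhds_eq w
  have hprod : (𝓝[>] (0:ℝ)) ×ˢ 𝓝 (l • w)
      = map (fun p : ℝ × En n => (l⁻¹ * p.1, l • p.2)) ((𝓝[>] (0:ℝ)) ×ˢ 𝓝 w) := by
    conv_lhs => rw [← hmap1, ← hmap2]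
    exact Filter.prod_map_map_eq
  rw [hT, hT, hprod, ← Filter.liminf_comp]
  have heq : ∀ᶠ p : ℝ × En n in (𝓝[>] (0:ℝ)) ×ˢ 𝓝 w,
      (G ∘ fun p : ℝ × En n => (l⁻¹ * p.1, l • p.2)) p
        = ((l ^ (1 / (1 - θ)) : ℝ) : EReal) * G p := by
    filter_upwards [(eventually_mem_nhdsWithin).prod_inl (𝓝 w)] with p hp
    have hp1 : (0:ℝ) < p.1 := hp
    have hsmul : (l⁻¹ * p.1) • (l • p.2) = p.1 • p.2 := by
      rw [smul_smul]
      congr 1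
      field_simp
    have hcoef : (((1 - θ) * (l⁻¹ * p.1) ^ (1 / (1 - θ)))⁻¹ : ℝ)
        = l ^ (1 / (1 - θ)) * ((1 - θ) * p.1 ^ (1 / (1 - θ)))⁻¹ := by
      rw [Real.mul_rpow (inv_nonneg.mpr hl.le) hp1.le, Real.inv_rpow hl.le]
      have h2 : p.1 ^ (1 / (1 - θ)) ≠ 0 := (Real.rpow_pos_of_pos hp1 _).ne'
      have h3 : l ^ (1 / (1 - θ)) ≠ 0 := (Real.rpow_pos_of_pos hl _).ne'
      field_simp
    show (((((1 - θ) * (l⁻¹ * p.1) ^ (1 / (1 - θ)))⁻¹ : ℝ)) : EReal)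
        * (f (xb + (l⁻¹ * p.1) • (l • p.2)) - f xb) = _
    rw [hsmul, hcoef, EReal.coe_mul, mul_assoc]
  rw [Filter.liminf_congr heq]
  exact (OrderIso.liminf_apply
    (ERealMulPosIso (l ^ (1 / (1 - θ))) (Real.rpow_pos_of_pos hl _))).symm

lemma theta_bot_lim {n : ℕ} (f : En n → EReal) (xb : En n) (θ : ℝ) (v : ℕ → En n) (w : En n)
    (hv : Tendsto v atTop (𝓝 w)) (hvb : ∀ k, ThetaSubderiv f xb θ (v k) = ⊥) :
    ThetaSubderiv f xb θ w = ⊥ := by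
  set G : ℝ × En n → EReal := fun p =>
      (((((1 - θ) * p.1 ^ (1 / (1 - θ)))⁻¹ : ℝ)) : EReal) * (f (xb + p.1 • p.2) - f xb) with hG
  have hT : ∀ z : En n, ThetaSubderiv f xb θ z
      = Filter.liminf G ((𝓝[>] (0:ℝ)) ×ˢ 𝓝 z) := fun z => rfl
  have hfreq : ∀ M : ℝ, ∃ᶠ p in (𝓝[>] (0:ℝ)) ×ˢ 𝓝 w, G p < (M : EReal) := by
    intro M
    rw [Filter.frequently_iff]
    intro S hS
    rcases Filter.mem_prod_iff.mp hS with ⟨V, hV, U, hU, hVU⟩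
    have hUw : w ∈ interior U := mem_interior_iff_mem_nhds.mpr hU
    obtain ⟨k, hk⟩ := (hv.eventually (isOpen_interior.mem_nhds hUw)).exists
    have hlt : Filter.liminf G ((𝓝[>] (0:ℝ)) ×ˢ 𝓝 (v k)) < (M : EReal) := by
      rw [← hT, hvb k]
      exact EReal.bot_lt_coe M
    have hfr := Filter.frequently_lt_of_liminf_lt (by isBoundedDefault) hlt
    have hmem : (V ×ˢ interior U : Set (ℝ × En n)) ∈ (𝓝[>] (0:ℝ)) ×ˢ 𝓝 (v k) :=
      Filter.prod_mem_prod hV (isOpen_interior.mem_nhds hk)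
    obtain ⟨p, hp1, hp2⟩ :=
      (hfr.and_eventually (Filter.eventually_of_mem hmem fun _ hx => hx)).exists
    exact ⟨p, hVU ⟨hp2.1, interior_subset hp2.2⟩, hp1⟩
  rw [hT, EReal.eq_bot_iff_forall_lt]
  intro M
  have hle : Filter.liminf G ((𝓝[>] (0:ℝ)) ×ˢ 𝓝 w) ≤ ((M - 1 : ℝ) : EReal) :=
    Filter.liminf_le_of_frequently_le ((hfreq (M - 1)).mono fun p hp => hp.le)
  refine lt_of_le_of_lt hle ?_
  exact_mod_cast sub_one_lt M
/-- basic properties of the `1/(1-θ)`-th subderivative `h`: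
lower semicontinuity, positive homogeneity of degree `1/(1-θ)`,
`h(0) ∈ {0, -∞}`, and properness iff `h(0) = 0`. -/
theorem statement_7 {n : ℕ} (f : En n → EReal) (hbot : ∀ x, f x ≠ ⊥)
    (xb : En n) (c : ℝ) (hfc : f xb = (c : ℝ)) (hloc : LocallyLsc f xb)
    (θ : ℝ) (hθ0 : 0 ≤ θ) (hθ1 : θ < 1)
    (h : En n → EReal) (hh : h = fun w => ThetaSubderiv f xb θ w) :
    LowerSemicontinuous h ∧
      (∀ l : ℝ, 0 < l → ∀ w : En n, h w ≠ ⊤ →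
        h (l • w) = ((l ^ (1 / (1 - θ)) : ℝ) : EReal) * h w) ∧
      (h 0 = 0 ∨ h 0 = ⊥) ∧
      (((∀ w, h w ≠ ⊥) ∧ ∃ w, h w ≠ ⊤) ↔ h 0 = 0) := by
  subst hh
  have h1θ : (0:ℝ) < 1 - θ := by linarith
  set G : ℝ × En n → EReal := fun p =>
      (((((1 - θ) * p.1 ^ (1 / (1 - θ)))⁻¹ : ℝ)) : EReal) * (f (xb + p.1 • p.2) - f xb) with hG
  have hT : ∀ v : En n, ThetaSubderiv f xb θ v
      = Filter.liminf G ((𝓝[>] (0:ℝ)) ×ˢ 𝓝 v) := fun v => rfl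
  -- lower semicontinuity
  have hlsc : LowerSemicontinuous fun w => ThetaSubderiv f xb θ w := by
    intro w y hy
    obtain ⟨y', hyy', hy'⟩ := exists_between hy
    replace hy' : y' < ThetaSubderiv f xb θ w := hy'
    rw [hT] at hy'
    have hev : ∀ᶠ p in (𝓝[>] (0:ℝ)) ×ˢ 𝓝 w, y' < G p :=
      Filter.eventually_lt_of_lt_liminf hy'
    rcases Filter.mem_prod_iff.mp hev with ⟨V, hV, U, hU, hVU⟩
    have hw : w ∈ interior U := mem_interior_iff_mem_nhds.mpr hU
    filter_upwards [isOpen_interior.mem_nhds hw] with w' hw'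
    refine lt_of_lt_of_le hyy' ?_
    show y' ≤ ThetaSubderiv f xb θ w'
    rw [hT]
    refine Filter.le_liminf_of_le (by isBoundedDefault) ?_
    have hU' : U ∈ 𝓝 w' := mem_of_superset (isOpen_interior.mem_nhds hw') interior_subset
    refine Filter.eventually_of_mem (Filter.prod_mem_prod hV hU') ?_
    intro p hp
    exact (hVU hp).le
  -- h(0) ≤ 0
  have h0le : ThetaSubderiv f xb θ 0 ≤ 0 := by
    rw [hT]
    have hten : Tendsto (fun τ : ℝ => (τ, (0 : En n))) (𝓝[>] (0:ℝ))
        ((𝓝[>] (0:ℝ)) ×ˢ 𝓝 (0 : En n)) := tendsto_id.prodMk tendsto_const_nhds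
    have h1 : Filter.liminf G ((𝓝[>] (0:ℝ)) ×ˢ 𝓝 (0 : En n))
        ≤ Filter.liminf G (map (fun τ : ℝ => (τ, (0 : En n))) (𝓝[>] (0:ℝ))) :=
      Filter.liminf_le_liminf_of_le hten
    rw [← Filter.liminf_comp] at h1
    have h2 : (G ∘ fun τ : ℝ => (τ, (0 : En n))) = fun _ : ℝ => (0 : EReal) := by
      funext τ
      show (((((1 - θ) * τ ^ (1 / (1 - θ)))⁻¹ : ℝ)) : EReal)
          * (f (xb + τ • (0 : En n)) - f xb) = 0
      rw [smul_zero, add_zero, hfc, ← EReal.coe_sub, sub_self, EReal.coe_zero, mul_zero]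
    rw [h2, Filter.liminf_const] at h1
    exact h1
  -- h(0) = 0 or ⊥
  have h3 : ThetaSubderiv f xb θ 0 = 0 ∨ ThetaSubderiv f xb θ 0 = ⊥ := by
    by_cases hb : ThetaSubderiv f xb θ 0 = ⊥
    · exact Or.inr hb
    · left
      have hnt : ThetaSubderiv f xb θ 0 ≠ ⊤ :=
        (lt_of_le_of_lt h0le EReal.zero_lt_top).ne
      obtain ⟨r, hr⟩ : ∃ r : ℝ, ThetaSubderiv f xb θ 0 = (r : ℝ) :=
        ⟨_, (EReal.coe_toReal hnt hb).symm⟩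
      have hkey := theta_homog f xb θ hθ1 2 two_pos 0
      rw [smul_zero, hr, ← EReal.coe_mul] at hkey
      have hr2 : r = 2 ^ (1 / (1 - θ)) * r := by exact_mod_cast hkey
      have hκ : (0:ℝ) < 1 / (1 - θ) := by positivity
      have h2pow : (1:ℝ) < 2 ^ (1 / (1 - θ)) :=
        (Real.one_lt_rpow_iff_of_pos two_pos).mpr (Or.inl ⟨one_lt_two, hκ⟩)
      have h0r : (2 ^ (1 / (1 - θ)) - 1) * r = 0 := by
        rw [sub_mul, one_mul, ← hr2, sub_self]
      rcases mul_eq_zero.mp h0r with hcase | hcase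
      · exact absurd hcase (sub_ne_zero.mpr h2pow.ne')
      · rw [hr, hcase, EReal.coe_zero]
  refine ⟨hlsc, fun l hl w _ => theta_homog f xb θ hθ1 l hl w, h3, ?_⟩
  constructor
  · rintro ⟨hnb, -⟩
    rcases h3 with h0 | h0
    · exact h0
    · exact absurd h0 (hnb 0)
  · intro h0
    refine ⟨?_, ⟨0, by rw [h0]; exact EReal.zero_ne_top⟩⟩
    intro w
    by_contra hw
    have hw' : ThetaSubderiv f xb θ w = ⊥ := hw
    have hv : Tendsto (fun k : ℕ => ((1:ℝ) / (k + 1)) • w) atTop (𝓝 (0 : En n)) := by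
      have h2 := (tendsto_one_div_add_atTop_nhds_zero_nat (𝕜 := ℝ)).smul_const w
      rwa [zero_smul] at h2
    have hvb : ∀ k : ℕ, ThetaSubderiv f xb θ (((1:ℝ) / (k + 1)) • w) = ⊥ := by
      intro k
      have hpos : (0:ℝ) < 1 / ((k:ℝ) + 1) := by positivity
      rw [theta_homog f xb θ hθ1 _ hpos w, hw',
        EReal.coe_mul_bot_of_pos (Real.rpow_pos_of_pos hpos _)]
    have hzero := theta_bot_lim f xb θ _ 0 hv hvb
    have h0' : ThetaSubderiv f xb θ 0 = 0 := h0
    rw [hzero] at h0'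
    exact (EReal.bot_lt_coe 0).ne (h0'.trans EReal.coe_zero.symm)
end
end

section
/- Let f : ℝⁿ → ℝ ∪ {+∞} be finite and locally lower semicontinuous at x̄, let θ ∈ [0,1), let h be the 1/(1−θ)-th subderivative h(w) := liminf_{τ↓0, w'→w}(f(x̄+τw') − f(x̄))/((1−θ)τ^{1/(1−θ)}), and let W := {w : 0 < h(w) < +∞}. If W ≠ ∅, then f cannot satisfy the Kurdyka–Łojasiewicz property at x̄ with any exponent θ' ∈ [0, θ). -/
open Filter Topology
open scoped ENNReal NNReal Pointwise

noncomputable section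

/-- Minimum attainment for a real function with closed sublevel sets on a compact set. -/
lemma exists_min_of_closed_sublevels {X : Type*} [TopologicalSpace X]
    (T : Set X) (hT : IsCompact T) (hne : T.Nonempty) (ψ : X → ℝ)
    (hsub : ∀ b : ℝ, IsClosed {u | u ∈ T ∧ ψ u ≤ b}) :
    ∃ z ∈ T, ∀ u ∈ T, ψ z ≤ ψ u := by
  obtain ⟨u₀, hu₀⟩ := hne
  have hNE : Nonempty {b : ℝ // ∃ u ∈ T, ψ u ≤ b} := ⟨⟨ψ u₀, u₀, hu₀, le_rfl⟩⟩
  set t : {b : ℝ // ∃ u ∈ T, ψ u ≤ b} → Set X := fun b => {u | u ∈ T ∧ ψ u ≤ b.1} with ht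
  have htd : Directed (· ⊇ ·) t := by
    intro i j
    rcases le_total i.1 j.1 with hle | hle
    · exact ⟨i, subset_rfl, fun u hu => ⟨hu.1, hu.2.trans hle⟩⟩
    · exact ⟨j, fun u hu => ⟨hu.1, hu.2.trans hle⟩, subset_rfl⟩
  have htn : ∀ i, (t i).Nonempty := fun i => by
    obtain ⟨u, hu, hle⟩ := i.2; exact ⟨u, hu, hle⟩
  have htcl : ∀ i, IsClosed (t i) := fun i => hsub i.1
  have htc : ∀ i, IsCompact (t i) := fun i =>
    hT.of_isClosed_subset (htcl i) (fun u hu => hu.1)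
  obtain ⟨z, hz⟩ :=
    IsCompact.nonempty_iInter_of_directed_nonempty_isCompact_isClosed t htd htn htc htcl
  simp only [Set.mem_iInter] at hz
  refine ⟨z, (hz hNE.some).1, fun u hu => ?_⟩
  exact (hz ⟨ψ u, u, hu, le_rfl⟩).2

/-- Sublevel sets of `g + q` are closed on a closed set `T`, when `g` has closed
sublevels on `T` and `q` is continuous. -/
lemma isClosed_sublevel_add {X : Type*} [TopologicalSpace X] [SequentialSpace X]
    (T : Set X) (hTcl : IsClosed T) (g q : X → ℝ) (hq : Continuous q)
    (hsub : ∀ b : ℝ, IsClosed {u | u ∈ T ∧ g u ≤ b}) (b : ℝ) :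
    IsClosed {u | u ∈ T ∧ g u + q u ≤ b} := by
  apply IsSeqClosed.isClosed
  intro x aa hx hlimx
  have haT : aa ∈ T := hTcl.mem_of_tendsto hlimx (Eventually.of_forall fun k => (hx k).1)
  refine ⟨haT, ?_⟩
  have key : ∀ η : ℝ, 0 < η → g aa + q aa ≤ b + η := by
    intro η hη
    have hqq : Tendsto (fun k => q (x k)) atTop (nhds (q aa)) := (hq.tendsto aa).comp hlimx
    have hev : ∀ᶠ k in atTop, q aa - η < q (x k) :=
      hqq.eventually (eventually_gt_nhds (by linarith))
    have hmem : ∀ᶠ k in atTop, x k ∈ {u | u ∈ T ∧ g u ≤ b - q aa + η} := by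
      filter_upwards [hev] with k hk
      exact ⟨(hx k).1, by have := (hx k).2; linarith⟩
    have H := (hsub (b - q aa + η)).mem_of_tendsto hlimx hmem
    linarith [H.2]
  by_contra hcon
  push_neg at hcon
  have := key ((g aa + q aa - b) / 2) (by linarith)
  linarith

set_option maxHeartbeats 1000000 in
/-- if `W = {w : 0 < h(w) < ∞} ≠ ∅` for the `1/(1-θ)`-th
subderivative `h`, then `f` fails the KŁ property at `xb` with every
exponent `θ' ∈ [0, θ)`. -/
theorem statement_8 {n : ℕ} (f : En n → EReal) (hbot : ∀ x, f x ≠ ⊥)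
    (xb : En n) (c : ℝ) (hfc : f xb = (c : ℝ)) (hloc : LocallyLsc f xb)
    (θ : ℝ) (hθ0 : 0 ≤ θ) (hθ1 : θ < 1)
    (h : En n → EReal) (hh : h = fun w => ThetaSubderiv f xb θ w)
    (hW : ∃ w : En n, (0 : EReal) < h w ∧ h w < ⊤) :
    ∀ θ' : ℝ, 0 ≤ θ' → θ' < θ →
      ¬ ∃ μ : ℝ, 0 < μ ∧ ∃ ε : ℝ, 0 < ε ∧ ∃ ν : ℝ, 0 < ν ∧
        ∀ x : En n, ‖x - xb‖ ≤ ε → f x < (c : ℝ) + (ν : ℝ) →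
          ENNReal.ofReal ((μ / (1 - θ')) * (max (f x - (c : ℝ)).toReal 0) ^ θ') ≤
            DistZero (LimSubgrad f x) := by
  intro θ' hθ'0 hθ'θ
  rintro ⟨μ, hμ, ε, hε, ν, hν, hKL⟩
  obtain ⟨w, hw0, hwtop⟩ := hW
  obtain ⟨ε₀, hε₀, hclosed⟩ := hloc
  have h1θ : (0:ℝ) < 1 - θ := by linarith
  have h1θ' : (0:ℝ) < 1 - θ' := by linarith
  set μd : ℝ := μ / (1 - θ') with hμd
  have hμdpos : 0 < μd := by positivity
  set p : ℝ := 1 / (1 - θ) with hp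
  have hppos : 0 < p := by positivity
  have hpθ : p * (1 - θ) = 1 := by rw [hp]; field_simp
  -- the finite positive liminf value
  have hLbot : h w ≠ ⊥ := ne_bot_of_gt hw0
  have hLtop : h w ≠ ⊤ := hwtop.ne
  set l : ℝ := (h w).toReal with hldef
  have hLl : h w = (l : EReal) := (EReal.coe_toReal hLtop hLbot).symm
  have hlpos : 0 < l := by
    have h0 := hw0; rw [hLl] at h0; exact_mod_cast h0
  set a : ℝ := l / 2 * (1 - θ) with hadef
  set b : ℝ := (l + 1) * (1 - θ) with hbdef
  have hapos : 0 < a := mul_pos (by linarith) h1θ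
  have hbpos : 0 < b := mul_pos (by linarith) h1θ
  set F : Filter (ℝ × En n) := (nhdsWithin 0 (Set.Ioi 0)) ×ˢ (nhds w) with hF
  have hlim : h w = Filter.liminf
      (fun q : ℝ × En n => ((((1 - θ) * q.1 ^ p)⁻¹ : ℝ) : EReal) * (f (xb + q.1 • q.2) - f xb))
      F := by
    rw [hh, hp]; rfl
  -- eventual lower bound from the liminf
  have hev : ∀ᶠ q : ℝ × En n in F,
      ((l/2 : ℝ) : EReal) < ((((1 - θ) * q.1 ^ p)⁻¹ : ℝ) : EReal) * (f (xb + q.1 • q.2) - f xb) := by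
    refine eventually_lt_of_lt_liminf ?_ (by isBoundedDefault)
    rw [← hlim, hLl]
    exact_mod_cast (by linarith : l/2 < l)
  have hbasis : F.HasBasis (fun i : ℝ × ℝ => 0 < i.1 ∧ 0 < i.2)
      (fun i => Set.Ioo 0 i.1 ×ˢ Metric.ball w i.2) :=
    (nhdsGT_basis (0:ℝ)).prod Metric.nhds_basis_ball
  obtain ⟨⟨d1, d2⟩, ⟨hd1, hd2⟩, hdlow⟩ := hbasis.eventually_iff.mp hev
  set δ₀ : ℝ := min d1 d2 with hδ₀def
  have hδ₀ : 0 < δ₀ := lt_min hd1 hd2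
  -- conversion to real bounds
  have keylow : ∀ (τ : ℝ) (x : En n), 0 < τ →
      ((l/2 : ℝ) : EReal) < ((((1 - θ) * τ ^ p)⁻¹ : ℝ) : EReal) * (f x - f xb) →
      ((c + a * τ ^ p : ℝ) : EReal) < f x := by
    intro τ x hτ hQx
    have hd : (0:ℝ) < (1 - θ) * τ ^ p := mul_pos h1θ (Real.rpow_pos_of_pos hτ _)
    rcases eq_or_ne (f x) ⊤ with htop | htop
    · rw [htop]; exact EReal.coe_lt_top _
    · obtain ⟨t, ht⟩ : ∃ t : ℝ, f x = (t : EReal) :=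
        ⟨(f x).toReal, (EReal.coe_toReal htop (hbot x)).symm⟩
      rw [ht, hfc, ← EReal.coe_sub, ← EReal.coe_mul, EReal.coe_lt_coe_iff] at hQx
      rw [ht, EReal.coe_lt_coe_iff]
      rw [inv_mul_eq_div, lt_div_iff₀ hd] at hQx
      have hQx' : a * τ ^ p < t - c := by
        calc a * τ ^ p = l / 2 * ((1 - θ) * τ ^ p) := by rw [hadef]; ring
          _ < t - c := hQx
      linarith
  have hlow : ∀ (τ : ℝ) (w2 : En n), 0 < τ → τ < δ₀ → ‖w2 - w‖ < δ₀ →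
      ((c + a * τ ^ p : ℝ) : EReal) < f (xb + τ • w2) := by
    intro τ w2 hτ hτδ hwδ
    have hmem : (τ, w2) ∈ Set.Ioo (0:ℝ) d1 ×ˢ Metric.ball w d2 := by
      constructor
      · exact ⟨hτ, lt_of_lt_of_le hτδ (min_le_left _ _)⟩
      · rw [Metric.mem_ball, dist_eq_norm]; exact lt_of_lt_of_le hwδ (min_le_right _ _)
    exact keylow τ (xb + τ • w2) hτ (hdlow hmem)
  -- frequently, the quotient is below l+1
  have hfr : ∃ᶠ q : ℝ × En n in F,
      ((((1 - θ) * q.1 ^ p)⁻¹ : ℝ) : EReal) * (f (xb + q.1 • q.2) - f xb) < ((l+1 : ℝ) : EReal) := by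
    refine frequently_lt_of_liminf_lt (by isBoundedDefault) ?_
    rw [← hlim, hLl]
    exact_mod_cast (by linarith : l < l + 1)
  -- master constants
  set s : ℝ := min (δ₀ / 2) 1 with hsdef
  have hspos : 0 < s := lt_min (by linarith) one_pos
  have hsδ : s ≤ δ₀ / 2 := min_le_left _ _
  set K : ℝ := s + ‖w‖ + δ₀ with hKdef
  have hKpos : 0 < K := by positivity
  set C2 : ℝ := 4 * b / s with hC2
  have hC2pos : 0 < C2 := by positivity
  set ee : ℝ := p * (θ - θ') with hedef
  have hepos : 0 < ee := mul_pos hppos (by linarith)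
  have haθ' : (0:ℝ) < a ^ θ' := Real.rpow_pos_of_pos hapos _
  set B : ℝ := μd * a ^ θ' / C2 with hB
  have hBpos : 0 < B := by positivity
  set δ₁ : ℝ := min (δ₀/2) (min (ε₀/K) (min (ε/K)
      (min ((ε₀/b) ^ p⁻¹) (min ((ν/b) ^ p⁻¹) (B ^ ee⁻¹))))) with hδ₁
  have hδ₁pos : 0 < δ₁ := by
    have h1 : (0:ℝ) < (ε₀/b) ^ p⁻¹ := Real.rpow_pos_of_pos (by positivity) _
    have h2 : (0:ℝ) < (ν/b) ^ p⁻¹ := Real.rpow_pos_of_pos (by positivity) _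
    have h3 : (0:ℝ) < B ^ ee⁻¹ := Real.rpow_pos_of_pos hBpos _
    refine lt_min (by linarith) (lt_min (by positivity) (lt_min (by positivity)
      (lt_min h1 (lt_min h2 h3))))
  have hA1 : δ₁ ≤ δ₀/2 := min_le_left _ _
  have hA2 : δ₁ ≤ ε₀/K := (min_le_right _ _).trans (min_le_left _ _)
  have hA3 : δ₁ ≤ ε/K := (min_le_right _ _).trans ((min_le_right _ _).trans (min_le_left _ _))
  have hA4 : δ₁ ≤ (ε₀/b) ^ p⁻¹ := (min_le_right _ _).trans ((min_le_right _ _).trans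
    ((min_le_right _ _).trans (min_le_left _ _)))
  have hA5 : δ₁ ≤ (ν/b) ^ p⁻¹ := (min_le_right _ _).trans ((min_le_right _ _).trans
    ((min_le_right _ _).trans ((min_le_right _ _).trans (min_le_left _ _))))
  have hA6 : δ₁ ≤ B ^ ee⁻¹ := (min_le_right _ _).trans ((min_le_right _ _).trans
    ((min_le_right _ _).trans ((min_le_right _ _).trans (min_le_right _ _))))
  -- pick the point (τ, w')
  have hset : Set.Ioo (0:ℝ) δ₁ ×ˢ Metric.ball w δ₁ ∈ F := by
    apply Filter.prod_mem_prod
    · exact Ioo_mem_nhdsGT_of_mem ⟨le_rfl, hδ₁pos⟩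
    · exact Metric.ball_mem_nhds _ hδ₁pos
  obtain ⟨⟨τ, w'⟩, hup, hmem⟩ :=
    (hfr.and_eventually (Filter.eventually_of_mem hset (fun _ hx => hx))).exists
  rw [Set.mem_prod] at hmem
  obtain ⟨hmem1, hmem2⟩ := hmem
  dsimp only at hup hmem1 hmem2
  obtain ⟨hτ, hτδ₁⟩ := hmem1
  rw [Metric.mem_ball, dist_eq_norm] at hmem2
  -- smallness consequences
  have hτppos : (0:ℝ) < τ ^ p := Real.rpow_pos_of_pos hτ _
  have hpowinv : ∀ (Kc q : ℝ), 0 < Kc → 0 < q → τ < Kc ^ q⁻¹ → τ ^ q < Kc := by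
    intro Kc q hKc hq hlt
    have hmono := Real.rpow_lt_rpow hτ.le hlt hq
    have heq : (Kc ^ q⁻¹) ^ q = Kc := by
      rw [← Real.rpow_mul hKc.le, inv_mul_cancel₀ hq.ne', Real.rpow_one]
    rwa [heq] at hmono
  have hτδ₀ : τ < δ₀ := by have := lt_of_lt_of_le hτδ₁ hA1; linarith
  have hτKε₀ : τ * K < ε₀ := (lt_div_iff₀ hKpos).mp (lt_of_lt_of_le hτδ₁ hA2)
  have hτKε : τ * K < ε := (lt_div_iff₀ hKpos).mp (lt_of_lt_of_le hτδ₁ hA3)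
  have hbτε₀ : b * τ ^ p < ε₀ := by
    have := hpowinv _ _ (by positivity) hppos (lt_of_lt_of_le hτδ₁ hA4)
    rw [lt_div_iff₀ hbpos] at this; linarith
  have hbτν : b * τ ^ p < ν := by
    have := hpowinv _ _ (by positivity) hppos (lt_of_lt_of_le hτδ₁ hA5)
    rw [lt_div_iff₀ hbpos] at this; linarith
  have hτee : τ ^ ee < B := hpowinv _ _ hBpos hepos (lt_of_lt_of_le hτδ₁ hA6)
  -- the point y and its value
  set y : En n := xb + τ • w' with hydef
  have hdpos : (0:ℝ) < (1 - θ) * τ ^ p := mul_pos h1θ hτppos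
  have hinvpos : (0:ℝ) < ((1 - θ) * τ ^ p)⁻¹ := inv_pos.mpr hdpos
  have hyne : f y ≠ ⊤ := by
    intro htop
    rw [htop, hfc, EReal.top_sub_coe, EReal.coe_mul_top_of_pos hinvpos] at hup
    exact not_top_lt hup
  set yf : ℝ := (f y).toReal with hyfdef
  have hfy : f y = (yf : EReal) := (EReal.coe_toReal hyne (hbot y)).symm
  have hyup : yf < c + b * τ ^ p := by
    rw [hfy, hfc, ← EReal.coe_sub, ← EReal.coe_mul, EReal.coe_lt_coe_iff] at hup
    rw [inv_mul_eq_div, div_lt_iff₀ hdpos] at hup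
    have hup' : yf - c < b * τ ^ p := by
      calc yf - c < (l + 1) * ((1 - θ) * τ ^ p) := hup
        _ = b * τ ^ p := by rw [hbdef]; ring
    linarith
  have hyfε₀ : yf ≤ c + ε₀ := by linarith
  -- every point of the ball around y lies in the "tube"
  have hτK : ∀ u ∈ Metric.closedBall y (s*τ), ‖u - xb‖ ≤ τ * K := by
    intro u hu
    rw [Metric.mem_closedBall, dist_eq_norm] at hu
    have hw'n : ‖w'‖ ≤ ‖w‖ + δ₀ := by
      have e1 : w' = w + (w' - w) := by abel
      calc ‖w'‖ = ‖w + (w' - w)‖ := by rw [← e1]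
        _ ≤ ‖w‖ + ‖w' - w‖ := norm_add_le _ _
        _ ≤ ‖w‖ + δ₀ := by have : ‖w' - w‖ < δ₁ := hmem2; linarith [hA1.trans (by linarith : δ₀/2 ≤ δ₀)]
    have h2 : ‖y - xb‖ = τ * ‖w'‖ := by
      have : y - xb = τ • w' := by rw [hydef]; abel
      rw [this, norm_smul, Real.norm_eq_abs, abs_of_pos hτ]
    have h3 : u - xb = (u - y) + (y - xb) := by abel
    calc ‖u - xb‖ = ‖(u - y) + (y - xb)‖ := by rw [← h3]
      _ ≤ ‖u - y‖ + ‖y - xb‖ := norm_add_le _ _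
      _ ≤ s*τ + τ*‖w'‖ := by rw [h2]; linarith
      _ ≤ τ * K := by
          have h4 : τ*‖w'‖ ≤ τ*(‖w‖+δ₀) := mul_le_mul_of_nonneg_left hw'n hτ.le
          have h5 : τ*K = s*τ + τ*(‖w‖+δ₀) := by rw [hKdef]; ring
          linarith [h4, h5]
  have htube : ∀ u ∈ Metric.closedBall y (s*τ), ((c + a * τ ^ p : ℝ) : EReal) < f u := by
    intro u hu
    rw [Metric.mem_closedBall, dist_eq_norm] at hu
    set w2 : En n := τ⁻¹ • (u - xb) with hw2
    have hxw2 : xb + τ • w2 = u := by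
      rw [hw2, smul_inv_smul₀ hτ.ne']; abel
    have e1 : u - xb = (u - y) + τ • w' := by rw [hydef]; abel
    have hdiff : w2 - w = τ⁻¹ • (u - y) + (w' - w) := by
      rw [hw2, e1, smul_add, smul_smul, inv_mul_cancel₀ hτ.ne', one_smul]; abel
    have hnorm : ‖w2 - w‖ < δ₀ := by
      have hb1 : ‖τ⁻¹ • (u - y) + (w' - w)‖ ≤ ‖τ⁻¹ • (u - y)‖ + ‖w' - w‖ := norm_add_le _ _
      have hb2 : ‖τ⁻¹ • (u - y)‖ = τ⁻¹ * ‖u - y‖ := by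
        rw [norm_smul, Real.norm_eq_abs, abs_of_pos (inv_pos.mpr hτ)]
      have hb3 : τ⁻¹ * ‖u - y‖ ≤ τ⁻¹ * (s * τ) :=
        mul_le_mul_of_nonneg_left hu (inv_pos.mpr hτ).le
      have hb4 : τ⁻¹ * (s * τ) = s := by field_simp
      have hb5 : ‖w' - w‖ < δ₀/2 := lt_of_lt_of_le hmem2 hA1
      rw [hdiff]
      calc ‖τ⁻¹ • (u - y) + (w' - w)‖ ≤ ‖τ⁻¹ • (u - y)‖ + ‖w' - w‖ := hb1
        _ = τ⁻¹ * ‖u - y‖ + ‖w' - w‖ := by rw [hb2]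
        _ < s + δ₀/2 := by linarith [hb3, hb4, hb5]
        _ ≤ δ₀ := by linarith
    have := hlow τ w2 hτ hτδ₀ hnorm
    rwa [hxw2] at this
  have hylow : c + a * τ ^ p < yf := by
    have hy' := htube y (Metric.mem_closedBall_self (by positivity))
    rw [hfy, EReal.coe_lt_coe_iff] at hy'
    exact hy'
  -- penalized minimization on T
  set lam : ℝ := 2 * b * τ ^ p / (s^2 * τ^2) with hlam
  have hlampos : 0 < lam :=
    div_pos (mul_pos (mul_pos two_pos hbpos) hτppos) (mul_pos (pow_pos hspos 2) (pow_pos hτ 2))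
  set T : Set (En n) := {u : En n | ‖u - xb‖ ≤ ε₀ ∧ f u ≤ ((yf : ℝ) : EReal)} ∩
      Metric.closedBall y (s*τ) with hT
  have hymem : y ∈ Metric.closedBall y (s*τ) := Metric.mem_closedBall_self (by positivity)
  have hyT : y ∈ T := by
    refine ⟨⟨(hτK y hymem).trans hτKε₀.le, ?_⟩, hymem⟩
    rw [hfy]
  have hcond : ∀ γ : ℝ, γ ≤ yf → ((γ : ℝ) : EReal) ≤ f xb + (ε₀ : ℝ) := by
    intro γ hγ
    rw [hfc, ← EReal.coe_add, EReal.coe_le_coe_iff]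
    linarith
  have hTclosed : IsClosed T :=
    (hclosed yf (hcond yf le_rfl)).inter Metric.isClosed_closedBall
  have hTcompact : IsCompact T :=
    (isCompact_closedBall y (s*τ)).of_isClosed_subset hTclosed Set.inter_subset_right
  have hsubclosed : ∀ β : ℝ, IsClosed {u | u ∈ T ∧ (f u).toReal ≤ β} := by
    intro β
    have hset2 : {u | u ∈ T ∧ (f u).toReal ≤ β} =
        {u : En n | ‖u - xb‖ ≤ ε₀ ∧ f u ≤ ((min β yf : ℝ) : EReal)} ∩
          Metric.closedBall y (s*τ) := by
      ext u
      constructor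
      · rintro ⟨⟨⟨h1, h2⟩, h3⟩, h4⟩
        have hne : f u ≠ ⊤ := ne_top_of_le_ne_top (EReal.coe_ne_top _) h2
        obtain ⟨t, ht⟩ : ∃ t : ℝ, f u = (t : EReal) :=
          ⟨(f u).toReal, (EReal.coe_toReal hne (hbot u)).symm⟩
        rw [ht, EReal.toReal_coe] at h4
        rw [ht, EReal.coe_le_coe_iff] at h2
        refine ⟨⟨h1, ?_⟩, h3⟩
        rw [ht, EReal.coe_le_coe_iff]
        exact le_min h4 h2
      · rintro ⟨⟨h1, h2⟩, h3⟩
        have hne : f u ≠ ⊤ := ne_top_of_le_ne_top (EReal.coe_ne_top _) h2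
        obtain ⟨t, ht⟩ : ∃ t : ℝ, f u = (t : EReal) :=
          ⟨(f u).toReal, (EReal.coe_toReal hne (hbot u)).symm⟩
        rw [ht, EReal.coe_le_coe_iff] at h2
        refine ⟨⟨⟨h1, ?_⟩, h3⟩, ?_⟩
        · rw [ht, EReal.coe_le_coe_iff]; exact h2.trans (min_le_right _ _)
        · rw [ht, EReal.toReal_coe]; exact h2.trans (min_le_left _ _)
    rw [hset2]
    exact (hclosed (min β yf) (hcond _ (min_le_right _ _))).inter Metric.isClosed_closedBall
  have hqcont : Continuous (fun u : En n => lam * ‖u - y‖^2) :=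
    continuous_const.mul (((continuous_id.sub continuous_const).norm).pow 2)
  obtain ⟨z, hzT, hzmin⟩ := exists_min_of_closed_sublevels T hTcompact ⟨y, hyT⟩
    (fun u => (f u).toReal + lam * ‖u - y‖^2)
    (fun β => isClosed_sublevel_add T hTclosed _ _ hqcont hsubclosed β)
  -- properties of the minimizer z
  have hzball : z ∈ Metric.closedBall y (s*τ) := hzT.2
  have hzfe : f z ≤ ((yf : ℝ) : EReal) := hzT.1.2
  have hzne : f z ≠ ⊤ := ne_top_of_le_ne_top (EReal.coe_ne_top _) hzfe
  set zf : ℝ := (f z).toReal with hzfdef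
  have hfz : f z = (zf : EReal) := (EReal.coe_toReal hzne (hbot z)).symm
  have hzlow : c + a * τ ^ p < zf := by
    have := htube z hzball
    rw [hfz, EReal.coe_lt_coe_iff] at this
    exact this
  have hφzy : zf + lam * ‖z - y‖^2 ≤ yf := by
    have h0 := hzmin y hyT
    simp only [sub_self, norm_zero] at h0
    rw [hfy, EReal.toReal_coe] at h0
    have : (0:ℝ)^2 = 0 := by norm_num
    rw [this, mul_zero, add_zero] at h0
    exact h0
  have hzy2 : ‖z - y‖^2 < (s*τ)^2 := by
    have h1 : lam * ‖z - y‖^2 ≤ b * τ ^ p := by linarith [mul_pos hapos hτppos]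
    have h2 : lam * (s^2*τ^2) = 2*(b*τ^p) := by
      rw [hlam]; field_simp
    have hsτpos : (0:ℝ) < s^2*τ^2 := mul_pos (pow_pos hspos 2) (pow_pos hτ 2)
    have h3 := mul_le_mul_of_nonneg_right h1 hsτpos.le
    have hbP : (0:ℝ) < b * τ^p := mul_pos hbpos hτppos
    have h4 : 2*(b*τ^p)*(‖z - y‖^2) ≤ (b*τ^p)*(s^2*τ^2) := by
      calc 2*(b*τ^p)*(‖z - y‖^2) = lam * (s^2*τ^2) * ‖z - y‖^2 := by rw [h2]
        _ = lam * ‖z - y‖^2 * (s^2*τ^2) := by ring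
        _ ≤ (b*τ^p)*(s^2*τ^2) := h3
    have h5 : (b*τ^p) * (2*(‖z - y‖^2)) ≤ (b*τ^p)*(s^2*τ^2) := by linarith [h4]
    have h6 : 2*(‖z - y‖^2) ≤ s^2*τ^2 := le_of_mul_le_mul_left h5 hbP
    have h7 : (s*τ)^2 = s^2*τ^2 := by ring
    linarith [h6, h7, hsτpos]
  have hzyr : ‖z - y‖ < s*τ := lt_of_pow_lt_pow_left₀ 2 (by positivity) hzy2
  -- the candidate subgradient
  set v : En n := (2*lam) • (y - z) with hv
  have hvnorm : ‖v‖ ≤ C2 * τ^(p-1) := by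
    have h1 : ‖v‖ = 2*lam*‖y - z‖ := by
      rw [hv, norm_smul, Real.norm_eq_abs, abs_of_pos (by positivity)]
    have h2 : ‖y - z‖ ≤ s*τ := by rw [norm_sub_rev]; exact hzyr.le
    have h3 : 2*lam*(s*τ) = C2 * τ^(p-1) := by
      rw [hlam, hC2, Real.rpow_sub_one hτ.ne' p]
      field_simp
      all_goals ring
    calc ‖v‖ = 2*lam*‖y - z‖ := h1
      _ ≤ 2*lam*(s*τ) := mul_le_mul_of_nonneg_left h2 (by positivity)
      _ = C2 * τ^(p-1) := h3
  have hid : ∀ u : En n, (inner ℝ v (u - z) : ℝ) - lam * ‖u - z‖^2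
      = lam * (‖z - y‖^2 - ‖u - y‖^2) := by
    intro u
    have expand : ‖u - y‖^2 = ‖u - z‖^2 - 2*(inner ℝ (u - z) (y - z) : ℝ) + ‖y - z‖^2 := by
      have e1 : u - y = (u - z) - (y - z) := by abel
      rw [e1, norm_sub_sq_real]
    have einner : (inner ℝ v (u - z) : ℝ) = 2*lam*(inner ℝ (u - z) (y - z) : ℝ) := by
      rw [hv, real_inner_smul_left, real_inner_comm]
    have hnz : ‖z - y‖ = ‖y - z‖ := norm_sub_rev _ _
    rw [einner, hnz, expand]
    ring
  -- minimality over the whole closed ball, in EReal form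
  have hKmin : ∀ u ∈ Metric.closedBall y (s*τ),
      ((zf + ((inner ℝ v (u - z) : ℝ) - lam * ‖u - z‖^2) : ℝ) : EReal) ≤ f u := by
    intro u hu
    by_cases hcase : f u ≤ ((yf : ℝ) : EReal)
    · have huT : u ∈ T := ⟨⟨(hτK u hu).trans hτKε₀.le, hcase⟩, hu⟩
      have hne : f u ≠ ⊤ := ne_top_of_le_ne_top (EReal.coe_ne_top _) hcase
      have hfu : f u = (((f u).toReal : ℝ) : EReal) := (EReal.coe_toReal hne (hbot u)).symm
      rw [hfu, EReal.coe_le_coe_iff]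
      have hmin2 := hzmin u huT
      rw [hid u]
      linarith [hmin2]
    · push_neg at hcase
      refine le_trans ?_ hcase.le
      rw [EReal.coe_le_coe_iff, hid u]
      linarith [hφzy, mul_nonneg hlampos.le (pow_nonneg (norm_nonneg (u - y)) 2)]
  -- v is a regular subgradient at z
  have hreg : v ∈ RegSubgrad f z := by
    intro ε' hε'
    refine ⟨min (ε'/lam) (s*τ - ‖z - y‖), lt_min (by positivity) (by linarith), ?_⟩
    intro u hu _hune
    have huball : u ∈ Metric.closedBall y (s*τ) := by
      rw [Metric.mem_closedBall, dist_eq_norm]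
      have e3 : u - y = (u - z) + (z - y) := by abel
      have h4 : ‖u - y‖ ≤ ‖u - z‖ + ‖z - y‖ := by rw [e3]; exact norm_add_le _ _
      have h5 : ‖u - z‖ < s*τ - ‖z - y‖ := lt_of_lt_of_le hu (min_le_right _ _)
      linarith
    refine le_trans ?_ (hKmin u huball)
    rw [hfz, ← EReal.coe_add, EReal.coe_le_coe_iff]
    have h6 : ‖u - z‖ < ε'/lam := lt_of_lt_of_le hu (min_le_left _ _)
    have h6' : ‖u - z‖ * lam ≤ ε' := ((lt_div_iff₀ hlampos).mp h6).le
    have h7' := mul_le_mul_of_nonneg_right h6' (norm_nonneg (u - z))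
    have h7 : lam * ‖u - z‖^2 ≤ ε' * ‖u - z‖ := by
      calc lam * ‖u - z‖^2 = ‖u - z‖ * lam * ‖u - z‖ := by ring
        _ ≤ ε' * ‖u - z‖ := h7'
    linarith
  have hlimv : v ∈ LimSubgrad f z :=
    ⟨fun _ => z, fun _ => v, tendsto_const_nhds, tendsto_const_nhds, tendsto_const_nhds,
      fun _ => hreg⟩
  have hdz : DistZero (LimSubgrad f z) ≤ ENNReal.ofReal ‖v‖ := by
    refine le_trans (EMetric.infEdist_le_edist_of_mem hlimv) ?_
    rw [edist_dist, dist_zero_left]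
  -- apply the KŁ inequality at z
  have hzxb : ‖z - xb‖ ≤ ε := (hτK z hzball).trans hτKε.le
  have hzν : f z < ((c : ℝ) : EReal) + ((ν : ℝ) : EReal) := by
    rw [hfz, ← EReal.coe_add, EReal.coe_lt_coe_iff]
    linarith [hφzy, mul_nonneg hlampos.le (pow_nonneg (norm_nonneg (z - y)) 2)]
  have hzgap : max (f z - ((c : ℝ) : EReal)).toReal 0 = zf - c := by
    rw [hfz, ← EReal.coe_sub, EReal.toReal_coe]
    exact max_eq_left (by linarith [hzlow, mul_pos hapos hτppos])
  have hKLz := hKL z hzxb hzν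
  rw [hzgap] at hKLz
  have hchain := le_trans hKLz hdz
  have hreal : μd * (zf - c) ^ θ' ≤ ‖v‖ :=
    (ENNReal.ofReal_le_ofReal_iff (norm_nonneg v)).mp hchain
  -- final numeric contradiction
  have hgap1 : (0:ℝ) ≤ a * τ^p := (mul_pos hapos hτppos).le
  have hrpow1 : (a*τ^p)^θ' ≤ (zf - c)^θ' :=
    Real.rpow_le_rpow hgap1 (by linarith) hθ'0
  have h5 : μd * (a*τ^p)^θ' ≤ C2 * τ^(p-1) := by
    have := mul_le_mul_of_nonneg_left hrpow1 hμdpos.le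
    linarith [hreal, hvnorm]
  have hsplit : (a*τ^p)^θ' = a^θ' * τ^(p*θ') := by
    rw [Real.mul_rpow hapos.le hτppos.le, ← Real.rpow_mul hτ.le]
  have hexp : p - 1 = p*θ' + ee := by
    have h8 : p - p*θ = 1 := by linear_combination hpθ
    rw [hedef]; linarith [h8, (by ring : p*θ' + p*(θ-θ') = p*θ)]
  have hfin2 : μd * a^θ' ≤ C2 * τ^ee := by
    have hτpθ'pos : (0:ℝ) < τ^(p*θ') := Real.rpow_pos_of_pos hτ _
    have h9 : τ^(p-1) = τ^(p*θ') * τ^ee := by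
      rw [hexp, Real.rpow_add hτ]
    rw [hsplit, h9] at h5
    have h10 : (μd * a^θ') * τ^(p*θ') ≤ (C2 * τ^ee) * τ^(p*θ') := by linarith [h5]
    exact le_of_mul_le_mul_right h10 hτpθ'pos
  have hfin3 : C2 * τ^ee < μd * a^θ' := by
    have h11 := hτee
    rw [hB, lt_div_iff₀ hC2pos] at h11
    linarith [h11]
  linarith
end
end

section
/- Let f : ℝⁿ → ℝ ∪ {+∞} be finite and locally lower semicontinuous at x̄, let θ ∈ [0,1), let h(w) := liminf_{τ↓0, w'→w}(f(x̄+τw') − f(x̄))/((1−θ)τ^{1/(1−θ)}), and let W := {w : 0 < h(w) < +∞}. If f satisfies the KŁ property at x̄ with exponent θ and modulus μ > 0, then d(0, ∂[(1−θ)h](w)) ≥ (μ/(1−θ))·((1−θ)h(w))^θ for every w ∈ W. -/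
open Filter Topology
open scoped ENNReal NNReal Pointwise

noncomputable section

namespace KLAux

open Filter Topology

lemma coe_le_add (x : EReal) (s t : ℝ) : (s:EReal) ≤ x + (t:ℝ) ↔ ((s - t : ℝ):EReal) ≤ x := by
  induction x using EReal.rec with
  | bot => simp [EReal.bot_add, ← EReal.coe_sub]
  | coe y =>
      rw [← EReal.coe_add, EReal.coe_le_coe_iff, EReal.coe_le_coe_iff]
      constructor <;> intro <;> linarith
  | top => simp [EReal.top_add_coe]

lemma add_le_coe (x : EReal) (s t : ℝ) : x + (t:ℝ) ≤ (s:EReal) ↔ x ≤ ((s - t:ℝ):EReal) := by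
  induction x using EReal.rec with
  | bot => simp [EReal.bot_add]
  | coe y =>
      rw [← EReal.coe_add, EReal.coe_le_coe_iff, EReal.coe_le_coe_iff]
      constructor <;> intro <;> linarith
  | top => simp [EReal.top_add_coe, ← EReal.coe_sub]

lemma coe_lt_add (x : EReal) (s t : ℝ) : (s:EReal) < x + (t:ℝ) ↔ ((s - t : ℝ):EReal) < x := by
  rw [lt_iff_not_ge, lt_iff_not_ge, add_le_coe]

lemma add_lt_coe (x : EReal) (s t : ℝ) : x + (t:ℝ) < (s:EReal) ↔ x < ((s - t:ℝ):EReal) := by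
  rw [lt_iff_not_ge, lt_iff_not_ge, coe_le_add]

lemma mul_add_real (r : ℝ) (hr : 0 < r) (a : EReal) (t : ℝ) :
    (r:EReal) * (a + (t:ℝ)) = (r:EReal)*a + ((r*t:ℝ):EReal) := by
  induction a using EReal.rec with
  | bot => rw [EReal.bot_add, EReal.coe_mul_bot_of_pos hr, EReal.bot_add]
  | coe y => rw [← EReal.coe_add, ← EReal.coe_mul, ← EReal.coe_mul, ← EReal.coe_add]; ring_nf
  | top => rw [EReal.top_add_coe, EReal.coe_mul_top_of_pos hr, EReal.top_add_coe]

lemma mul_le_mul_left (r : ℝ) (hr : 0 < r) (a b : EReal) :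
    (r:EReal) * a ≤ (r:EReal) * b ↔ a ≤ b := by
  induction a using EReal.rec with
  | bot => simp [EReal.coe_mul_bot_of_pos hr]
  | coe x =>
    induction b using EReal.rec with
    | bot => simp [EReal.coe_mul_bot_of_pos hr, ← EReal.coe_mul]
    | coe y =>
        rw [← EReal.coe_mul, ← EReal.coe_mul, EReal.coe_le_coe_iff, EReal.coe_le_coe_iff]
        exact ⟨fun h => le_of_mul_le_mul_left h hr, fun h => by nlinarith⟩
    | top => simp [EReal.coe_mul_top_of_pos hr, ← EReal.coe_mul]
  | top =>
    induction b using EReal.rec with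
    | bot => simp [EReal.coe_mul_bot_of_pos hr, EReal.coe_mul_top_of_pos hr]
    | coe y => simp [EReal.coe_mul_top_of_pos hr, ← EReal.coe_mul]
    | top => simp

lemma le_inv_mul (K : ℝ) (hK : 0 < K) (x : EReal) (c t : ℝ) :
    (t:EReal) ≤ ((K⁻¹:ℝ):EReal) * (x - (c:ℝ)) ↔ ((c + K*t : ℝ):EReal) ≤ x := by
  induction x using EReal.rec with
  | bot =>
      rw [EReal.bot_sub, EReal.coe_mul_bot_of_pos (by positivity)]
      simp [← EReal.coe_mul, ← EReal.coe_add]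
  | coe y =>
      rw [← EReal.coe_sub, ← EReal.coe_mul, EReal.coe_le_coe_iff, EReal.coe_le_coe_iff]
      rw [show K⁻¹ * (y - c) = (y - c)/K by ring, le_div_iff₀ hK]
      constructor <;> intro <;> linarith
  | top =>
      rw [EReal.top_sub_coe, EReal.coe_mul_top_of_pos (by positivity)]
      simp

lemma inv_mul_le (K : ℝ) (hK : 0 < K) (x : EReal) (c t : ℝ) :
    ((K⁻¹:ℝ):EReal) * (x - (c:ℝ)) ≤ (t:EReal) ↔ x ≤ ((c + K*t : ℝ):EReal) := by
  induction x using EReal.rec with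
  | bot =>
      rw [EReal.bot_sub, EReal.coe_mul_bot_of_pos (by positivity)]
      simp
  | coe y =>
      rw [← EReal.coe_sub, ← EReal.coe_mul, EReal.coe_le_coe_iff, EReal.coe_le_coe_iff]
      rw [show K⁻¹ * (y - c) = (y - c)/K by ring, div_le_iff₀ hK]
      constructor <;> intro <;> linarith
  | top =>
      rw [EReal.top_sub_coe, EReal.coe_mul_top_of_pos (by positivity)]
      simp [← EReal.coe_mul, ← EReal.coe_add]

lemma eq_coe_toReal_of_bounds {x : EReal} {s t : ℝ} (h1 : (s:EReal) ≤ x) (h2 : x ≤ (t:EReal)) :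
    x = ((x.toReal : ℝ) : EReal) := by
  have hb : x ≠ ⊥ := by rintro rfl; simp at h1
  exact (EReal.coe_toReal (ne_top_of_le_ne_top (EReal.coe_ne_top t) h2) hb).symm

lemma regSubgrad_subset_limSubgrad {n : ℕ} (f : En n → EReal) (x : En n) :
    RegSubgrad f x ⊆ LimSubgrad f x := by
  intro v hv
  exact ⟨fun _ => x, fun _ => v, tendsto_const_nhds, tendsto_const_nhds,
    tendsto_const_nhds, fun _ => hv⟩

lemma regSubgrad_of_min {n : ℕ} (F : En n → EReal) (ub w wc s : En n) (σ ρ a : ℝ)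
    (hσ : 0 < σ) (hρ : 0 < ρ) (hFa : F ub = ((a:ℝ):EReal))
    (hmin : ∀ u : En n, ‖u - ub‖ < ρ →
      F ub + ((- (inner ℝ s (ub - w) : ℝ) + σ * ‖ub - wc‖^2 : ℝ):EReal) ≤
        F u + ((- (inner ℝ s (u - w) : ℝ) + σ * ‖u - wc‖^2 : ℝ):EReal)) :
    (s - (2*σ) • (ub - wc)) ∈ RegSubgrad F ub := by
  intro ε hε
  refine ⟨min ρ (ε/σ), lt_min hρ (by positivity), fun u hu _ => ?_⟩
  have hu1 : ‖u - ub‖ < ρ := lt_of_lt_of_le hu (min_le_left _ _)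
  have hu2 : ‖u - ub‖ ≤ ε/σ := le_of_lt (lt_of_lt_of_le hu (min_le_right _ _))
  have h1 := hmin u hu1
  rw [hFa, ← EReal.coe_add] at h1 ⊢
  rw [coe_le_add] at h1
  refine le_trans (EReal.coe_le_coe_iff.2 ?_) h1
  have hexp : ‖u - wc‖^2 = ‖u - ub‖^2 + 2 * (inner ℝ (u - ub) (ub - wc) : ℝ) + ‖ub - wc‖^2 := by
    have huw : u - wc = (u - ub) + (ub - wc) := by abel
    rw [huw, norm_add_sq_real]
  have hsub : (inner ℝ s (u - w) : ℝ) - (inner ℝ s (ub - w) : ℝ) = (inner ℝ s (u - ub) : ℝ) := by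
    rw [← inner_sub_right]
    congr 1
    abel
  have hip : (inner ℝ (s - (2*σ) • (ub - wc)) (u - ub) : ℝ)
      = (inner ℝ s (u - ub) : ℝ) - 2*σ*(inner ℝ (ub - wc) (u - ub) : ℝ) := by
    rw [inner_sub_left, real_inner_smul_left]
  have hσn : σ * ‖u - ub‖^2 ≤ ε * ‖u - ub‖ := by
    have h0 : (0:ℝ) ≤ ‖u - ub‖ := norm_nonneg _
    calc σ * ‖u - ub‖^2 = (σ * ‖u - ub‖) * ‖u - ub‖ := by ring
    _ ≤ ε * ‖u - ub‖ := by
        apply mul_le_mul_of_nonneg_right _ h0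
        rw [← le_div_iff₀' hσ]; exact hu2
  have hcomm : (inner ℝ (ub - wc) (u - ub) : ℝ) = (inner ℝ (u - ub) (ub - wc) : ℝ) := real_inner_comm _ _
  rw [hip, hcomm]
  nlinarith [hexp, hsub]

lemma rescale_regSubgrad {n : ℕ} (f : En n → EReal) (xb ub s' : En n) (τ K c a : ℝ)
    (hτ : 0 < τ) (hK : 0 < K)
    (hs : s' ∈ RegSubgrad (fun u => ((K⁻¹:ℝ):EReal) * (f (xb + τ • u) - (c:ℝ))) ub)
    (ha : f (xb + τ • ub) = ((a:ℝ):EReal)) :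
    (K/τ) • s' ∈ RegSubgrad f (xb + τ • ub) := by
  intro ε hε
  obtain ⟨δΦ, hδΦ, hineq⟩ := hs (ε*τ/K) (by positivity)
  refine ⟨τ*δΦ, by positivity, fun z hz hne => ?_⟩
  set y := xb + τ • ub with hy
  set u := ub + τ⁻¹ • (z - y) with hudef
  have hzy : xb + τ • u = z := by
    rw [hudef, smul_add, smul_inv_smul₀ (ne_of_gt hτ)]
    rw [hy]; abel
  have huub : u - ub = τ⁻¹ • (z - y) := by rw [hudef]; abel
  have hnorm : ‖u - ub‖ = τ⁻¹ * ‖z - y‖ := by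
    rw [huub, norm_smul, Real.norm_eq_abs, abs_of_pos (by positivity)]
  have h1 : ‖u - ub‖ < δΦ := by
    rw [hnorm]
    rw [inv_mul_lt_iff₀ hτ]
    exact hz
  have h2 : u ≠ ub := by
    intro hc
    apply hne
    rw [← hzy, hc, hy]
  have h3 := hineq u h1 h2
  beta_reduce at h3
  rw [← hy, ha] at h3
  rw [hzy] at h3
  have hyc : ((K⁻¹:ℝ):EReal) * (((a:ℝ):EReal) - (c:ℝ)) = ((K⁻¹*(a-c):ℝ):EReal) := by
    rw [← EReal.coe_sub, ← EReal.coe_mul]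
  rw [hyc, ← EReal.coe_add, le_inv_mul K hK] at h3
  rw [ha, ← EReal.coe_add]
  refine le_trans (EReal.coe_le_coe_iff.2 ?_) h3
  have hipz : (inner ℝ ((K/τ) • s') (z - y) : ℝ) = (K/τ) * (inner ℝ s' (z - y) : ℝ) :=
    real_inner_smul_left _ _ _
  have hipu : (inner ℝ s' (u - ub) : ℝ) = τ⁻¹ * (inner ℝ s' (z - y) : ℝ) := by
    rw [huub, real_inner_smul_right]
  rw [hipz, hipu, hnorm]
  set I := (inner ℝ s' (z - y) : ℝ) with hI
  set N := ‖z - y‖ with hN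
  have heq : a + (K / τ * I - ε * N) = c + K * (K⁻¹ * (a - c) + (τ⁻¹ * I - ε * τ / K * (τ⁻¹ * N))) := by
    field_simp
    ring
  rw [heq]

lemma unscale_regSubgrad {n : ℕ} (F : En n → EReal) (x v : En n) (r : ℝ) (hr : 0 < r)
    (hv : v ∈ RegSubgrad (fun u => ((r:ℝ):EReal) * F u) x) :
    r⁻¹ • v ∈ RegSubgrad F x := by
  intro ε hε
  obtain ⟨δ, hδ, hineq⟩ := hv (r*ε) (by positivity)
  refine ⟨δ, hδ, fun u hu hne => ?_⟩
  have h1 := hineq u hu hne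
  have hip : (inner ℝ v (u - x) : ℝ) = r * (inner ℝ (r⁻¹ • v) (u - x) : ℝ) := by
    rw [real_inner_smul_left]; field_simp
  have hX : ((inner ℝ v (u - x) : ℝ) - r*ε*‖u - x‖ : ℝ)
      = r * ((inner ℝ (r⁻¹ • v) (u - x) : ℝ) - ε*‖u - x‖) := by rw [hip]; ring
  rw [hX] at h1
  rw [← mul_add_real r hr] at h1
  exact (mul_le_mul_left r hr _ _).1 h1

def Phi {n : ℕ} (f : En n → EReal) (xb : En n) (θ : ℝ) (τ : ℝ) (u : En n) : EReal :=
  ((((1 - θ) * τ ^ (1 / (1 - θ)))⁻¹ : ℝ) : EReal) * (f (xb + τ • u) - f xb)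

lemma thetaSubderiv_eq {n : ℕ} (f : En n → EReal) (xb : En n) (θ : ℝ) (w : En n) :
    ThetaSubderiv f xb θ w = Filter.liminf (fun p : ℝ × En n => Phi f xb θ p.1 p.2)
      ((nhdsWithin 0 (Set.Ioi 0)) ×ˢ (nhds w)) := rfl

lemma unif_lower {n : ℕ} (f : En n → EReal) (xb : En n) (θ : ℝ) (w s : En n)
    (H r ε' δ₂ : ℝ) (hr : 0 < r) (hδ₂ : 0 < δ₂)
    (hlow : ∀ u : En n, ‖u - w‖ ≤ r →
      ((H + (inner ℝ s (u - w) : ℝ) - ε' * ‖u - w‖ : ℝ) : EReal) ≤ ThetaSubderiv f xb θ u) :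
    ∃ τb : ℝ, 0 < τb ∧ ∀ τ : ℝ, 0 < τ → τ < τb → ∀ u : En n, ‖u - w‖ ≤ r →
      ((H + (inner ℝ s (u - w) : ℝ) - ε' * ‖u - w‖ - δ₂ : ℝ) : EReal) < Phi f xb θ τ u := by
  set R : En n → ℝ := fun u => H + (inner ℝ s (u - w) : ℝ) - ε' * ‖u - w‖ with hRdef
  have hRcont : Continuous R := by
    apply Continuous.sub
    · exact continuous_const.add (Continuous.inner continuous_const (continuous_id.sub continuous_const))
    · exact continuous_const.mul (continuous_id.sub continuous_const).norm
  have key : ∀ u : En n, ‖u - w‖ ≤ r → ∃ eu : ℝ, 0 < eu ∧ ∃ ρu : ℝ, 0 < ρu ∧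
      ∀ τ : ℝ, 0 < τ → τ < eu →
      ∀ u' : En n, ‖u' - u‖ < ρu → ((R u' - δ₂ : ℝ):EReal) < Phi f xb θ τ u' := by
    intro u hu
    have h1 : ((R u - δ₂/2 : ℝ):EReal) < ThetaSubderiv f xb θ u :=
      lt_of_lt_of_le (EReal.coe_lt_coe_iff.2 (by linarith)) (hlow u hu)
    rw [thetaSubderiv_eq] at h1
    have h2 := Filter.eventually_lt_of_lt_liminf h1
    rw [eventually_prod_iff] at h2
    obtain ⟨pa, hpa, pb, hpb, himp⟩ := h2
    obtain ⟨e, he, hsub⟩ := Metric.mem_nhdsWithin_iff.1 (eventually_iff.1 hpa)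
    have hRev : ∀ᶠ u' in nhds u, R u' < R u + δ₂/2 :=
      (hRcont.tendsto u).eventually (eventually_lt_nhds (by linarith))
    obtain ⟨ρu, hρu, hball⟩ := Metric.eventually_nhds_iff.1 (hpb.and hRev)
    refine ⟨e, he, ρu, hρu, fun τ hτ hτe u' hu' => ?_⟩
    have hpaτ : pa τ := hsub ⟨by simpa [Real.norm_eq_abs, abs_of_pos hτ] using hτe, hτ⟩
    have h3 := hball (by rwa [dist_eq_norm])
    exact lt_trans (EReal.coe_lt_coe_iff.2 (by linarith [h3.2])) (himp hpaτ h3.1)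
  choose! e he ρ hρ hkey using key
  have hcov : Metric.closedBall w r ⊆ ⋃ u ∈ Metric.closedBall w r, Metric.ball u (ρ u) := by
    intro u hu
    have hu' : ‖u - w‖ ≤ r := by rwa [Metric.mem_closedBall, dist_eq_norm] at hu
    exact Set.mem_biUnion hu (Metric.mem_ball_self (hρ u hu'))
  obtain ⟨b', hb'sub, hb'fin, hb'cov⟩ :=
    (isCompact_closedBall w r).elim_finite_subcover_image
      (fun u _ => Metric.isOpen_ball) hcov
  have hwmem : w ∈ Metric.closedBall w r := Metric.mem_closedBall_self (le_of_lt hr)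
  obtain ⟨u₀, hu₀, _⟩ := Set.mem_iUnion₂.1 (hb'cov hwmem)
  have hne : hb'fin.toFinset.Nonempty := ⟨u₀, hb'fin.mem_toFinset.2 hu₀⟩
  refine ⟨hb'fin.toFinset.inf' hne e, ?_, fun τ hτ hτb u hu => ?_⟩
  · rw [Finset.lt_inf'_iff]
    intro i hi
    exact he i (by
      have := hb'sub (hb'fin.mem_toFinset.1 hi)
      rwa [Metric.mem_closedBall, dist_eq_norm] at this)
  · have humem : u ∈ Metric.closedBall w r := by rwa [Metric.mem_closedBall, dist_eq_norm]
    obtain ⟨i, hi, hui⟩ := Set.mem_iUnion₂.1 (hb'cov humem)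
    have hiw : ‖i - w‖ ≤ r := by
      have := hb'sub hi
      rwa [Metric.mem_closedBall, dist_eq_norm] at this
    have hτi : τ < e i :=
      lt_of_lt_of_le hτb (Finset.inf'_le e (hb'fin.mem_toFinset.2 hi))
    exact hkey i hiw τ hτ hτi u (by rwa [Metric.mem_ball, dist_eq_norm] at hui)

lemma closed_sublevel {n : ℕ} (f : En n → EReal) (xb : En n) (c : ℝ) (hfc : f xb = ((c:ℝ):EReal))
    (ε₀ : ℝ)
    (hcl : ∀ α : ℝ, (α : EReal) ≤ f xb + (ε₀ : ℝ) →
      IsClosed {y : En n | ‖y - xb‖ ≤ ε₀ ∧ f y ≤ ((α:ℝ):EReal)})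
    (w : En n) (r τ : ℝ) (hτ : 0 < τ) (G : En n → ℝ) (hG : Continuous G)
    (hGlt : ∀ u : En n, ‖u - w‖ ≤ r → G u < c + ε₀)
    (hrad : ∀ u : En n, ‖u - w‖ ≤ r → ‖(xb + τ • u) - xb‖ ≤ ε₀) :
    IsClosed {u : En n | ‖u - w‖ ≤ r ∧ f (xb + τ • u) ≤ ((G u : ℝ) : EReal)} := by
  apply IsSeqClosed.isClosed
  intro uj u huj hlim
  have hunorm : ‖u - w‖ ≤ r := by
    have ht : Tendsto (fun j => ‖uj j - w‖) atTop (nhds ‖u - w‖) :=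
      ((hlim.sub tendsto_const_nhds).norm)
    exact le_of_tendsto ht (Filter.Eventually.of_forall fun j => (huj j).1)
  refine ⟨hunorm, ?_⟩
  by_contra hcon
  push_neg at hcon
  have hlt2 : ((G u : ℝ):EReal) < min (f (xb + τ • u)) (((c + ε₀ : ℝ):ℝ):EReal) :=
    lt_min hcon (EReal.coe_lt_coe_iff.2 (hGlt u hunorm))
  obtain ⟨α, hα1, hα2⟩ := EReal.exists_between_coe_real hlt2
  have hα2' : (α:EReal) < f (xb + τ • u) := lt_of_lt_of_le hα2 (min_le_left _ _)
  have hα3 : α < c + ε₀ := EReal.coe_lt_coe_iff.1 (lt_of_lt_of_le hα2 (min_le_right _ _))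
  have hαcond : (α : EReal) ≤ f xb + (ε₀:ℝ) := by
    rw [hfc, ← EReal.coe_add]
    exact EReal.coe_le_coe_iff.2 (le_of_lt hα3)
  have hC := hcl α hαcond
  have hGu : (G u:ℝ) < α := EReal.coe_lt_coe_iff.1 hα1
  have hev : ∀ᶠ j in atTop, (xb + τ • uj j) ∈ {y : En n | ‖y - xb‖ ≤ ε₀ ∧ f y ≤ ((α:ℝ):EReal)} := by
    have hGev : ∀ᶠ j in atTop, G (uj j) < α :=
      ((hG.tendsto u).comp hlim).eventually (eventually_lt_nhds hGu)
    filter_upwards [hGev] with j hj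
    exact ⟨hrad _ (huj j).1, le_trans (huj j).2 (EReal.coe_le_coe_iff.2 (le_of_lt hj))⟩
  have hy : Tendsto (fun j => xb + τ • uj j) atTop (nhds (xb + τ • u)) :=
    tendsto_const_nhds.add (hlim.const_smul τ)
  have hmem := hC.mem_of_tendsto hy hev
  exact absurd hmem.2 (not_le.2 hα2')

lemma exists_min {n : ℕ} (ψ : En n → EReal) (w : En n) (r : ℝ) (hr : 0 < r)
    (m : ℝ) (hm : ∀ u : En n, ‖u - w‖ ≤ r → ((m:ℝ):EReal) ≤ ψ u)
    (w' : En n) (hw' : ‖w' - w‖ ≤ r) (β : ℝ) (hβ : ψ w' = ((β:ℝ):EReal))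
    (hclosed : ∀ q : ℝ, q ≤ β → IsClosed {u : En n | ‖u - w‖ ≤ r ∧ ψ u ≤ ((q:ℝ):EReal)}) :
    ∃ ub : En n, ‖ub - w‖ ≤ r ∧ ψ ub ≤ ((β:ℝ):EReal) ∧ ∀ u : En n, ‖u - w‖ ≤ r → ψ ub ≤ ψ u := by
  set S : ℝ → Set (En n) := fun q => {u : En n | ‖u - w‖ ≤ r ∧ ψ u ≤ ((q:ℝ):EReal)} with hS
  have hmono : ∀ q1 q2 : ℝ, q1 ≤ q2 → S q1 ⊆ S q2 := by
    intro q1 q2 hq u hu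
    exact ⟨hu.1, le_trans hu.2 (EReal.coe_le_coe_iff.2 hq)⟩
  set ι := {q : ℝ // q ≤ β ∧ (S q).Nonempty} with hι
  have hιne : Nonempty ι := ⟨⟨β, le_refl β, ⟨w', hw', le_of_eq hβ⟩⟩⟩
  have hdir : Directed (fun x1 x2 : Set (En n) => x1 ⊇ x2) (fun i : ι => S i.val) := by
    intro i j
    rcases le_total i.val j.val with hle | hle
    · exact ⟨i, fun x hx => hx, hmono _ _ hle⟩
    · exact ⟨j, hmono _ _ hle, fun x hx => hx⟩
  have hclosed' : ∀ i : ι, IsClosed (S i.val) := fun i => hclosed i.val i.2.1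
  have hcpt : ∀ i : ι, IsCompact (S i.val) := by
    intro i
    apply IsCompact.of_isClosed_subset (isCompact_closedBall w r) (hclosed' i)
    intro u hu
    rw [Metric.mem_closedBall, dist_eq_norm]
    exact hu.1
  obtain ⟨ub, hub⟩ := IsCompact.nonempty_iInter_of_directed_nonempty_isCompact_isClosed
    (fun i : ι => S i.val) hdir (fun i => i.2.2) hcpt hclosed'
  have hubmem : ∀ i : ι, ub ∈ S i.val := fun i => Set.mem_iInter.1 hub i
  have hubβ := hubmem ⟨β, le_refl β, ⟨w', hw', le_of_eq hβ⟩⟩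
  refine ⟨ub, hubβ.1, hubβ.2, ?_⟩
  intro u hu
  by_contra hcon
  push_neg at hcon
  have h1 : ψ u < ((β:ℝ):EReal) := lt_of_lt_of_le hcon hubβ.2
  have h2 : ((m:ℝ):EReal) ≤ ψ u := hm u hu
  have h3 : ψ u = (((ψ u).toReal : ℝ):EReal) := eq_coe_toReal_of_bounds h2 (le_of_lt h1)
  set q := (ψ u).toReal with hq
  have hqβ : q ≤ β := by
    rw [h3] at h1
    exact le_of_lt (EReal.coe_lt_coe_iff.1 h1)
  have hi : ub ∈ S q := hubmem ⟨q, hqβ, ⟨u, hu, le_of_eq h3⟩⟩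
  have hle : ψ ub ≤ ψ u := le_trans hi.2 (le_of_eq h3.symm)
  exact absurd hcon (not_lt.2 hle)

set_option maxHeartbeats 2000000 in
lemma claim {n : ℕ} (f : En n → EReal) (hbot : ∀ x, f x ≠ ⊥)
    (xb : En n) (c : ℝ) (hfc : f xb = ((c:ℝ):EReal))
    (ε₀ : ℝ) (hε₀ : 0 < ε₀)
    (hcl : ∀ α : ℝ, (α : EReal) ≤ f xb + (ε₀ : ℝ) →
      IsClosed {y : En n | ‖y - xb‖ ≤ ε₀ ∧ f y ≤ ((α:ℝ):EReal)})
    (θ : ℝ) (hθ0 : 0 ≤ θ) (hθ1 : θ < 1) (μ : ℝ) (hμ : 0 < μ)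
    (εK : ℝ) (hεK : 0 < εK) (ν : ℝ) (hν : 0 < ν)
    (hKL : ∀ x : En n, ‖x - xb‖ ≤ εK → f x < ((c:ℝ):EReal) + ((ν:ℝ):EReal) →
        ENNReal.ofReal ((μ / (1 - θ)) * (max (f x - (c : ℝ)).toReal 0) ^ θ) ≤
          EMetric.infEdist 0 (LimSubgrad f x))
    (w : En n) (hw0 : (0:EReal) < ThetaSubderiv f xb θ w)
    (hwt : ThetaSubderiv f xb θ w < ⊤)
    (s : En n) (hs : s ∈ RegSubgrad (fun u => ThetaSubderiv f xb θ u) w) :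
    μ / (1-θ) * ((1-θ):ℝ)^θ / (1-θ) * ((ThetaSubderiv f xb θ w).toReal) ^ θ ≤ ‖s‖ := by
  have h1θ : 0 < 1 - θ := by linarith
  have hp1 : 1 ≤ 1/(1-θ) := by
    rw [le_div_iff₀ h1θ]; linarith
  have hτne : ThetaSubderiv f xb θ w ≠ ⊤ := ne_of_lt hwt
  have hτnb : ThetaSubderiv f xb θ w ≠ ⊥ := by
    intro hb; rw [hb] at hw0; exact absurd hw0 (by simp)
  set H : ℝ := (ThetaSubderiv f xb θ w).toReal with hHdef
  have hwcoe : ThetaSubderiv f xb θ w = ((H:ℝ):EReal) := (EReal.coe_toReal hτne hτnb).symm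
  have hHpos : 0 < H := by
    rw [hwcoe] at hw0
    exact_mod_cast hw0
  set D : ℝ := μ / (1-θ) * ((1-θ):ℝ)^θ / (1-θ) with hDdef
  have hDpos : 0 < D := by
    have h0 := Real.rpow_pos_of_pos h1θ θ
    exact div_pos (mul_pos (div_pos hμ h1θ) h0) h1θ
  show D * H ^ θ ≤ ‖s‖
  apply le_of_forall_pos_le_add
  intro e he
  have hcont : ContinuousAt (fun t : ℝ => D * t ^ θ) H :=
    continuousAt_const.mul (Real.continuousAt_rpow_const H θ (Or.inr hθ0))
  have hev := hcont.eventually (eventually_gt_nhds (show D*H^θ - e/2 < D*H^θ by linarith))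
  obtain ⟨η₀, hη₀pos, hη₀⟩ := Metric.eventually_nhds_iff.1 hev
  set η : ℝ := min (η₀/2) (H/2) with hηdef
  have hηpos : 0 < η := lt_min (by linarith) (by linarith)
  have hηH : η ≤ H/2 := min_le_right _ _
  have hηb : D * H ^ θ - e/2 < D * (H - η) ^ θ := by
    have hd : dist (H - η) H < η₀ := by
      rw [Real.dist_eq, abs_of_nonpos (by linarith : H - η - H ≤ 0)]
      have hmm : η ≤ η₀/2 := min_le_left _ _
      simp only [neg_sub]
      linarith
    exact hη₀ hd
  set ε' : ℝ := e / 48 with hε'def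
  have hε'pos : 0 < ε' := by positivity
  obtain ⟨δ, hδpos, hδ0⟩ := hs ε' hε'pos
  replace hδ0 : ∀ u : En n, ‖u - w‖ < δ → u ≠ w →
      ThetaSubderiv f xb θ w + (((inner ℝ s (u - w) : ℝ) - ε' * ‖u - w‖ : ℝ):EReal)
        ≤ ThetaSubderiv f xb θ u := hδ0
  set r : ℝ := min (δ/2) (η/(2*(‖s‖+ε'+1))) with hrdef
  have hrpos : 0 < r := lt_min (by linarith) (by positivity)
  have hrδ : r < δ := lt_of_le_of_lt (min_le_left _ _) (by linarith)
  have hrη : (‖s‖+ε') * r ≤ η/2 := by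
    have h1 : r ≤ η/(2*(‖s‖+ε'+1)) := min_le_right _ _
    have h3 : (‖s‖+ε') * r ≤ (‖s‖+ε'+1) * (η/(2*(‖s‖+ε'+1))) :=
      mul_le_mul (by linarith) h1 (le_of_lt hrpos) (by positivity)
    have h4 : (‖s‖+ε'+1) * (η/(2*(‖s‖+ε'+1))) = η/2 := by
      field_simp
    linarith
  have hlow : ∀ u : En n, ‖u - w‖ ≤ r →
      ((H + (inner ℝ s (u - w) : ℝ) - ε' * ‖u - w‖ : ℝ) : EReal) ≤ ThetaSubderiv f xb θ u := by
    intro u hu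
    by_cases hu0 : u = w
    · subst hu0
      rw [hwcoe]
      simp
    · have h5 := hδ0 u (lt_of_le_of_lt hu hrδ) hu0
      rw [hwcoe, ← EReal.coe_add] at h5
      have heq : (H + ((inner ℝ s (u - w) : ℝ) - ε' * ‖u - w‖) : ℝ)
          = (H + (inner ℝ s (u - w) : ℝ) - ε' * ‖u - w‖ : ℝ) := by ring
      rwa [heq] at h5
  set δ₂ : ℝ := min (η/8) (ε'*r/3) with hδ₂def
  have hδ₂pos : 0 < δ₂ := lt_min (by linarith) (by positivity)
  have hδ₂a : δ₂ ≤ η/8 := min_le_left _ _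
  have hδ₂b : δ₂ ≤ ε'*r/3 := min_le_right _ _
  obtain ⟨τb, hτbpos, hτb⟩ := unif_lower f xb θ w s H r ε' δ₂ hrpos hδ₂pos hlow
  set σ : ℝ := 48*ε'/r with hσdef
  have hσpos : 0 < σ := by positivity
  set ρ' : ℝ := min (r/4) (ε'*r/(‖s‖+1)) with hρ'def
  have hρ'pos : 0 < ρ' := lt_min (by positivity) (by positivity)
  have hρ'r4 : ρ' ≤ r/4 := min_le_left _ _
  have hρ's : ‖s‖ * ρ' ≤ ε'*r := by
    have h1 : ρ' ≤ ε'*r/(‖s‖+1) := min_le_right _ _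
    have h2 : ‖s‖ * ρ' ≤ (‖s‖+1) * (ε'*r/(‖s‖+1)) :=
      mul_le_mul (by linarith [norm_nonneg s]) h1 (le_of_lt hρ'pos) (by positivity)
    have heq : (‖s‖+1) * (ε'*r/(‖s‖+1)) = ε'*r := by
      field_simp
    linarith
  set M₀ : ℝ := H + δ₂ + ‖s‖*ρ' + ‖s‖*r + 1 with hM₀def
  have hM₀pos : 0 < M₀ := by
    have h1 := norm_nonneg s
    linarith only [hM₀def, hHpos, hδ₂pos, mul_nonneg h1 (le_of_lt hρ'pos),
      mul_nonneg h1 (le_of_lt hrpos)]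
  set τh : ℝ := min τb (min 1 (min (εK/(‖w‖+r+1)) (min (ε₀/(‖w‖+r+1)) (min (ν/M₀) (ε₀/M₀))))) with hτhdef
  have hwr1 : (0:ℝ) < ‖w‖+r+1 := by positivity
  have hτhpos : 0 < τh :=
    lt_min hτbpos (lt_min one_pos (lt_min (by positivity) (lt_min (by positivity)
      (lt_min (by positivity) (by positivity)))))
  have hliminf : Filter.liminf (fun p : ℝ × En n => Phi f xb θ p.1 p.2)
      ((nhdsWithin 0 (Set.Ioi 0)) ×ˢ (nhds w)) < ((H + δ₂:ℝ):EReal) := by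
    rw [← thetaSubderiv_eq, hwcoe]
    exact EReal.coe_lt_coe_iff.2 (by linarith)
  have hfreq := Filter.frequently_lt_of_liminf_lt (by isBoundedDefault) hliminf
  have hevent : ∀ᶠ q : ℝ × En n in (nhdsWithin 0 (Set.Ioi 0)) ×ˢ (nhds w),
      (0 < q.1 ∧ q.1 < τh) ∧ ‖q.2 - w‖ < ρ' := by
    refine Filter.Eventually.prod_mk (pa := fun τ : ℝ => 0 < τ ∧ τ < τh)
      (pb := fun u : En n => ‖u - w‖ < ρ') ?_ ?_
    · have h1 : ∀ᶠ τ : ℝ in nhdsWithin 0 (Set.Ioi 0), τ ∈ Set.Ioi (0:ℝ) :=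
        eventually_mem_nhdsWithin
      have h2 : ∀ᶠ τ : ℝ in nhds (0:ℝ), τ < τh := eventually_lt_nhds hτhpos
      filter_upwards [h1, h2.filter_mono nhdsWithin_le_nhds] with τ hτ1 hτ2
      exact ⟨hτ1, hτ2⟩
    · have h3 : ∀ᶠ u' : En n in nhds w, dist u' w < ρ' :=
        Metric.eventually_nhds_iff.2 ⟨ρ', hρ'pos, fun y hy => hy⟩
      filter_upwards [h3] with u' hu'
      rwa [dist_eq_norm] at hu'
  obtain ⟨q, hqlt, hqc⟩ := (hfreq.and_eventually hevent).exists
  obtain ⟨⟨hτpos, hττh⟩, hw'ρ⟩ := hqc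
  set τ : ℝ := q.1 with hτdef
  set w' : En n := q.2 with hw'def
  have hττb : τ < τb := lt_of_lt_of_le hττh (min_le_left _ _)
  have hτ1 : τ ≤ 1 :=
    le_of_lt (lt_of_lt_of_le hττh (le_trans (min_le_right _ _) (min_le_left _ _)))
  have hτεK : τ * (‖w‖+r+1) < εK := by
    have h1 : τ < εK/(‖w‖+r+1) := lt_of_lt_of_le hττh
      (le_trans (min_le_right _ _) (le_trans (min_le_right _ _) (min_le_left _ _)))
    rwa [lt_div_iff₀ hwr1] at h1
  have hτε₀ : τ * (‖w‖+r+1) < ε₀ := by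
    have h1 : τ < ε₀/(‖w‖+r+1) := lt_of_lt_of_le hττh
      (le_trans (min_le_right _ _) (le_trans (min_le_right _ _)
        (le_trans (min_le_right _ _) (min_le_left _ _))))
    rwa [lt_div_iff₀ hwr1] at h1
  have hτν : τ * M₀ < ν := by
    have h1 : τ < ν/M₀ := lt_of_lt_of_le hττh
      (le_trans (min_le_right _ _) (le_trans (min_le_right _ _)
        (le_trans (min_le_right _ _) (le_trans (min_le_right _ _) (min_le_left _ _)))))
    rwa [lt_div_iff₀ hM₀pos] at h1
  have hτε₀' : τ * M₀ < ε₀ := by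
    have h1 : τ < ε₀/M₀ := lt_of_lt_of_le hττh
      (le_trans (min_le_right _ _) (le_trans (min_le_right _ _)
        (le_trans (min_le_right _ _) (le_trans (min_le_right _ _) (min_le_right _ _)))))
    rwa [lt_div_iff₀ hM₀pos] at h1
  set Kτ : ℝ := (1-θ) * τ ^ (1/(1-θ)) with hKτdef
  have hKτpos : 0 < Kτ := mul_pos h1θ (Real.rpow_pos_of_pos hτpos _)
  have hKττ : Kτ ≤ τ := by
    have h1 : τ ^ (1/(1-θ)) ≤ τ ^ (1:ℝ) := Real.rpow_le_rpow_of_exponent_ge hτpos hτ1 hp1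
    rw [Real.rpow_one] at h1
    nlinarith only [h1, hKτdef, Real.rpow_pos_of_pos hτpos (1/(1-θ)), h1θ, hθ0]
  have hPhi : ∀ u : En n, Phi f xb θ τ u = ((Kτ⁻¹:ℝ):EReal) * (f (xb + τ • u) - ((c:ℝ):EReal)) := by
    intro u
    rw [hKτdef]
    simp only [Phi, hfc]
  set pen : En n → ℝ := fun u => - (inner ℝ s (u - w) : ℝ) + σ * ‖u - w'‖^2 with hpendef
  set ψ : En n → EReal := fun u => Phi f xb θ τ u + ((pen u:ℝ):EReal) with hψdef
  have hpenb : ∀ u : En n, ‖u - w‖ ≤ r → |(inner ℝ s (u - w) : ℝ)| ≤ ‖s‖ * r := by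
    intro u hu
    refine le_trans (abs_real_inner_le_norm _ _) ?_
    exact mul_le_mul_of_nonneg_left hu (norm_nonneg s)
  have hψlow : ∀ u : En n, ‖u - w‖ ≤ r →
      ((H - ε' * ‖u - w‖ - δ₂ + σ*‖u - w'‖^2 : ℝ):EReal) < ψ u := by
    intro u hu
    have h1 := hτb τ hτpos hττb u hu
    simp only [hψdef]
    rw [coe_lt_add]
    have heq : (H - ε' * ‖u - w‖ - δ₂ + σ*‖u - w'‖^2 - pen u : ℝ)
        = (H + (inner ℝ s (u - w) : ℝ) - ε' * ‖u - w‖ - δ₂ : ℝ) := by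
      simp only [hpendef]; ring
    rwa [heq]
  have hm : ∀ u : En n, ‖u - w‖ ≤ r → ((H - ε'*r - δ₂ : ℝ):EReal) ≤ ψ u := by
    intro u hu
    refine le_trans (EReal.coe_le_coe_iff.2 ?_) (le_of_lt (hψlow u hu))
    have h0 : ε' * ‖u - w‖ ≤ ε' * r := mul_le_mul_of_nonneg_left hu (le_of_lt hε'pos)
    linarith only [h0, mul_nonneg (le_of_lt hσpos) (sq_nonneg ‖u - w'‖)]
  have hw'r : ‖w' - w‖ ≤ r := le_of_lt (lt_of_lt_of_le hw'ρ (le_trans hρ'r4 (by linarith)))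
  have hpenw' : pen w' = - (inner ℝ s (w' - w) : ℝ) := by
    simp only [hpendef]
    rw [sub_self, norm_zero]
    ring
  have hψw'lt : ψ w' < ((H + δ₂ + ‖s‖*ρ' : ℝ):EReal) := by
    simp only [hψdef]
    rw [add_lt_coe]
    refine lt_of_lt_of_le hqlt (EReal.coe_le_coe_iff.2 ?_)
    rw [hpenw']
    have h1 : |(inner ℝ s (w' - w) : ℝ)| ≤ ‖s‖ * ρ' :=
      le_trans (abs_real_inner_le_norm _ _)
        (mul_le_mul_of_nonneg_left (le_of_lt hw'ρ) (norm_nonneg s))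
    have h2 := abs_le.1 h1
    linarith [h2.1]
  have hψw'ge : ((H - ε'*r - δ₂:ℝ):EReal) ≤ ψ w' := hm w' hw'r
  have hψw'coe : ψ w' = (((ψ w').toReal:ℝ):EReal) :=
    eq_coe_toReal_of_bounds hψw'ge (le_of_lt hψw'lt)
  set β : ℝ := (ψ w').toReal with hβdef
  have hβub : β ≤ H + δ₂ + ‖s‖*ρ' := by
    have h1 := hψw'lt
    rw [hψw'coe] at h1
    exact le_of_lt (EReal.coe_lt_coe_iff.1 h1)
  have hpencont : Continuous pen := by
    simp only [hpendef]
    apply Continuous.add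
    · exact (Continuous.inner continuous_const (continuous_id.sub continuous_const)).neg
    · exact continuous_const.mul ((continuous_id.sub continuous_const).norm.pow 2)
  have hclosedS : ∀ qq : ℝ, qq ≤ β → IsClosed {u : En n | ‖u - w‖ ≤ r ∧ ψ u ≤ ((qq:ℝ):EReal)} := by
    intro qq hqq
    have hset : {u : En n | ‖u - w‖ ≤ r ∧ ψ u ≤ ((qq:ℝ):EReal)}
        = {u : En n | ‖u - w‖ ≤ r ∧ f (xb + τ • u) ≤ (((c + Kτ*(qq - pen u) : ℝ)):EReal)} := by
      ext u
      simp only [Set.mem_setOf_eq, hψdef]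
      constructor
      · rintro ⟨h1, h2⟩
        refine ⟨h1, ?_⟩
        rw [add_le_coe, hPhi u, inv_mul_le Kτ hKτpos] at h2
        exact h2
      · rintro ⟨h1, h2⟩
        refine ⟨h1, ?_⟩
        rw [add_le_coe, hPhi u, inv_mul_le Kτ hKτpos]
        exact h2
    rw [hset]
    apply closed_sublevel f xb c hfc ε₀ hcl w r τ hτpos (fun u => c + Kτ*(qq - pen u))
    · exact continuous_const.add (continuous_const.mul (continuous_const.sub hpencont))
    · intro u hu
      have h2 := abs_le.1 (hpenb u hu)
      have h4 : -pen u ≤ ‖s‖*r := by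
        simp only [hpendef]
        linarith only [h2.2, mul_nonneg (le_of_lt hσpos) (sq_nonneg ‖u - w'‖)]
      have h1 : qq - pen u ≤ M₀ := by
        linarith only [hqq, hβub, h4, hM₀def, hρ's,
          mul_nonneg (norm_nonneg s) (le_of_lt hrpos)]
      have h5 : Kτ*(qq - pen u) ≤ Kτ * M₀ := mul_le_mul_of_nonneg_left h1 (le_of_lt hKτpos)
      have h6 : Kτ * M₀ ≤ τ * M₀ := mul_le_mul_of_nonneg_right hKττ (le_of_lt hM₀pos)
      linarith
    · intro u hu
      have h1 : ‖(xb + τ • u) - xb‖ = τ * ‖u‖ := by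
        rw [add_sub_cancel_left, norm_smul, Real.norm_eq_abs, abs_of_pos hτpos]
      rw [h1]
      have h2 : ‖u‖ ≤ ‖w‖ + r := by
        have h3 := norm_sub_norm_le u w
        linarith
      have h3 : τ * ‖u‖ ≤ τ * (‖w‖+r+1) := mul_le_mul_of_nonneg_left (by linarith) (le_of_lt hτpos)
      linarith
  obtain ⟨ub, hubr, hubβ, hubmin⟩ :=
    exists_min ψ w r hrpos (H - ε'*r - δ₂) hm w' hw'r β hψw'coe hclosedS
  have hψub_low := hψlow ub hubr
  have hreal1 : H - ε' * ‖ub - w‖ - δ₂ + σ*‖ub - w'‖^2 ≤ β :=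
    EReal.coe_le_coe_iff.1 (le_trans (le_of_lt hψub_low) hubβ)
  have hεub : ε' * ‖ub - w‖ ≤ ε' * r := mul_le_mul_of_nonneg_left hubr (le_of_lt hε'pos)
  have hσub2 : σ * ‖ub - w'‖^2 ≤ 3*(ε'*r) := by
    linarith only [hreal1, hβub, hρ's, hδ₂b, hεub, mul_pos hε'pos hrpos]
  have hubw'4 : ‖ub - w'‖ ≤ r/4 := by
    by_contra hcon
    push_neg at hcon
    have h1 : σ * (r/4)^2 < σ * ‖ub - w'‖^2 := by
      apply mul_lt_mul_of_pos_left _ hσpos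
      nlinarith only [hcon, hrpos, norm_nonneg (ub - w')]
    have h2 : σ * (r/4)^2 = 3*(ε'*r) := by
      rw [hσdef]
      field_simp
      ring
    linarith
  have hubw : ‖ub - w‖ ≤ r/2 := by
    have h1 : ub - w = (ub - w') + (w' - w) := by abel
    have h2 : ‖ub - w‖ ≤ ‖ub - w'‖ + ‖w' - w‖ := by rw [h1]; exact norm_add_le _ _
    have h3 : ‖w' - w‖ ≤ r/4 := le_of_lt (lt_of_lt_of_le hw'ρ hρ'r4)
    linarith
  have hψub_ge : ((H - ε'*r - δ₂:ℝ):EReal) ≤ ψ ub := hm ub hubr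
  have hPhiub_ub : Phi f xb θ τ ub ≤ ((β - pen ub:ℝ):EReal) := by
    have h1 : ψ ub ≤ ((β:ℝ):EReal) := hubβ
    simp only [hψdef] at h1
    rwa [add_le_coe] at h1
  have hPhiub_lb : ((H - ε'*r - δ₂ - pen ub:ℝ):EReal) ≤ Phi f xb θ τ ub := by
    have h1 := hψub_ge
    simp only [hψdef] at h1
    rwa [coe_le_add] at h1
  have hPhiubcoe : Phi f xb θ τ ub = (((Phi f xb θ τ ub).toReal:ℝ):EReal) :=
    eq_coe_toReal_of_bounds hPhiub_lb hPhiub_ub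
  set a : ℝ := (Phi f xb θ τ ub).toReal with hadef
  have hτbub := hτb τ hτpos hττb ub hubr
  have haR : H + (inner ℝ s (ub - w) : ℝ) - ε' * ‖ub - w‖ - δ₂ < a := by
    rw [hPhiubcoe] at hτbub
    exact EReal.coe_lt_coe_iff.1 hτbub
  have hinner_ub := abs_le.1 (hpenb ub hubr)
  have haη : H - η ≤ a := by
    linarith only [haR, hinner_ub.1, hεub, hrη, hδ₂a, hηpos]
  have hapos : 0 < a := by linarith only [haη, hηH, hHpos]
  have haM : a ≤ M₀ - 1 := by
    have h1 : a ≤ β - pen ub := by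
      rw [hPhiubcoe] at hPhiub_ub
      exact EReal.coe_le_coe_iff.1 hPhiub_ub
    have h2 : -pen ub ≤ ‖s‖*r := by
      simp only [hpendef]
      linarith only [hinner_ub.2, mul_nonneg (le_of_lt hσpos) (sq_nonneg ‖ub - w'‖)]
    linarith only [h1, h2, hβub, hM₀def]
  have hmin' : ∀ u : En n, ‖u - ub‖ < r/2 →
      Phi f xb θ τ ub + ((- (inner ℝ s (ub - w) : ℝ) + σ * ‖ub - w'‖^2 : ℝ):EReal) ≤
        Phi f xb θ τ u + ((- (inner ℝ s (u - w) : ℝ) + σ * ‖u - w'‖^2 : ℝ):EReal) := by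
    intro u hu
    have h2 : u - w = (u - ub) + (ub - w) := by abel
    have h3 : ‖u - w‖ ≤ ‖u - ub‖ + ‖ub - w‖ := by rw [h2]; exact norm_add_le _ _
    have h1 : ‖u - w‖ ≤ r := by linarith
    have h4 := hubmin u h1
    simp only [hψdef, hpendef] at h4
    exact h4
  have hs' := regSubgrad_of_min (Phi f xb θ τ) ub w w' s σ (r/2) a hσpos (by linarith)
    hPhiubcoe hmin'
  have hPhifun : (Phi f xb θ τ)
      = fun u : En n => ((Kτ⁻¹:ℝ):EReal) * (f (xb + τ • u) - ((c:ℝ):EReal)) := funext hPhi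
  rw [hPhifun] at hs'
  have hfy : f (xb + τ • ub) = ((c + Kτ*a :ℝ):EReal) := by
    apply le_antisymm
    · exact (inv_mul_le Kτ hKτpos _ c a).1 (by rw [← hPhi ub]; exact le_of_eq hPhiubcoe)
    · exact (le_inv_mul Kτ hKτpos _ c a).1 (by rw [← hPhi ub]; exact le_of_eq hPhiubcoe.symm)
  have hv' := rescale_regSubgrad f xb ub _ τ Kτ c (c + Kτ*a) hτpos hKτpos hs' hfy
  set y : En n := xb + τ • ub with hydef
  have hyball : ‖y - xb‖ ≤ εK := by
    rw [hydef, add_sub_cancel_left, norm_smul, Real.norm_eq_abs, abs_of_pos hτpos]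
    have h3 := norm_sub_norm_le ub w
    have h2 : ‖ub‖ ≤ ‖w‖ + r := by linarith
    have h4 : τ * ‖ub‖ ≤ τ * (‖w‖+r+1) := mul_le_mul_of_nonneg_left (by linarith) (le_of_lt hτpos)
    linarith
  have hyval : f y < ((c:ℝ):EReal) + ((ν:ℝ):EReal) := by
    rw [hfy, ← EReal.coe_add]
    apply EReal.coe_lt_coe_iff.2
    have h1 : Kτ*a ≤ Kτ*M₀ := mul_le_mul_of_nonneg_left (by linarith) (le_of_lt hKτpos)
    have h2 : Kτ*M₀ ≤ τ*M₀ := mul_le_mul_of_nonneg_right hKττ (le_of_lt hM₀pos)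
    linarith
  have hKLy := hKL y hyball hyval
  have hmax : max (f y - ((c:ℝ):EReal)).toReal 0 = Kτ * a := by
    rw [hfy, ← EReal.coe_sub, EReal.toReal_coe,
      max_eq_left (by linarith only [mul_pos hKτpos hapos] : (0:ℝ) ≤ c + Kτ*a - c)]
    ring
  rw [hmax] at hKLy
  have hv'mem : (Kτ/τ) • (s - (2*σ) • (ub - w')) ∈ LimSubgrad f y :=
    regSubgrad_subset_limSubgrad f y hv'
  set v' : En n := (Kτ/τ) • (s - (2*σ) • (ub - w')) with hv'def
  have hdist : EMetric.infEdist 0 (LimSubgrad f y) ≤ ENNReal.ofReal ‖v'‖ := by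
    refine le_trans (EMetric.infEdist_le_edist_of_mem hv'mem) (le_of_eq ?_)
    rw [edist_dist, dist_zero_left]
  have hineq : (μ / (1-θ)) * (Kτ * a) ^ θ ≤ ‖v'‖ :=
    (ENNReal.ofReal_le_ofReal_iff (norm_nonneg _)).1 (le_trans hKLy hdist)
  set s'v : En n := s - (2*σ) • (ub - w') with hs'vdef
  have hv'norm : ‖v'‖ = (Kτ/τ) * ‖s'v‖ := by
    rw [hv'def, norm_smul, Real.norm_eq_abs, abs_of_pos (div_pos hKτpos hτpos)]
  have hppθ : (1/(1-θ)) * θ + 1 = 1/(1-θ) := by field_simp; ring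
  have hτpθ : τ ^ ((1/(1-θ)) * θ) * τ = τ ^ (1/(1-θ)) := by
    calc τ ^ ((1/(1-θ))*θ) * τ = τ ^ ((1/(1-θ))*θ) * τ ^ (1:ℝ) := by rw [Real.rpow_one]
    _ = τ ^ ((1/(1-θ))*θ + 1) := (Real.rpow_add hτpos _ _).symm
    _ = τ ^ (1/(1-θ)) := by rw [hppθ]
  have hKτθ : Kτ ^ θ = ((1-θ):ℝ)^θ * τ ^ ((1/(1-θ))*θ) := by
    rw [hKτdef, Real.mul_rpow (le_of_lt h1θ) (le_of_lt (Real.rpow_pos_of_pos hτpos _)),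
      ← Real.rpow_mul (le_of_lt hτpos)]
  have halg : D * a ^ θ ≤ ‖s'v‖ := by
    have h1 : (μ / (1-θ)) * (Kτ * a) ^ θ = D * a^θ * (Kτ/τ) := by
      rw [Real.mul_rpow (le_of_lt hKτpos) (le_of_lt hapos), hKτθ, hDdef, hKτdef, ← hτpθ]
      field_simp
    rw [h1, hv'norm, mul_comm (Kτ/τ) ‖s'v‖] at hineq
    exact le_of_mul_le_mul_right hineq (div_pos hKτpos hτpos)
  have hs'snorm : ‖s'v‖ ≤ ‖s‖ + 24*ε' := by
    have h1 : ‖s'v‖ ≤ ‖s‖ + ‖(2*σ) • (ub - w')‖ := norm_sub_le _ _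
    have h2 : ‖(2*σ) • (ub - w')‖ = 2*σ*‖ub - w'‖ := by
      rw [norm_smul, Real.norm_eq_abs, abs_of_pos (by positivity)]
    have h3 : 2*σ*‖ub - w'‖ ≤ 2*σ*(r/4) := mul_le_mul_of_nonneg_left hubw'4 (by positivity)
    have h4 : 2*σ*(r/4) = 24*ε' := by
      rw [hσdef]
      field_simp
      ring
    linarith
  have hfin1 : D * (H - η)^θ ≤ D * a^θ := by
    apply mul_le_mul_of_nonneg_left _ (le_of_lt hDpos)
    exact Real.rpow_le_rpow (by linarith) haη hθ0
  have h48 : 24*ε' = e/2 := by rw [hε'def]; ring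
  linarith only [halg, hs'snorm, hfin1, hηb, h48]

end KLAux

/-- if `f` has the KŁ property at `xb` with exponent `θ` and
modulus `μ`, then the scaled subderivative `(1-θ)h` satisfies the corresponding
KŁ inequality at every `w ∈ W`. -/
theorem statement_9 {n : ℕ} (f : En n → EReal) (hbot : ∀ x, f x ≠ ⊥)
    (xb : En n) (c : ℝ) (hfc : f xb = (c : ℝ)) (hloc : LocallyLsc f xb)
    (θ : ℝ) (hθ0 : 0 ≤ θ) (hθ1 : θ < 1)
    (h : En n → EReal) (hh : h = fun w => ThetaSubderiv f xb θ w)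
    (μ : ℝ) (hμ : 0 < μ)
    (hKL : ∃ ε : ℝ, 0 < ε ∧ ∃ ν : ℝ, 0 < ν ∧
      ∀ x : En n, ‖x - xb‖ ≤ ε → f x < (c : ℝ) + (ν : ℝ) →
        ENNReal.ofReal ((μ / (1 - θ)) * (max (f x - (c : ℝ)).toReal 0) ^ θ) ≤
          DistZero (LimSubgrad f x)) :
    ∀ w : En n, (0 : EReal) < h w → h w < ⊤ →
      ENNReal.ofReal ((μ / (1 - θ)) * ((1 - θ) * (h w).toReal) ^ θ) ≤
        DistZero (LimSubgrad (fun u => (((1 - θ : ℝ)) : EReal) * h u) w) := by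
  obtain ⟨ε₀, hε₀, hcl⟩ := hloc
  obtain ⟨εK, hεK, ν, hν, hKLp⟩ := hKL
  intro w hw0 hwt
  simp only [hh] at hw0 hwt ⊢
  have h1θ : 0 < 1 - θ := by linarith
  have hτne : ThetaSubderiv f xb θ w ≠ ⊤ := ne_of_lt hwt
  have hτnb : ThetaSubderiv f xb θ w ≠ ⊥ := by
    intro hb; rw [hb] at hw0; exact absurd hw0 (by simp)
  set H : ℝ := (ThetaSubderiv f xb θ w).toReal with hHdef
  have hwcoe : ThetaSubderiv f xb θ w = ((H:ℝ):EReal) := (EReal.coe_toReal hτne hτnb).symm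
  have hHpos : 0 < H := by
    rw [hwcoe] at hw0
    exact_mod_cast hw0
  show ENNReal.ofReal (μ / (1 - θ) * ((1 - θ) * H) ^ θ) ≤
    EMetric.infEdist 0 (LimSubgrad (fun u => ((1 - θ : ℝ) : EReal) * ThetaSubderiv f xb θ u) w)
  rw [EMetric.infEdist, EMetric.le_infEdist]
  intro v hv
  obtain ⟨wk, vk, hwk, hvk, hgk, hreg⟩ := hv
  replace hgk : Tendsto (fun k => ((1-θ:ℝ):EReal) * ThetaSubderiv f xb θ (wk k)) atTop
      (nhds (((1-θ:ℝ):EReal) * ThetaSubderiv f xb θ w)) := hgk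
  replace hreg : ∀ k, vk k ∈ RegSubgrad
      (fun u => ((1-θ:ℝ):EReal) * ThetaSubderiv f xb θ u) (wk k) := hreg
  rw [edist_dist, dist_zero_left]
  apply ENNReal.ofReal_le_ofReal
  have hgw : ((1-θ:ℝ):EReal) * ThetaSubderiv f xb θ w = (((1-θ)*H:ℝ):EReal) := by
    rw [hwcoe, ← EReal.coe_mul]
  have hIoo : ∀ᶠ k in atTop, ((1-θ:ℝ):EReal) * ThetaSubderiv f xb θ (wk k) ∈
      Set.Ioo (((0:ℝ):ℝ):EReal) ((((1-θ)*H+1:ℝ)):EReal) := by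
    apply hgk.eventually
    apply isOpen_Ioo.eventually_mem
    rw [hgw]
    constructor
    · exact_mod_cast (by positivity : (0:ℝ) < (1-θ)*H)
    · exact_mod_cast (by linarith : (1-θ)*H < (1-θ)*H+1)
  have hrel : ∀ᶠ k in atTop, (μ/(1-θ)) *
      (((((1-θ:ℝ):EReal) * ThetaSubderiv f xb θ (wk k)).toReal))^θ ≤ ‖vk k‖ := by
    filter_upwards [hIoo] with k hk
    have h1 : ((0:ℝ):EReal) < ((1-θ:ℝ):EReal) * ThetaSubderiv f xb θ (wk k) := hk.1
    have h2 : ((1-θ:ℝ):EReal) * ThetaSubderiv f xb θ (wk k) < (((1-θ)*H+1:ℝ):EReal) := hk.2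
    have hT0 : (0:EReal) < ThetaSubderiv f xb θ (wk k) := by
      by_contra hc
      push_neg at hc
      have h3 : ((1-θ:ℝ):EReal) * ThetaSubderiv f xb θ (wk k) ≤ ((1-θ:ℝ):EReal) * 0 :=
        (KLAux.mul_le_mul_left (1-θ) h1θ _ _).2 hc
      rw [mul_zero] at h3
      have h4 : ((0:ℝ):EReal) = (0:EReal) := by simp
      rw [h4] at h1
      exact absurd h1 (not_lt.2 h3)
    have hTt : ThetaSubderiv f xb θ (wk k) < ⊤ := by
      by_contra hc
      push_neg at hc
      have hTeq : ThetaSubderiv f xb θ (wk k) = ⊤ := top_le_iff.1 hc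
      rw [hTeq, EReal.coe_mul_top_of_pos h1θ] at h2
      exact absurd h2 (not_lt.2 le_top)
    have hTnb : ThetaSubderiv f xb θ (wk k) ≠ ⊥ := by
      intro hb; rw [hb] at hT0; exact absurd hT0 (by simp)
    have hcoeT : ThetaSubderiv f xb θ (wk k)
        = (((ThetaSubderiv f xb θ (wk k)).toReal:ℝ):EReal) :=
      (EReal.coe_toReal (ne_of_lt hTt) hTnb).symm
    have hTkpos : 0 < (ThetaSubderiv f xb θ (wk k)).toReal := by
      rw [hcoeT] at hT0
      exact_mod_cast hT0
    have hsk := KLAux.unscale_regSubgrad (fun u => ThetaSubderiv f xb θ u) (wk k) (vk k)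
      (1-θ) h1θ (hreg k)
    have hclaim := KLAux.claim f hbot xb c hfc ε₀ hε₀ hcl θ hθ0 hθ1 μ hμ εK hεK ν hν hKLp
      (wk k) hT0 hTt ((1-θ:ℝ)⁻¹ • vk k) hsk
    have hn : ‖(1-θ:ℝ)⁻¹ • vk k‖ = (1-θ)⁻¹ * ‖vk k‖ := by
      rw [norm_smul, Real.norm_eq_abs, abs_of_pos (by positivity)]
    rw [hn] at hclaim
    -- rewrite toReal of the product
    have htr : (((1-θ:ℝ):EReal) * ThetaSubderiv f xb θ (wk k)).toReal
        = (1-θ) * (ThetaSubderiv f xb θ (wk k)).toReal := by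
      rw [hcoeT, ← EReal.coe_mul, EReal.toReal_coe, EReal.toReal_coe]
    rw [htr]
    set Tk : ℝ := (ThetaSubderiv f xb θ (wk k)).toReal with hTkdef
    have hmulrpow : ((1-θ) * Tk)^θ = ((1-θ):ℝ)^θ * Tk^θ :=
      Real.mul_rpow (le_of_lt h1θ) (le_of_lt hTkpos)
    rw [hmulrpow]
    have hstep := mul_le_mul_of_nonneg_left hclaim (le_of_lt h1θ)
    have e1 : (1-θ)*(μ / (1-θ) * ((1-θ):ℝ)^θ / (1-θ) * Tk^θ)
        = μ/(1-θ) * (((1-θ):ℝ)^θ * Tk^θ) := by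
      field_simp
    have e2 : (1-θ)*((1-θ)⁻¹*‖vk k‖) = ‖vk k‖ := by
      field_simp
    rw [e1, e2] at hstep
    exact hstep
  have htoReal : Tendsto (fun k => (((1-θ:ℝ):EReal) * ThetaSubderiv f xb θ (wk k)).toReal)
      atTop (nhds ((1-θ)*H)) := by
    have h1 : Tendsto EReal.toReal (nhds (((1-θ:ℝ):EReal) * ThetaSubderiv f xb θ w))
        (nhds ((((1-θ:ℝ):EReal) * ThetaSubderiv f xb θ w).toReal)) :=
      EReal.tendsto_toReal (by rw [hgw]; exact EReal.coe_ne_top _)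
        (by rw [hgw]; exact EReal.coe_ne_bot _)
    have h2 := h1.comp hgk
    rw [show (((1-θ:ℝ):EReal) * ThetaSubderiv f xb θ w).toReal = (1-θ)*H by
      rw [hgw, EReal.toReal_coe]] at h2
    exact h2
  have hCk : Tendsto (fun k => (μ/(1-θ)) *
      (((((1-θ:ℝ):EReal) * ThetaSubderiv f xb θ (wk k)).toReal))^θ) atTop
      (nhds ((μ/(1-θ)) * ((1-θ)*H)^θ)) := by
    apply Tendsto.const_mul
    exact (Real.continuousAt_rpow_const _ θ (Or.inr hθ0)).tendsto.comp htoReal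
  exact le_of_tendsto_of_tendsto hCk hvk.norm hrel
end
end
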